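/- arXiv:1703.10846 — 7 statements merged into one kernel-verified Lean document; each statement's English description precedes it below -/
import Mathlib

section
/- Let r, s, n, m be positive integers and let R ∈ T_{r,m}, C ∈ T_{s,m}, S ∈ T_{n,m}. If the set R_{R,C,S} of r×s partial Latin rectangles based on n symbols with row type R, column type C and symbol type S is non-empty, then C ⪯ R*, S ⪯ C* and R ⪯ S*. -/
open Finset

/-- `E` is (the entry set of) an `r × s` partial Latin rectangle based on `n` symbols:
no two distinct triples agree in both their first and second coordinates, in both their
first and third coordinates, or in both their second and third coordinates. -/
def IsPLR {r s n : ℕ} (E : Finset (Fin r × Fin s × Fin n)) : Prop :=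
  ∀ e ∈ E, ∀ e' ∈ E, e ≠ e' →
    ¬(e.1 = e'.1 ∧ e.2.1 = e'.2.1) ∧
    ¬(e.1 = e'.1 ∧ e.2.2 = e'.2.2) ∧
    ¬(e.2.1 = e'.2.1 ∧ e.2.2 = e'.2.2)

/-- The number of entries of `E` in row `i`. -/
def rowType {r s n : ℕ} (E : Finset (Fin r × Fin s × Fin n)) (i : Fin r) : ℕ :=
  (E.filter (fun e => e.1 = i)).card

/-- The number of entries of `E` in column `j`. -/
def colType {r s n : ℕ} (E : Finset (Fin r × Fin s × Fin n)) (j : Fin s) : ℕ :=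
  (E.filter (fun e => e.2.1 = j)).card

/-- The number of occurrences of symbol `k` in `E`. -/
def symType {r s n : ℕ} (E : Finset (Fin r × Fin s × Fin n)) (k : Fin n) : ℕ :=
  (E.filter (fun e => e.2.2 = k)).card

/-- The multiset of components of a tuple. -/
def tupleMultiset {k : ℕ} (T : Fin k → ℕ) : Multiset ℕ := Finset.univ.val.map T

/-- The sum of the `j` largest elements of a multiset of naturals. -/
def descSum (A : Multiset ℕ) (j : ℕ) : ℕ := ((A.sort (· ≤ ·)).reverse.take j).sum

/-- `A` is majorized by `B`: for every `j`, the sum of the `j` largest elements of `A`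
is at most the sum of the `j` largest elements of `B`. -/
def Majorized (A B : Multiset ℕ) : Prop := ∀ j, descSum A j ≤ descSum B j

/-- The conjugate of a tuple `T ∈ T_{k,m}`: its `i`-th component (for `i = 1,…,m`)
is the number of indices `j` with `T j ≥ i`. -/
def conjTuple {k : ℕ} (T : Fin k → ℕ) (m : ℕ) (i : Fin m) : ℕ :=
  (Finset.univ.filter (fun j => (i : ℕ) + 1 ≤ T j)).card

lemma sum_take_mono (l : List ℕ) {k j : ℕ} (h : k ≤ j) :
    (l.take k).sum ≤ (l.take j).sum := by
  conv_rhs => rw [← List.take_append_drop k (l.take j)]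
  rw [List.sum_append, List.take_take, min_eq_left h]
  exact Nat.le_add_right _ _

lemma take_sum_le_take_sum_cons {a : ℕ} {l : List ℕ} (h : ∀ x ∈ l, x ≤ a) (k : ℕ) :
    (l.take k).sum ≤ ((a :: l).take k).sum := by
  cases k with
  | zero => simp
  | succ k =>
    rw [List.take_succ_cons]
    by_cases hk : k < l.length
    · rw [List.sum_take_succ l k hk, List.sum_cons]
      have := h l[k] (List.getElem_mem hk)
      omega
    · rw [List.take_of_length_le (by omega), List.take_of_length_le (by omega), List.sum_cons]
      omega

lemma sum_le_sum_take {l : List ℕ} (hl : l.Pairwise (fun a b => b ≤ a)) :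
    ∀ B : Multiset ℕ, B ≤ ↑l → B.sum ≤ (l.take (Multiset.card B)).sum := by
  induction l with
  | nil =>
    intro B hB
    have : B = 0 := le_antisymm hB (Multiset.zero_le _)
    simp [this]
  | cons a l ih =>
    intro B hB
    rcases List.pairwise_cons.mp hl with ⟨ha, hl'⟩
    rw [← Multiset.cons_coe] at hB
    by_cases hmem : a ∈ B
    · obtain ⟨C, rfl⟩ : ∃ C, B = a ::ₘ C := ⟨B.erase a, (Multiset.cons_erase hmem).symm⟩
      have hC : C ≤ ↑l := by
        have h2 := Multiset.erase_le_erase a hB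
        rwa [Multiset.erase_cons_head, Multiset.erase_cons_head] at h2
      rw [Multiset.card_cons, List.take_succ_cons, Multiset.sum_cons, List.sum_cons]
      exact Nat.add_le_add_left (ih hl' C hC) a
    · have hBl : B ≤ ↑l := by
        refine Multiset.le_iff_count.mpr fun x => ?_
        have h2 := Multiset.le_iff_count.mp hB x
        by_cases hx : x = a
        · simp [hx, Multiset.count_eq_zero_of_notMem hmem]
        · rwa [Multiset.count_cons_of_ne hx] at h2
      exact (ih hl' B hBl).trans (take_sum_le_take_sum_cons ha _)


lemma sum_le_descSum {A B : Multiset ℕ} (hBA : B ≤ A) {j : ℕ} (hj : Multiset.card B ≤ j) :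
    B.sum ≤ descSum A j := by
  set l := (A.sort (· ≤ ·)).reverse with hldef
  have hcoe : (↑l : Multiset ℕ) = A := by
    rw [hldef, Multiset.coe_reverse, Multiset.sort_eq]
  have hpw : l.Pairwise (fun a b => b ≤ a) := by
    rw [hldef, List.pairwise_reverse]
    exact Multiset.pairwise_sort _ _
  calc B.sum ≤ (l.take (Multiset.card B)).sum := sum_le_sum_take hpw B (by rw [hcoe]; exact hBA)
    _ ≤ (l.take j).sum := sum_take_mono l hj

lemma descSum_exists (A : Multiset ℕ) (j : ℕ) :
    ∃ B : Multiset ℕ, B ≤ A ∧ Multiset.card B ≤ j ∧ B.sum = descSum A j := by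
  set l := (A.sort (· ≤ ·)).reverse with hldef
  have hcoe : (↑l : Multiset ℕ) = A := by
    rw [hldef, Multiset.coe_reverse, Multiset.sort_eq]
  refine ⟨↑(l.take j), ?_, ?_, rfl⟩
  · rw [← hcoe]
    exact Multiset.coe_le.mpr (List.take_sublist j l).subperm
  · rw [Multiset.coe_card]
    exact (List.length_take (l := l)).le.trans (min_le_left _ _)

lemma exists_of_le_map {α β : Type*} [DecidableEq α] [DecidableEq β] {f : α → β}
    {s : Multiset α} :
    ∀ {B : Multiset β}, B ≤ s.map f → ∃ t, t ≤ s ∧ t.map f = B := by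
  classical
  intro B
  induction B using Multiset.induction_on generalizing s with
  | empty => intro _; exact ⟨0, Multiset.zero_le _, rfl⟩
  | cons b B ih =>
    intro hB
    have hbmem : b ∈ s.map f := Multiset.mem_of_le hB (Multiset.mem_cons_self _ _)
    obtain ⟨x, hx, rfl⟩ := Multiset.mem_map.mp hbmem
    have hB' : B ≤ (s.erase x).map f := by
      have h1 : B ≤ (s.map f).erase (f x) := by
        have := Multiset.erase_le_erase (f x) hB
        rwa [Multiset.erase_cons_head] at this
      rwa [← Multiset.map_erase_of_mem _ _ hx] at h1
    obtain ⟨t, ht, rfl⟩ := ih hB'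
    refine ⟨x ::ₘ t, ?_, by rw [Multiset.map_cons]⟩
    calc x ::ₘ t ≤ x ::ₘ s.erase x := Multiset.cons_le_cons x ht
      _ = s := Multiset.cons_erase hx

lemma card_filter_lt_fin (m k : ℕ) :
    (Finset.univ.filter (fun t : Fin m => (t : ℕ) < k)).card = min k m := by
  have himg : (Finset.univ.filter (fun t : Fin m => (t : ℕ) < k)).image Fin.val
      = Finset.range (min k m) := by
    ext x
    simp only [mem_image, mem_filter, mem_univ, true_and, mem_range, lt_min_iff]
    constructor
    · rintro ⟨t, ht, rfl⟩; exact ⟨ht, t.isLt⟩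
    · rintro ⟨h1, h2⟩; exact ⟨⟨x, h2⟩, h1, rfl⟩
  have := Finset.card_image_of_injective
    (Finset.univ.filter (fun t : Fin m => (t : ℕ) < k)) Fin.val_injective
  rw [himg, Finset.card_range] at this
  omega

lemma core_majorized {α : Type*} [DecidableEq α] {a b m : ℕ} (E : Finset α)
    (f : α → Fin a) (g : α → Fin b)
    (hinj : ∀ e ∈ E, ∀ e' ∈ E, f e = f e' → g e = g e' → e = e')
    (A : Fin a → ℕ) (B : Fin b → ℕ)
    (hA : ∀ i, A i = (E.filter (fun e => f e = i)).card)
    (hB : ∀ x, B x = (E.filter (fun e => g e = x)).card)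
    (hAm : ∀ i, A i ≤ m) :
    Majorized (tupleMultiset B) (tupleMultiset (conjTuple A m)) := by
  classical
  intro j
  obtain ⟨B0, hB0le, hB0card, hB0sum⟩ := descSum_exists (tupleMultiset B) j
  rw [← hB0sum]
  obtain ⟨V, hVle, rfl⟩ := exists_of_le_map hB0le
  have hVnd : V.Nodup := Multiset.nodup_of_le hVle Finset.univ.nodup
  set J : Finset (Fin b) := ⟨V, hVnd⟩ with hJ
  have hJcard : J.card ≤ j := by
    have : J.card = Multiset.card (Multiset.map B V) := (Multiset.card_map B V).symm
    omega
  have hsum1 : (V.map B).sum = ∑ x ∈ J, B x := rfl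
  -- step A: ∑ x in J, B x = card of entries with g in J
  have hstepA : ∑ x ∈ J, B x = (E.filter (fun e => g e ∈ J)).card := by
    rw [Finset.card_eq_sum_card_fiberwise (f := g) (s := E.filter (fun e => g e ∈ J)) (t := J)
      (fun e he => (Finset.mem_filter.mp (Finset.mem_coe.mp he)).2)]
    refine Finset.sum_congr rfl fun x hx => ?_
    rw [hB x, Finset.filter_filter]
    congr 1
    apply Finset.filter_congr
    intro e _
    constructor
    · rintro h; exact ⟨h ▸ hx, h⟩
    · rintro ⟨_, h⟩; exact h
  -- step B: fiberwise over rows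
  have hstepB : (E.filter (fun e => g e ∈ J)).card
      = ∑ i : Fin a, ((E.filter (fun e => g e ∈ J)).filter (fun e => f e = i)).card :=
    Finset.card_eq_sum_card_fiberwise (fun e _ => Finset.mem_univ _)
  -- step C: each fiber ≤ min (A i) j
  have hstepC : ∀ i : Fin a,
      ((E.filter (fun e => g e ∈ J)).filter (fun e => f e = i)).card ≤ min (A i) j := by
    intro i
    refine le_min ?_ ?_
    · rw [hA i]
      apply Finset.card_le_card
      intro e he
      simp only [Finset.mem_filter] at he ⊢
      exact ⟨he.1.1, he.2⟩
    · refine le_trans (Finset.card_le_card_of_injOn g ?_ ?_) hJcard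
      · intro e he
        simp only [Finset.mem_coe, Finset.mem_filter] at he
        exact he.1.2
      · intro e he e' he' hg
        simp only [Finset.coe_filter, Set.mem_setOf_eq, Finset.mem_filter] at he he'
        exact hinj e he.1.1 e' he'.1.1 (he.2.trans he'.2.symm) hg
  -- step D: ∑ i, min (A i) j ≤ descSum conj j
  have hstepD : ∑ i : Fin a, min (A i) j
      ≤ descSum (tupleMultiset (conjTuple A m)) j := by
    set Tset := Finset.univ.filter (fun t : Fin m => (t : ℕ) < j) with hT
    have hTcard : Tset.card ≤ j := by
      rw [hT, card_filter_lt_fin]; exact min_le_left _ _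
    have hconjsum : ∑ t ∈ Tset, conjTuple A m t = ∑ i : Fin a, min (A i) j := by
      have : ∀ t : Fin m, conjTuple A m t
          = ∑ i : Fin a, if (t : ℕ) + 1 ≤ A i then 1 else 0 := by
        intro t; rw [conjTuple, Finset.card_filter]
      simp_rw [this]
      rw [Finset.sum_comm]
      refine Finset.sum_congr rfl fun i _ => ?_
      rw [← Finset.card_filter]
      have : Tset.filter (fun t : Fin m => (t : ℕ) + 1 ≤ A i)
          = Finset.univ.filter (fun t : Fin m => (t : ℕ) < min j (A i)) := by
        rw [hT, Finset.filter_filter]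
        apply Finset.filter_congr
        intro t _
        simp only [lt_min_iff]
        omega
      rw [this, card_filter_lt_fin]
      have := hAm i
      omega
    have hle : Tset.val.map (conjTuple A m) ≤ tupleMultiset (conjTuple A m) := by
      apply Multiset.map_le_map
      rw [hT, Finset.filter_val]
      exact Multiset.filter_le _ _
    have hcard : Multiset.card (Tset.val.map (conjTuple A m)) ≤ j := by
      rw [Multiset.card_map]; exact hTcard
    have := sum_le_descSum hle hcard
    rwa [show (Tset.val.map (conjTuple A m)).sum = ∑ t ∈ Tset, conjTuple A m t from rfl,
      hconjsum] at this
  calc (V.map B).sum = ∑ x ∈ J, B x := hsum1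
    _ = (E.filter (fun e => g e ∈ J)).card := hstepA
    _ = ∑ i : Fin a, _ := hstepB
    _ ≤ ∑ i : Fin a, min (A i) j := Finset.sum_le_sum fun i _ => hstepC i
    _ ≤ _ := hstepD

theorem stmt0 (r s n m : ℕ) (hr : 0 < r) (hs : 0 < s) (hn : 0 < n) (hm : 0 < m)
    (R : Fin r → ℕ) (C : Fin s → ℕ) (S : Fin n → ℕ)
    (hR : ∑ i, R i = m) (hC : ∑ j, C j = m) (hS : ∑ k, S k = m)
    (hne : ∃ E : Finset (Fin r × Fin s × Fin n),
      IsPLR E ∧ rowType E = R ∧ colType E = C ∧ symType E = S) :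
    Majorized (tupleMultiset C) (tupleMultiset (conjTuple R m)) ∧
    Majorized (tupleMultiset S) (tupleMultiset (conjTuple C m)) ∧
    Majorized (tupleMultiset R) (tupleMultiset (conjTuple S m)) := by

  classical
  obtain ⟨E, hPLR, hRt, hCt, hSt⟩ := hne
  have hRf : ∀ i, R i = (E.filter (fun e => e.1 = i)).card := fun i => by
    rw [← hRt]; rfl
  have hCf : ∀ x, C x = (E.filter (fun e => e.2.1 = x)).card := fun x => by
    rw [← hCt]; rfl
  have hSf : ∀ k, S k = (E.filter (fun e => e.2.2 = k)).card := fun k => by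
    rw [← hSt]; rfl
  have hRm : ∀ i, R i ≤ m := fun i =>
    hR ▸ Finset.single_le_sum (fun i _ => Nat.zero_le (R i)) (Finset.mem_univ i)
  have hCm : ∀ x, C x ≤ m := fun x =>
    hC ▸ Finset.single_le_sum (fun x _ => Nat.zero_le (C x)) (Finset.mem_univ x)
  have hSm : ∀ k, S k ≤ m := fun k =>
    hS ▸ Finset.single_le_sum (fun k _ => Nat.zero_le (S k)) (Finset.mem_univ k)
  refine ⟨?_, ?_, ?_⟩
  · refine core_majorized E (fun e => e.1) (fun e => e.2.1) ?_ R C hRf hCf hRm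
    intro e he e' he' h1 h2
    by_contra hne
    exact (hPLR e he e' he' hne).1 ⟨h1, h2⟩
  · refine core_majorized E (fun e => e.2.1) (fun e => e.2.2) ?_ C S hCf hSf hCm
    intro e he e' he' h1 h2
    by_contra hne
    exact (hPLR e he e' he' hne).2.2 ⟨h1, h2⟩
  · refine core_majorized E (fun e => e.2.2) (fun e => e.1) ?_ S R hSf hRf hSm
    intro e he e' he' h1 h2
    by_contra hne
    exact (hPLR e he e' he' hne).2.1 ⟨h2, h1⟩
end

section
/- Let r ≤ r', s ≤ s', n ≤ n' be positive integers, and let (R,C,S) ∈ T_{r,m}×T_{s,m}×T_{n,m} and (R',C',S') ∈ T_{r',m}×T_{s',m}×T_{n',m} be triples of tuples such that R and R' have the same structure, C and C' have the same structure, and S and S' have the same structure. Then |R_{R,C,S}| = |R_{R',C',S'}|. -/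
open Finset

/-- The multiset of nonzero components of a tuple (its "structure"). -/
def nzMultiset {k : ℕ} (T : Fin k → ℕ) : Multiset ℕ :=
  (Finset.univ.val.map T).filter (· ≠ 0)

lemma stepA {a b : ℕ} (hab : a ≤ b) (f : Fin a → ℕ) (g : Fin b → ℕ)
    (h : nzMultiset f = nzMultiset g) :
    ∃ φ : Fin a → Fin b, Function.Injective φ ∧ (∀ i, g (φ i) = f i) ∧
      ∀ j, g j ≠ 0 → ∃ i, φ i = j := by
  classical
  have hcount : ∀ v : ℕ, v ≠ 0 →
      (univ.filter fun i => f i = v).card = (univ.filter fun j => g j = v).card := by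
    intro v hv
    have hcnt := congrArg (Multiset.count v) h
    rw [nzMultiset, nzMultiset, Multiset.count_filter, Multiset.count_filter,
      if_pos hv, if_pos hv, Multiset.count_map, Multiset.count_map] at hcnt
    simpa [Finset.card, Finset.filter_val, eq_comm] using hcnt
  have hsupp : (univ.filter fun i => f i ≠ 0).card = (univ.filter fun j => g j ≠ 0).card := by
    have hcd := congrArg Multiset.card h
    simp only [nzMultiset, ← Multiset.countP_eq_card_filter, Multiset.countP_map] at hcd
    simpa [Finset.card, Finset.filter_val, ← Multiset.countP_eq_card_filter] using hcd
  -- the equiv on supports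
  set F : {i : Fin a // f i ≠ 0} → ℕ := fun x => f x.val with hF
  set G : {j : Fin b // g j ≠ 0} → ℕ := fun x => g x.val with hG
  have fib : ∀ c : ℕ, {x // F x = c} ≃ {y // G y = c} := by
    intro c
    by_cases hc : c = 0
    · subst hc
      have : IsEmpty {x // F x = 0} := ⟨fun x => x.1.2 x.2⟩
      have : IsEmpty {y // G y = 0} := ⟨fun y => y.1.2 y.2⟩
      exact Equiv.equivOfIsEmpty _ _
    · apply Fintype.equivOfCardEq
      have e1 : {x // F x = c} ≃ {i : Fin a // f i = c} :=
        (Equiv.subtypeSubtypeEquivSubtypeInter (fun i : Fin a => f i ≠ 0)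
          (fun i => f i = c)).trans
          (Equiv.subtypeEquivRight (fun i =>
            ⟨fun hi => hi.2, fun hi => ⟨by rw [hi]; exact hc, hi⟩⟩))
      have e2 : {y // G y = c} ≃ {j : Fin b // g j = c} :=
        (Equiv.subtypeSubtypeEquivSubtypeInter (fun j : Fin b => g j ≠ 0)
          (fun j => g j = c)).trans
          (Equiv.subtypeEquivRight (fun j =>
            ⟨fun hj => hj.2, fun hj => ⟨by rw [hj]; exact hc, hj⟩⟩))
      rw [Fintype.card_congr e1, Fintype.card_congr e2, Fintype.card_subtype,
        Fintype.card_subtype]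
      exact hcount c hc
  obtain ⟨e, he⟩ : ∃ e : {i : Fin a // f i ≠ 0} ≃ {j : Fin b // g j ≠ 0},
      ∀ x, g (e x).val = f x.val :=
    ⟨Equiv.ofFiberEquiv fib, fun x => Equiv.ofFiberEquiv_map fib x⟩
  -- embedding on zero parts
  have hle : Fintype.card {i : Fin a // f i = 0} ≤ Fintype.card {j : Fin b // g j = 0} := by
    rw [Fintype.card_subtype, Fintype.card_subtype]
    have h1 : (univ.filter fun i => f i = 0).card + (univ.filter fun i => f i ≠ 0).card = a := by
      rw [Finset.card_filter_add_card_filter_not]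
      simp
    have h2 : (univ.filter fun j => g j = 0).card + (univ.filter fun j => g j ≠ 0).card = b := by
      rw [Finset.card_filter_add_card_filter_not]
      simp
    omega
  obtain ⟨emb⟩ := Function.Embedding.nonempty_of_card_le hle
  refine ⟨fun i => if h : f i = 0 then (emb ⟨i, h⟩).val else (e ⟨i, h⟩).val, ?_, ?_, ?_⟩
  all_goals
    have hgφ : ∀ i : Fin a,
        g (if h : f i = 0 then (emb ⟨i, h⟩).val else (e ⟨i, h⟩).val) = f i := by
      intro i
      by_cases h : f i = 0
      · rw [dif_pos h, (emb ⟨i, h⟩).2, h]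
      · rw [dif_neg h, he ⟨i, h⟩]
  · intro i i' hφ
    simp only at hφ
    have hff : f i = f i' := by rw [← hgφ i, ← hgφ i', hφ]
    by_cases h : f i = 0 <;> by_cases h' : f i' = 0
    · rw [dif_pos h, dif_pos h'] at hφ
      simpa using congrArg Subtype.val (emb.injective (Subtype.ext hφ))
    · exact absurd (hff ▸ h) h'
    · exact absurd (hff.symm ▸ h') h
    · rw [dif_neg h, dif_neg h'] at hφ
      simpa using congrArg Subtype.val (e.injective (Subtype.ext hφ))
  · exact hgφ
  · intro j hj
    obtain ⟨x, hx⟩ := e.surjective ⟨j, hj⟩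
    refine ⟨x.val, ?_⟩
    simp only [dif_neg x.2]
    exact congrArg Subtype.val (show e ⟨x.val, x.2⟩ = ⟨j, hj⟩ from hx)

lemma card_filter_image {α β : Type*} [DecidableEq α] [DecidableEq β]
    (m : α → β) (hm : Function.Injective m) (E : Finset α)
    (p : α → Prop) (q : β → Prop) [DecidablePred p] [DecidablePred q]
    (hpq : ∀ a, q (m a) ↔ p a) :
    ((E.image m).filter q).card = (E.filter p).card := by
  rw [Finset.filter_image, Finset.card_image_of_injective _ hm]
  congr 1
  ext a
  simp [hpq]

lemma key {r s n r' s' n' : ℕ}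
    (R : Fin r → ℕ) (C : Fin s → ℕ) (S : Fin n → ℕ)
    (R' : Fin r' → ℕ) (C' : Fin s' → ℕ) (S' : Fin n' → ℕ)
    (fR : Fin r → Fin r') (fC : Fin s → Fin s') (fS : Fin n → Fin n')
    (injR : Function.Injective fR) (injC : Function.Injective fC)
    (injS : Function.Injective fS)
    (hgR : ∀ i, R' (fR i) = R i) (hgC : ∀ i, C' (fC i) = C i)
    (hgS : ∀ i, S' (fS i) = S i)
    (hsR : ∀ j, R' j ≠ 0 → ∃ i, fR i = j) (hsC : ∀ j, C' j ≠ 0 → ∃ i, fC i = j)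
    (hsS : ∀ j, S' j ≠ 0 → ∃ i, fS i = j) :
    Nat.card {E : Finset (Fin r × Fin s × Fin n) //
      IsPLR E ∧ rowType E = R ∧ colType E = C ∧ symType E = S} =
    Nat.card {E : Finset (Fin r' × Fin s' × Fin n') //
      IsPLR E ∧ rowType E = R' ∧ colType E = C' ∧ symType E = S'} := by
  classical
  set m3 : Fin r × Fin s × Fin n → Fin r' × Fin s' × Fin n' :=
    fun e => (fR e.1, fC e.2.1, fS e.2.2) with hm3
  have hm3inj : Function.Injective m3 := by
    intro a b hab
    simp only [hm3, Prod.mk.injEq] at hab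
    obtain ⟨h1, h2, h3⟩ := hab
    exact Prod.ext (injR h1) (Prod.ext (injC h2) (injS h3))
  -- row type of image
  have hrow : ∀ (E : Finset (Fin r × Fin s × Fin n)), rowType E = R →
      rowType (E.image m3) = R' := by
    intro E hRow
    funext j
    by_cases hj : ∃ i, fR i = j
    · obtain ⟨i, rfl⟩ := hj
      rw [rowType, card_filter_image m3 hm3inj E (fun a => a.1 = i) _
        (fun a => ⟨fun h => injR h, fun h => by simp [hm3, h]⟩), ← rowType, hRow, hgR]
    · have hz : R' j = 0 := by
        by_contra h
        exact hj (hsR j h)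
      rw [hz, rowType, Finset.filter_image,
        Finset.filter_false_of_mem (fun a _ h => hj ⟨a.1, h⟩)]
      simp
  have hcol : ∀ (E : Finset (Fin r × Fin s × Fin n)), colType E = C →
      colType (E.image m3) = C' := by
    intro E hCol
    funext j
    by_cases hj : ∃ i, fC i = j
    · obtain ⟨i, rfl⟩ := hj
      rw [colType, card_filter_image m3 hm3inj E (fun a => a.2.1 = i) _
        (fun a => ⟨fun h => injC h, fun h => by simp [hm3, h]⟩), ← colType, hCol, hgC]
    · have hz : C' j = 0 := by
        by_contra h
        exact hj (hsC j h)
      rw [hz, colType, Finset.filter_image,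
        Finset.filter_false_of_mem (fun a _ h => hj ⟨a.2.1, h⟩)]
      simp
  have hsym : ∀ (E : Finset (Fin r × Fin s × Fin n)), symType E = S →
      symType (E.image m3) = S' := by
    intro E hSym
    funext j
    by_cases hj : ∃ i, fS i = j
    · obtain ⟨i, rfl⟩ := hj
      rw [symType, card_filter_image m3 hm3inj E (fun a => a.2.2 = i) _
        (fun a => ⟨fun h => injS h, fun h => by simp [hm3, h]⟩), ← symType, hSym, hgS]
    · have hz : S' j = 0 := by
        by_contra h
        exact hj (hsS j h)
      rw [hz, symType, Finset.filter_image,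
        Finset.filter_false_of_mem (fun a _ h => hj ⟨a.2.2, h⟩)]
      simp
  have hplr : ∀ (E : Finset (Fin r × Fin s × Fin n)), IsPLR E → IsPLR (E.image m3) := by
    intro E hE e' he' f' hf' hne
    obtain ⟨a, ha, rfl⟩ := Finset.mem_image.1 he'
    obtain ⟨c, hc, rfl⟩ := Finset.mem_image.1 hf'
    obtain ⟨h1, h2, h3⟩ := hE a ha c hc (fun h => hne (by rw [h]))
    exact ⟨fun h => h1 ⟨injR h.1, injC h.2⟩, fun h => h2 ⟨injR h.1, injS h.2⟩,
      fun h => h3 ⟨injC h.1, injS h.2⟩⟩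
  refine Nat.card_eq_of_bijective
    (fun E => ⟨E.val.image m3, hplr _ E.2.1, hrow _ E.2.2.1, hcol _ E.2.2.2.1,
      hsym _ E.2.2.2.2⟩) ⟨?_, ?_⟩
  · intro E F hEF
    exact Subtype.ext (Finset.image_injective hm3inj (congrArg Subtype.val hEF))
  · rintro ⟨E', hP', hR', hC', hS'⟩
    have hsub : ∀ e' ∈ E', e' ∈ Set.range m3 := by
      intro e' he'
      have hr0 : R' e'.1 ≠ 0 := by
        rw [← hR']
        exact Finset.card_ne_zero_of_mem (Finset.mem_filter.2 ⟨he', rfl⟩)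
      have hc0 : C' e'.2.1 ≠ 0 := by
        rw [← hC']
        exact Finset.card_ne_zero_of_mem (Finset.mem_filter.2 ⟨he', rfl⟩)
      have hs0 : S' e'.2.2 ≠ 0 := by
        rw [← hS']
        exact Finset.card_ne_zero_of_mem (Finset.mem_filter.2 ⟨he', rfl⟩)
      obtain ⟨i, hi⟩ := hsR _ hr0
      obtain ⟨j, hj⟩ := hsC _ hc0
      obtain ⟨k, hk⟩ := hsS _ hs0
      exact ⟨(i, j, k), by simp [hm3, hi, hj, hk]⟩
    set E : Finset (Fin r × Fin s × Fin n) := E'.preimage m3 hm3inj.injOn with hEdef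
    have himg : E.image m3 = E' := by
      rw [hEdef, Finset.image_preimage]
      exact Finset.filter_true_of_mem (fun x hx => hsub x hx)
    have hmemE : ∀ a, a ∈ E ↔ m3 a ∈ E' := by
      intro a
      rw [hEdef]
      exact Finset.mem_preimage
    have hEplr : IsPLR E := by
      intro a ha c hc hne
      obtain ⟨h1, h2, h3⟩ := hP' (m3 a) ((hmemE a).1 ha) (m3 c) ((hmemE c).1 hc)
        (fun h => hne (hm3inj h))
      refine ⟨fun h => h1 ⟨?_, ?_⟩, fun h => h2 ⟨?_, ?_⟩, fun h => h3 ⟨?_, ?_⟩⟩ <;>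
        simp [hm3, h.1, h.2]
    have hErow : rowType E = R := by
      funext i
      have := card_filter_image m3 hm3inj E (fun a => a.1 = i) (fun b => b.1 = fR i)
        (fun a => ⟨fun h => injR h, fun h => by simp [hm3, h]⟩)
      rw [rowType, ← this, himg, ← rowType, hR', hgR]
    have hEcol : colType E = C := by
      funext i
      have := card_filter_image m3 hm3inj E (fun a => a.2.1 = i) (fun b => b.2.1 = fC i)
        (fun a => ⟨fun h => injC h, fun h => by simp [hm3, h]⟩)
      rw [colType, ← this, himg, ← colType, hC', hgC]
    have hEsym : symType E = S := by
      funext i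
      have := card_filter_image m3 hm3inj E (fun a => a.2.2 = i) (fun b => b.2.2 = fS i)
        (fun a => ⟨fun h => injS h, fun h => by simp [hm3, h]⟩)
      rw [symType, ← this, himg, ← symType, hS', hgS]
    exact ⟨⟨E, hEplr, hErow, hEcol, hEsym⟩, Subtype.ext himg⟩

theorem stmt2 (r s n r' s' n' m : ℕ)
    (hr : 0 < r) (hs : 0 < s) (hn : 0 < n)
    (hrr : r ≤ r') (hss : s ≤ s') (hnn : n ≤ n')
    (R : Fin r → ℕ) (C : Fin s → ℕ) (S : Fin n → ℕ)
    (R' : Fin r' → ℕ) (C' : Fin s' → ℕ) (S' : Fin n' → ℕ)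
    (hR : ∑ i, R i = m) (hC : ∑ j, C j = m) (hS : ∑ k, S k = m)
    (hR' : ∑ i, R' i = m) (hC' : ∑ j, C' j = m) (hS' : ∑ k, S' k = m)
    (hRs : nzMultiset R = nzMultiset R')
    (hCs : nzMultiset C = nzMultiset C')
    (hSs : nzMultiset S = nzMultiset S') :
    Nat.card {E : Finset (Fin r × Fin s × Fin n) //
      IsPLR E ∧ rowType E = R ∧ colType E = C ∧ symType E = S} =
    Nat.card {E : Finset (Fin r' × Fin s' × Fin n') //
      IsPLR E ∧ rowType E = R' ∧ colType E = C' ∧ symType E = S'} := by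
    classical
  obtain ⟨fR, injR, hgR, hsR⟩ := stepA hrr R R' hRs
  obtain ⟨fC, injC, hgC, hsC⟩ := stepA hss C C' hCs
  obtain ⟨fS, injS, hgS, hsS⟩ := stepA hnn S S' hSs
  exact key R C S R' C' S' fR fC fS injR injC injS hgR hgC hgS hsR hsC hsS
end

section
/- For all positive integers r, s, n, the number of r×s partial Latin rectangles based on n symbols of size 3 satisfies 6·|R_{r,s,n:3}| = rsn·(r²s²n² − 3r²sn − 3rs²n − 3rsn² + 6rsn + 6rs + 6rn + 6sn + 2r² + 2s² + 2n² − 12r − 12s − 12n + 14). -/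
set_option maxHeartbeats 1600000

open Finset

/-- The number of `r × s` partial Latin rectangles based on `n` symbols of size `m`. -/
noncomputable def numPLR (r s n m : ℕ) : ℕ :=
  Nat.card {E : Finset (Fin r × Fin s × Fin n) // IsPLR E ∧ E.card = m}

namespace PLR3

def ind {m : ℕ} (x y : Fin m) : ℤ := if x = y then 1 else 0

lemma ind_comm {m : ℕ} (x y : Fin m) : ind x y = ind y x := by
  simp [ind, eq_comm]

lemma sum_ind {m : ℕ} (a : Fin m) : ∑ x : Fin m, ind a x = 1 := by
  simp [ind]

lemma sum_ind_mul {m : ℕ} (a b : Fin m) : ∑ x : Fin m, ind a x * ind b x = ind a b := by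
  have h : ∀ x : Fin m, ind a x * ind b x = if a = x then ind b x else 0 := by
    intro x; simp only [ind]; split_ifs <;> simp_all
  rw [Finset.sum_congr rfl fun x _ => h x, Finset.sum_ite_eq]
  simp [ind_comm]

lemma sum_const_int {m : ℕ} (u : ℤ) : ∑ _x : Fin m, u = (m : ℤ) * u := by
  simp [Finset.sum_const, mul_comm]

lemma sum_aux1 {m : ℕ} (a : Fin m) (u v : ℤ) :
    ∑ x : Fin m, (u + v * ind a x) = (m : ℤ) * u + v := by
  rw [Finset.sum_add_distrib, ← Finset.mul_sum, sum_ind a, sum_const_int, mul_one]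

lemma sum_aux {m : ℕ} (a b : Fin m) (u v w z : ℤ) :
    ∑ x : Fin m, (u + v * ind a x + w * ind b x + z * (ind a x * ind b x))
      = (m : ℤ) * u + v + w + z * ind a b := by
  rw [Finset.sum_add_distrib, Finset.sum_add_distrib, Finset.sum_add_distrib,
    ← Finset.mul_sum, ← Finset.mul_sum, ← Finset.mul_sum,
    sum_ind a, sum_ind b, sum_ind_mul a b, sum_const_int, mul_one, mul_one]

def Good {r s n : ℕ} (p q : Fin r × Fin s × Fin n) : Prop :=
  ¬(p.1 = q.1 ∧ p.2.1 = q.2.1) ∧ ¬(p.1 = q.1 ∧ p.2.2 = q.2.2) ∧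
    ¬(p.2.1 = q.2.1 ∧ p.2.2 = q.2.2)

instance {r s n : ℕ} (p q : Fin r × Fin s × Fin n) : Decidable (Good p q) := by
  unfold Good; infer_instance

lemma good_symm {r s n : ℕ} {p q : Fin r × Fin s × Fin n} (h : Good p q) : Good q p :=
  ⟨fun hh => h.1 ⟨hh.1.symm, hh.2.symm⟩, fun hh => h.2.1 ⟨hh.1.symm, hh.2.symm⟩,
    fun hh => h.2.2 ⟨hh.1.symm, hh.2.symm⟩⟩

lemma good_ne {r s n : ℕ} {p q : Fin r × Fin s × Fin n} (h : Good p q) : p ≠ q := by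
  rintro rfl; exact h.1 ⟨rfl, rfl⟩

def g {r s n : ℕ} (p q : Fin r × Fin s × Fin n) : ℤ :=
  1 - ind p.1 q.1 * ind p.2.1 q.2.1 - ind p.1 q.1 * ind p.2.2 q.2.2
    - ind p.2.1 q.2.1 * ind p.2.2 q.2.2
    + 2 * (ind p.1 q.1 * ind p.2.1 q.2.1 * ind p.2.2 q.2.2)

lemma good_ind {r s n : ℕ} (p q : Fin r × Fin s × Fin n) :
    (if Good p q then (1 : ℤ) else 0) = g p q := by
  by_cases h1 : p.1 = q.1 <;> by_cases h2 : p.2.1 = q.2.1 <;> by_cases h3 : p.2.2 = q.2.2 <;>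
    simp [Good, g, ind, h1, h2, h3]

lemma sum_triple {α β γ : Type*} [Fintype α] [Fintype β] [Fintype γ] (f : α × β × γ → ℤ) :
    ∑ t : α × β × γ, f t = ∑ a : α, ∑ b : β, ∑ c : γ, f (a, b, c) := by
  rw [Fintype.sum_prod_type]
  exact Finset.sum_congr rfl fun a _ => Fintype.sum_prod_type _

lemma hsum {r s n : ℕ} (a b : Fin r × Fin s × Fin n) :
    ∑ c : Fin r × Fin s × Fin n, g a c * g b c =
      (r:ℤ) * ((-2) + (n:ℤ) * (s:ℤ) + (ind a.2.1 b.2.1) * (ind a.2.2 b.2.2)) + ((2) + (-1) * (n:ℤ) + (-1) * (s:ℤ) + (ind a.2.1 b.2.1) + (-2) * (ind a.2.1 b.2.1) * (ind a.2.2 b.2.2) + (ind a.2.2 b.2.2)) + ((2) + (-1) * (n:ℤ) + (-1) * (s:ℤ) + (ind a.2.1 b.2.1) + (-2) * (ind a.2.1 b.2.1) * (ind a.2.2 b.2.2) + (ind a.2.2 b.2.2)) + ((2) + (n:ℤ) * (ind a.2.1 b.2.1) + (s:ℤ) * (ind a.2.2 b.2.2) + (-4) * (ind a.2.1 b.2.1)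 + (4) * (ind a.2.1 b.2.1) * (ind a.2.2 b.2.2) + (-4) * (ind a.2.2 b.2.2)) * ind a.1 b.1 := by
  simp only [Fintype.sum_prod_type]
  have key3 : ∀ (c1 : Fin r) (c2 : Fin s),
      ∑ c3 : Fin n, g a (c1, c2, c3) * g b (c1, c2, c3)
        = (n : ℤ) * ((1) + (-1) * (ind a.1 c1) * (ind a.2.1 c2) + (ind a.1 c1) * (ind a.2.1 c2) * (ind b.1 c1) * (ind b.2.1 c2) + (-1) * (ind b.1 c1) * (ind b.2.1 c2)) + ((-1) * (ind a.1 c1) + (2) * (ind a.1 c1) * (ind a.2.1 c2) + (-2) * (ind a.1 c1) * (ind a.2.1 c2) * (ind b.1 c1) * (ind b.2.1 c2) + (ind a.1 c1) * (ind b.1 c1) * (ind b.2.1 c2) + (-1) * (ind a.2.1 c2) + (ind a.2.1 c2) * (ind b.1 c1) * (ind b.2.1 c2)) + ((ind a.1 c1) * (ind a.2.1 c2) * (ind b.1 c1) + (-2) * (ind a.1 c1) * (ind a.2.1 c2) * (ind b.1 c1) * (ind b.2.1 c2) + (ind a.1 c1) * (ind a.2.1 c2) * (ind b.2.1 c2)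 + (-1) * (ind b.1 c1) + (2) * (ind b.1 c1) * (ind b.2.1 c2) + (-1) * (ind b.2.1 c2)) + ((-2) * (ind a.1 c1) * (ind a.2.1 c2) * (ind b.1 c1) + (4) * (ind a.1 c1) * (ind a.2.1 c2) * (ind b.1 c1) * (ind b.2.1 c2) + (-2) * (ind a.1 c1) * (ind a.2.1 c2) * (ind b.2.1 c2) + (ind a.1 c1) * (ind b.1 c1) + (-2) * (ind a.1 c1) * (ind b.1 c1) * (ind b.2.1 c2) + (ind a.1 c1) * (ind b.2.1 c2) + (ind a.2.1 c2) * (ind b.1 c1) + (-2) * (ind a.2.1 c2) * (ind b.1 c1) * (ind b.2.1 c2) + (ind a.2.1 c2) * (ind b.2.1 c2)) * ind a.2.2 b.2.2 := by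
    intro c1 c2
    have e : ∀ c3 : Fin n, g a (c1, c2, c3) * g b (c1, c2, c3)
        = ((1) + (-1) * (ind a.1 c1) * (ind a.2.1 c2) + (ind a.1 c1) * (ind a.2.1 c2) * (ind b.1 c1) * (ind b.2.1 c2) + (-1) * (ind b.1 c1) * (ind b.2.1 c2)) + ((-1) * (ind a.1 c1) + (2) * (ind a.1 c1) * (ind a.2.1 c2) + (-2) * (ind a.1 c1) * (ind a.2.1 c2) * (ind b.1 c1) * (ind b.2.1 c2) + (ind a.1 c1) * (ind b.1 c1) * (ind b.2.1 c2) + (-1) * (ind a.2.1 c2) + (ind a.2.1 c2) * (ind b.1 c1) * (ind b.2.1 c2)) * ind a.2.2 c3 + ((ind a.1 c1) * (ind a.2.1 c2) * (ind b.1 c1) + (-2) * (ind a.1 c1) * (ind a.2.1 c2) * (ind b.1 c1) * (ind b.2.1 c2) + (ind a.1 c1) * (ind a.2.1 c2) * (ind b.2.1 c2) + (-1) * (ind b.1 c1) + (2) * (ind b.1 c1) * (ind b.2.1 c2) + (-1) * (ind b.2.1 c2)) * ind b.2.2 c3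
          + ((-2) * (ind a.1 c1) * (ind a.2.1 c2) * (ind b.1 c1) + (4) * (ind a.1 c1) * (ind a.2.1 c2) * (ind b.1 c1) * (ind b.2.1 c2) + (-2) * (ind a.1 c1) * (ind a.2.1 c2) * (ind b.2.1 c2) + (ind a.1 c1) * (ind b.1 c1) + (-2) * (ind a.1 c1) * (ind b.1 c1) * (ind b.2.1 c2) + (ind a.1 c1) * (ind b.2.1 c2) + (ind a.2.1 c2) * (ind b.1 c1) + (-2) * (ind a.2.1 c2) * (ind b.1 c1) * (ind b.2.1 c2) + (ind a.2.1 c2) * (ind b.2.1 c2)) * (ind a.2.2 c3 * ind b.2.2 c3) := by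
      intro c3
      simp only [g]
      ring
    rw [Finset.sum_congr rfl fun c3 _ => e c3, sum_aux]
  simp only [key3]
  have key2 : ∀ (c1 : Fin r),
      ∑ c2 : Fin s, ((n : ℤ) * ((1) + (-1) * (ind a.1 c1) * (ind a.2.1 c2) + (ind a.1 c1) * (ind a.2.1 c2) * (ind b.1 c1) * (ind b.2.1 c2) + (-1) * (ind b.1 c1) * (ind b.2.1 c2)) + ((-1) * (ind a.1 c1) + (2) * (ind a.1 c1) * (ind a.2.1 c2) + (-2) * (ind a.1 c1) * (ind a.2.1 c2) * (ind b.1 c1) * (ind b.2.1 c2) + (ind a.1 c1) * (ind b.1 c1) * (ind b.2.1 c2) + (-1) * (ind a.2.1 c2) + (ind a.2.1 c2) * (ind b.1 c1) * (ind b.2.1 c2)) + ((ind a.1 c1) * (ind a.2.1 c2) * (ind b.1 c1) + (-2) * (ind a.1 c1) * (ind a.2.1 c2) * (ind b.1 c1) * (ind b.2.1 c2) + (ind a.1 c1) * (ind a.2.1 c2) * (ind b.2.1 c2) + (-1) * (ind b.1 c1) + (2) * (ind b.1 c1) * (ind b.2.1 c2) + (-1) * (ind b.2.1 c2)) + ((-2)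 * (ind a.1 c1) * (ind a.2.1 c2) * (ind b.1 c1) + (4) * (ind a.1 c1) * (ind a.2.1 c2) * (ind b.1 c1) * (ind b.2.1 c2) + (-2) * (ind a.1 c1) * (ind a.2.1 c2) * (ind b.2.1 c2) + (ind a.1 c1) * (ind b.1 c1) + (-2) * (ind a.1 c1) * (ind b.1 c1) * (ind b.2.1 c2) + (ind a.1 c1) * (ind b.2.1 c2) + (ind a.2.1 c2) * (ind b.1 c1) + (-2) * (ind a.2.1 c2) * (ind b.1 c1) * (ind b.2.1 c2) + (ind a.2.1 c2) * (ind b.2.1 c2)) * ind a.2.2 b.2.2)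
        = (s : ℤ) * ((n:ℤ) + (ind a.2.2 b.2.2) * (ind a.1 c1) * (ind b.1 c1) + (-1) * (ind a.1 c1) + (-1) * (ind b.1 c1)) + ((-1) + (-1) * (n:ℤ) * (ind a.1 c1) + (-2) * (ind a.2.2 b.2.2) * (ind a.1 c1) * (ind b.1 c1) + (ind a.2.2 b.2.2) * (ind b.1 c1) + (2) * (ind a.1 c1) + (ind a.1 c1) * (ind b.1 c1)) + ((-1) + (-1) * (n:ℤ) * (ind b.1 c1) + (ind a.2.2 b.2.2) * (ind a.1 c1) + (-2) * (ind a.2.2 b.2.2) * (ind a.1 c1) * (ind b.1 c1) + (ind a.1 c1) * (ind b.1 c1) + (2) * (ind b.1 c1)) + ((n:ℤ) * (ind a.1 c1) * (ind b.1 c1) + (ind a.2.2 b.2.2) + (-2) * (ind a.2.2 b.2.2) * (ind a.1 c1) + (4) * (ind a.2.2 b.2.2) * (ind a.1 c1) * (ind b.1 c1) + (-2) * (ind a.2.2 b.2.2) * (ind b.1 c1) + (ind a.1 c1) + (-4) * (ind a.1 c1) * (ind b.1 c1) + (ind b.1 c1)) * ind a.2.1 b.2.1 := by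
    intro c1
    have e : ∀ c2 : Fin s, ((n : ℤ) * ((1) + (-1) * (ind a.1 c1) * (ind a.2.1 c2) + (ind a.1 c1) * (ind a.2.1 c2) * (ind b.1 c1) * (ind b.2.1 c2) + (-1) * (ind b.1 c1) * (ind b.2.1 c2)) + ((-1) * (ind a.1 c1) + (2) * (ind a.1 c1) * (ind a.2.1 c2) + (-2) * (ind a.1 c1) * (ind a.2.1 c2) * (ind b.1 c1) * (ind b.2.1 c2) + (ind a.1 c1) * (ind b.1 c1) * (ind b.2.1 c2) + (-1) * (ind a.2.1 c2) + (ind a.2.1 c2) * (ind b.1 c1) * (ind b.2.1 c2)) + ((ind a.1 c1) * (ind a.2.1 c2) * (ind b.1 c1) + (-2) * (ind a.1 c1) * (ind a.2.1 c2) * (ind b.1 c1) * (ind b.2.1 c2) + (ind a.1 c1) * (ind a.2.1 c2) * (ind b.2.1 c2) + (-1) * (ind b.1 c1) + (2) * (ind b.1 c1) * (ind b.2.1 c2) + (-1) * (ind b.2.1 c2)) + ((-2) * (ind a.1 c1) * (ind a.2.1 c2) * (ind b.1 c1) + (4) * (ind a.1 c1) * (ind a.2.1 c2) * (ind b.1 c1)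 * (ind b.2.1 c2) + (-2) * (ind a.1 c1) * (ind a.2.1 c2) * (ind b.2.1 c2) + (ind a.1 c1) * (ind b.1 c1) + (-2) * (ind a.1 c1) * (ind b.1 c1) * (ind b.2.1 c2) + (ind a.1 c1) * (ind b.2.1 c2) + (ind a.2.1 c2) * (ind b.1 c1) + (-2) * (ind a.2.1 c2) * (ind b.1 c1) * (ind b.2.1 c2) + (ind a.2.1 c2) * (ind b.2.1 c2)) * ind a.2.2 b.2.2)
        = ((n:ℤ) + (ind a.2.2 b.2.2) * (ind a.1 c1) * (ind b.1 c1) + (-1) * (ind a.1 c1) + (-1) * (ind b.1 c1)) + ((-1) + (-1) * (n:ℤ) * (ind a.1 c1) + (-2) * (ind a.2.2 b.2.2) * (ind a.1 c1) * (ind b.1 c1) + (ind a.2.2 b.2.2) * (ind b.1 c1) + (2) * (ind a.1 c1) + (ind a.1 c1) * (ind b.1 c1)) * ind a.2.1 c2 + ((-1) + (-1) * (n:ℤ) * (ind b.1 c1) + (ind a.2.2 b.2.2) * (ind a.1 c1) + (-2) * (ind a.2.2 b.2.2) * (ind a.1 c1) * (ind b.1 c1) + (ind a.1 c1) * (ind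 b.1 c1) + (2) * (ind b.1 c1)) * ind b.2.1 c2
          + ((n:ℤ) * (ind a.1 c1) * (ind b.1 c1) + (ind a.2.2 b.2.2) + (-2) * (ind a.2.2 b.2.2) * (ind a.1 c1) + (4) * (ind a.2.2 b.2.2) * (ind a.1 c1) * (ind b.1 c1) + (-2) * (ind a.2.2 b.2.2) * (ind b.1 c1) + (ind a.1 c1) + (-4) * (ind a.1 c1) * (ind b.1 c1) + (ind b.1 c1)) * (ind a.2.1 c2 * ind b.2.1 c2) := by
      intro c2; ring
    rw [Finset.sum_congr rfl fun c2 _ => e c2, sum_aux]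
  simp only [key2]
  have key1 :
      ∑ c1 : Fin r, ((s : ℤ) * ((n:ℤ) + (ind a.2.2 b.2.2) * (ind a.1 c1) * (ind b.1 c1) + (-1) * (ind a.1 c1) + (-1) * (ind b.1 c1)) + ((-1) + (-1) * (n:ℤ) * (ind a.1 c1) + (-2) * (ind a.2.2 b.2.2) * (ind a.1 c1) * (ind b.1 c1) + (ind a.2.2 b.2.2) * (ind b.1 c1) + (2) * (ind a.1 c1) + (ind a.1 c1) * (ind b.1 c1)) + ((-1) + (-1) * (n:ℤ) * (ind b.1 c1) + (ind a.2.2 b.2.2) * (ind a.1 c1) + (-2) * (ind a.2.2 b.2.2) * (ind a.1 c1) * (ind b.1 c1) + (ind a.1 c1) * (ind b.1 c1) + (2) * (ind b.1 c1)) + ((n:ℤ) * (ind a.1 c1) * (ind b.1 c1) + (ind a.2.2 b.2.2) + (-2) * (ind a.2.2 b.2.2) * (ind a.1 c1) + (4) * (ind a.2.2 b.2.2) * (ind a.1 c1) * (ind b.1 c1) + (-2) * (ind a.2.2 b.2.2) * (ind b.1 c1) + (ind a.1 c1) + (-4) * (ind a.1 c1) * (ind b.1 c1) + (ind b.1 c1))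 * ind a.2.1 b.2.1)
        = (r : ℤ) * ((-2) + (n:ℤ) * (s:ℤ) + (ind a.2.1 b.2.1) * (ind a.2.2 b.2.2)) + ((2) + (-1) * (n:ℤ) + (-1) * (s:ℤ) + (ind a.2.1 b.2.1) + (-2) * (ind a.2.1 b.2.1) * (ind a.2.2 b.2.2) + (ind a.2.2 b.2.2)) + ((2) + (-1) * (n:ℤ) + (-1) * (s:ℤ) + (ind a.2.1 b.2.1) + (-2) * (ind a.2.1 b.2.1) * (ind a.2.2 b.2.2) + (ind a.2.2 b.2.2)) + ((2) + (n:ℤ) * (ind a.2.1 b.2.1) + (s:ℤ) * (ind a.2.2 b.2.2) + (-4) * (ind a.2.1 b.2.1) + (4) * (ind a.2.1 b.2.1) * (ind a.2.2 b.2.2) + (-4) * (ind a.2.2 b.2.2)) * ind a.1 b.1 := by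
    have e : ∀ c1 : Fin r, ((s : ℤ) * ((n:ℤ) + (ind a.2.2 b.2.2) * (ind a.1 c1) * (ind b.1 c1) + (-1) * (ind a.1 c1) + (-1) * (ind b.1 c1)) + ((-1) + (-1) * (n:ℤ) * (ind a.1 c1) + (-2) * (ind a.2.2 b.2.2) * (ind a.1 c1) * (ind b.1 c1) + (ind a.2.2 b.2.2) * (ind b.1 c1) + (2) * (ind a.1 c1) + (ind a.1 c1) * (ind b.1 c1)) + ((-1) + (-1) * (n:ℤ) * (ind b.1 c1) + (ind a.2.2 b.2.2) * (ind a.1 c1) + (-2) * (ind a.2.2 b.2.2) * (ind a.1 c1) * (ind b.1 c1) + (ind a.1 c1) * (ind b.1 c1) + (2) * (ind b.1 c1)) + ((n:ℤ) * (ind a.1 c1) * (ind b.1 c1) + (ind a.2.2 b.2.2) + (-2) * (ind a.2.2 b.2.2) * (ind a.1 c1) + (4) * (ind a.2.2 b.2.2) * (ind a.1 c1) * (ind b.1 c1) + (-2) * (ind a.2.2 b.2.2) * (ind b.1 c1) + (ind a.1 c1) + (-4) * (ind a.1 c1) * (ind b.1 c1) + (ind b.1 c1)) * ind a.2.1 b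.2.1)
        = ((-2) + (n:ℤ) * (s:ℤ) + (ind a.2.1 b.2.1) * (ind a.2.2 b.2.2)) + ((2) + (-1) * (n:ℤ) + (-1) * (s:ℤ) + (ind a.2.1 b.2.1) + (-2) * (ind a.2.1 b.2.1) * (ind a.2.2 b.2.2) + (ind a.2.2 b.2.2)) * ind a.1 c1 + ((2) + (-1) * (n:ℤ) + (-1) * (s:ℤ) + (ind a.2.1 b.2.1) + (-2) * (ind a.2.1 b.2.1) * (ind a.2.2 b.2.2) + (ind a.2.2 b.2.2)) * ind b.1 c1
          + ((2) + (n:ℤ) * (ind a.2.1 b.2.1) + (s:ℤ) * (ind a.2.2 b.2.2) + (-4) * (ind a.2.1 b.2.1) + (4) * (ind a.2.1 b.2.1) * (ind a.2.2 b.2.2) + (-4) * (ind a.2.2 b.2.2)) * (ind a.1 c1 * ind b.1 c1) := by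
      intro c1; ring
    rw [Finset.sum_congr rfl fun c1 _ => e c1, sum_aux]
  rw [key1]

lemma inner_b {r s n : ℕ} (a : Fin r × Fin s × Fin n) :
    ∑ b : Fin r × Fin s × Fin n,
      g a b * ((r:ℤ) * ((-2) + (n:ℤ) * (s:ℤ) + (ind a.2.1 b.2.1) * (ind a.2.2 b.2.2)) + ((2) + (-1) * (n:ℤ) + (-1) * (s:ℤ) + (ind a.2.1 b.2.1) + (-2) * (ind a.2.1 b.2.1) * (ind a.2.2 b.2.2) + (ind a.2.2 b.2.2)) + ((2) + (-1) * (n:ℤ) + (-1) * (s:ℤ) + (ind a.2.1 b.2.1) + (-2) * (ind a.2.1 b.2.1) * (ind a.2.2 b.2.2) + (ind a.2.2 b.2.2)) + ((2) + (n:ℤ) * (ind a.2.1 b.2.1) + (s:ℤ) * (ind a.2.2 b.2.2) + (-4) * (ind a.2.1 b.2.1) + (4) * (ind a.2.1 b.2.1) * (ind a.2.2 b.2.2) + (-4) * (ind a.2.2 b.2.2)) * ind a.1 b.1) = ((14) + (-12) * (n:ℤ) + (6) * (n:ℤ) * (r:ℤ) + (6) * (n:ℤ) * (r:ℤ) * (s:ℤ)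 + (-3) * (n:ℤ) * (r:ℤ) * (s:ℤ) * (s:ℤ) + (-3) * (n:ℤ) * (r:ℤ) * (r:ℤ) * (s:ℤ) + (6) * (n:ℤ) * (s:ℤ) + (2) * (n:ℤ) * (n:ℤ) + (-3) * (n:ℤ) * (n:ℤ) * (r:ℤ) * (s:ℤ) + (n:ℤ) * (n:ℤ) * (r:ℤ) * (r:ℤ) * (s:ℤ) * (s:ℤ) + (-12) * (r:ℤ) + (6) * (r:ℤ) * (s:ℤ) + (2) * (r:ℤ) * (r:ℤ) + (-12) * (s:ℤ) + (2) * (s:ℤ) * (s:ℤ)) := by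
  simp only [Fintype.sum_prod_type]
  have keyb3 : ∀ (b1 : Fin r) (b2 : Fin s),
      ∑ b3 : Fin n, g a (b1, b2, b3) * ((r:ℤ) * ((-2) + (n:ℤ) * (s:ℤ) + (ind a.2.1 b2) * (ind a.2.2 b3)) + ((2) + (-1) * (n:ℤ) + (-1) * (s:ℤ) + (ind a.2.1 b2) + (-2) * (ind a.2.1 b2) * (ind a.2.2 b3) + (ind a.2.2 b3)) + ((2) + (-1) * (n:ℤ) + (-1) * (s:ℤ) + (ind a.2.1 b2) + (-2) * (ind a.2.1 b2) * (ind a.2.2 b3) + (ind a.2.2 b3)) + ((2) + (n:ℤ) * (ind a.2.1 b2) + (s:ℤ) * (ind a.2.2 b3) + (-4) * (ind a.2.1 b2) + (4) * (ind a.2.1 b2) * (ind a.2.2 b3) + (-4) * (ind a.2.2 b3)) * ind a.1 b1) = (n : ℤ) * ((4) + (-2) * (n:ℤ) + (n:ℤ) * (r:ℤ) * (s:ℤ) + (-1) * (n:ℤ) * (r:ℤ) * (s:ℤ) * (ind a.1 b1) * (ind a.2.1 b2) + (2) * (n:ℤ) * (ind a.1 b1) * (ind a.2.1 b2) + (-2)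 * (r:ℤ) + (2) * (r:ℤ) * (ind a.1 b1) * (ind a.2.1 b2) + (-2) * (s:ℤ) + (2) * (s:ℤ) * (ind a.1 b1) * (ind a.2.1 b2) + (2) * (ind a.1 b1) + (-8) * (ind a.1 b1) * (ind a.2.1 b2) + (2) * (ind a.2.1 b2)) + ((2) + (-1) * (n:ℤ) * (r:ℤ) * (s:ℤ) * (ind a.1 b1) + (2) * (n:ℤ) * (r:ℤ) * (s:ℤ) * (ind a.1 b1) * (ind a.2.1 b2) + (-1) * (n:ℤ) * (r:ℤ) * (s:ℤ) * (ind a.2.1 b2) + (2) * (n:ℤ) * (ind a.1 b1) + (-4) * (n:ℤ) * (ind a.1 b1) * (ind a.2.1 b2) + (2) * (n:ℤ) * (ind a.2.1 b2) + (2) * (r:ℤ) * (ind a.1 b1) + (-4) * (r:ℤ) * (ind a.1 b1) * (ind a.2.1 b2) + (2) * (r:ℤ) * (ind a.2.1 b2) + (2) * (s:ℤ) * (ind a.1 b1) + (-4) * (s:ℤ) * (ind a.1 b1) * (ind a.2.1 b2) + (2) * (s:ℤ) * (ind a.2.1 b2) + (-8) * (ind a.1 b1) + (14) * (ind a.1 b1)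 * (ind a.2.1 b2) + (-8) * (ind a.2.1 b2)) := by
    intro b1 b2
    have e : ∀ b3 : Fin n, g a (b1, b2, b3) * ((r:ℤ) * ((-2) + (n:ℤ) * (s:ℤ) + (ind a.2.1 b2) * (ind a.2.2 b3)) + ((2) + (-1) * (n:ℤ) + (-1) * (s:ℤ) + (ind a.2.1 b2) + (-2) * (ind a.2.1 b2) * (ind a.2.2 b3) + (ind a.2.2 b3)) + ((2) + (-1) * (n:ℤ) + (-1) * (s:ℤ) + (ind a.2.1 b2) + (-2) * (ind a.2.1 b2) * (ind a.2.2 b3) + (ind a.2.2 b3)) + ((2) + (n:ℤ) * (ind a.2.1 b2) + (s:ℤ) * (ind a.2.2 b3) + (-4) * (ind a.2.1 b2) + (4) * (ind a.2.1 b2) * (ind a.2.2 b3) + (-4) * (ind a.2.2 b3)) * ind a.1 b1) = ((4) + (-2) * (n:ℤ) + (n:ℤ) * (r:ℤ) * (s:ℤ) + (-1) * (n:ℤ) * (r:ℤ) * (s:ℤ) * (ind a.1 b1) * (ind a.2.1 b2) + (2) * (n:ℤ) * (ind a.1 b1) * (ind a.2.1 b2) + (-2) * (r:ℤ) + (2)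 * (r:ℤ) * (ind a.1 b1) * (ind a.2.1 b2) + (-2) * (s:ℤ) + (2) * (s:ℤ) * (ind a.1 b1) * (ind a.2.1 b2) + (2) * (ind a.1 b1) + (-8) * (ind a.1 b1) * (ind a.2.1 b2) + (2) * (ind a.2.1 b2)) + ((2) + (-1) * (n:ℤ) * (r:ℤ) * (s:ℤ) * (ind a.1 b1) + (2) * (n:ℤ) * (r:ℤ) * (s:ℤ) * (ind a.1 b1) * (ind a.2.1 b2) + (-1) * (n:ℤ) * (r:ℤ) * (s:ℤ) * (ind a.2.1 b2) + (2) * (n:ℤ) * (ind a.1 b1) + (-4) * (n:ℤ) * (ind a.1 b1) * (ind a.2.1 b2) + (2) * (n:ℤ) * (ind a.2.1 b2) + (2) * (r:ℤ) * (ind a.1 b1) + (-4) * (r:ℤ) * (ind a.1 b1) * (ind a.2.1 b2) + (2) * (r:ℤ) * (ind a.2.1 b2) + (2) * (s:ℤ) * (ind a.1 b1) + (-4) * (s:ℤ) * (ind a.1 b1) * (ind a.2.1 b2) + (2) * (s:ℤ) * (ind a.2.1 b2) + (-8) * (ind a.1 b1) + (14) * (ind a.1 b1) * (ind a.2.1 b2)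 + (-8) * (ind a.2.1 b2)) * ind a.2.2 b3 := by
      intro b3
      by_cases h1 : a.1 = b1 <;> by_cases h2 : a.2.1 = b2 <;> by_cases h3 : a.2.2 = b3 <;>
        simp [g, ind, h1, h2, h3] <;> ring
    rw [Finset.sum_congr rfl fun b3 _ => e b3, sum_aux1]
  simp only [keyb3]
  have keyb2 : ∀ (b1 : Fin r),
      ∑ b2 : Fin s, ((n : ℤ) * ((4) + (-2) * (n:ℤ) + (n:ℤ) * (r:ℤ) * (s:ℤ) + (-1) * (n:ℤ) * (r:ℤ) * (s:ℤ) * (ind a.1 b1) * (ind a.2.1 b2) + (2) * (n:ℤ) * (ind a.1 b1) * (ind a.2.1 b2) + (-2) * (r:ℤ) + (2) * (r:ℤ) * (ind a.1 b1) * (ind a.2.1 b2) + (-2) * (s:ℤ) + (2) * (s:ℤ) * (ind a.1 b1) * (ind a.2.1 b2) + (2) * (ind a.1 b1) + (-8) * (ind a.1 b1) * (ind a.2.1 b2) + (2) * (ind a.2.1 b2)) + ((2) + (-1) * (n:ℤ) * (r:ℤ) * (s:ℤ) * (ind a.1 b1) + (2) * (n:ℤ) * (r:ℤ) * (s:ℤ)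 * (ind a.1 b1) * (ind a.2.1 b2) + (-1) * (n:ℤ) * (r:ℤ) * (s:ℤ) * (ind a.2.1 b2) + (2) * (n:ℤ) * (ind a.1 b1) + (-4) * (n:ℤ) * (ind a.1 b1) * (ind a.2.1 b2) + (2) * (n:ℤ) * (ind a.2.1 b2) + (2) * (r:ℤ) * (ind a.1 b1) + (-4) * (r:ℤ) * (ind a.1 b1) * (ind a.2.1 b2) + (2) * (r:ℤ) * (ind a.2.1 b2) + (2) * (s:ℤ) * (ind a.1 b1) + (-4) * (s:ℤ) * (ind a.1 b1) * (ind a.2.1 b2) + (2) * (s:ℤ) * (ind a.2.1 b2) + (-8) * (ind a.1 b1) + (14) * (ind a.1 b1) * (ind a.2.1 b2) + (-8) * (ind a.2.1 b2))) = (s : ℤ) * ((2) + (4) * (n:ℤ) + (-2) * (n:ℤ) * (r:ℤ) + (-1) * (n:ℤ) * (r:ℤ) * (s:ℤ) * (ind a.1 b1) + (-2) * (n:ℤ) * (s:ℤ) + (4) * (n:ℤ) * (ind a.1 b1) + (-2) * (n:ℤ) * (n:ℤ) + (n:ℤ) * (n:ℤ) * (r:ℤ) * (s:ℤ) + (2)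 * (r:ℤ) * (ind a.1 b1) + (2) * (s:ℤ) * (ind a.1 b1) + (-8) * (ind a.1 b1)) + ((-8) + (4) * (n:ℤ) + (-1) * (n:ℤ) * (r:ℤ) * (s:ℤ) + (2) * (n:ℤ) * (r:ℤ) * (s:ℤ) * (ind a.1 b1) + (2) * (n:ℤ) * (r:ℤ) * (ind a.1 b1) + (2) * (n:ℤ) * (s:ℤ) * (ind a.1 b1) + (-12) * (n:ℤ) * (ind a.1 b1) + (-1) * (n:ℤ) * (n:ℤ) * (r:ℤ) * (s:ℤ) * (ind a.1 b1) + (2) * (n:ℤ) * (n:ℤ) * (ind a.1 b1) + (2) * (r:ℤ) + (-4) * (r:ℤ) * (ind a.1 b1) + (2) * (s:ℤ) + (-4) * (s:ℤ) * (ind a.1 b1) + (14) * (ind a.1 b1)) := by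
    intro b1
    have e : ∀ b2 : Fin s, ((n : ℤ) * ((4) + (-2) * (n:ℤ) + (n:ℤ) * (r:ℤ) * (s:ℤ) + (-1) * (n:ℤ) * (r:ℤ) * (s:ℤ) * (ind a.1 b1) * (ind a.2.1 b2) + (2) * (n:ℤ) * (ind a.1 b1) * (ind a.2.1 b2) + (-2) * (r:ℤ) + (2) * (r:ℤ) * (ind a.1 b1) * (ind a.2.1 b2) + (-2) * (s:ℤ) + (2) * (s:ℤ) * (ind a.1 b1) * (ind a.2.1 b2) + (2) * (ind a.1 b1) + (-8) * (ind a.1 b1) * (ind a.2.1 b2) + (2) * (ind a.2.1 b2)) + ((2) + (-1) * (n:ℤ) * (r:ℤ) * (s:ℤ) * (ind a.1 b1) + (2) * (n:ℤ) * (r:ℤ) * (s:ℤ) * (ind a.1 b1) * (ind a.2.1 b2) + (-1) * (n:ℤ) * (r:ℤ) * (s:ℤ) * (ind a.2.1 b2) + (2) * (n:ℤ) * (ind a.1 b1) + (-4) * (n:ℤ) * (ind a.1 b1) * (ind a.2.1 b2) + (2) * (n:ℤ) * (ind a.2.1 b2) + (2) * (r:ℤ) * (ind a.1 b1) + (-4)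 * (r:ℤ) * (ind a.1 b1) * (ind a.2.1 b2) + (2) * (r:ℤ) * (ind a.2.1 b2) + (2) * (s:ℤ) * (ind a.1 b1) + (-4) * (s:ℤ) * (ind a.1 b1) * (ind a.2.1 b2) + (2) * (s:ℤ) * (ind a.2.1 b2) + (-8) * (ind a.1 b1) + (14) * (ind a.1 b1) * (ind a.2.1 b2) + (-8) * (ind a.2.1 b2))) = ((2) + (4) * (n:ℤ) + (-2) * (n:ℤ) * (r:ℤ) + (-1) * (n:ℤ) * (r:ℤ) * (s:ℤ) * (ind a.1 b1) + (-2) * (n:ℤ) * (s:ℤ) + (4) * (n:ℤ) * (ind a.1 b1) + (-2) * (n:ℤ) * (n:ℤ) + (n:ℤ) * (n:ℤ) * (r:ℤ) * (s:ℤ) + (2) * (r:ℤ) * (ind a.1 b1) + (2) * (s:ℤ) * (ind a.1 b1) + (-8) * (ind a.1 b1)) + ((-8) + (4) * (n:ℤ) + (-1) * (n:ℤ) * (r:ℤ) * (s:ℤ) + (2) * (n:ℤ) * (r:ℤ) * (s:ℤ) * (ind a.1 b1) + (2) * (n:ℤ) * (r:ℤ) * (ind a.1 b1) + (2) * (n:ℤ)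 * (s:ℤ) * (ind a.1 b1) + (-12) * (n:ℤ) * (ind a.1 b1) + (-1) * (n:ℤ) * (n:ℤ) * (r:ℤ) * (s:ℤ) * (ind a.1 b1) + (2) * (n:ℤ) * (n:ℤ) * (ind a.1 b1) + (2) * (r:ℤ) + (-4) * (r:ℤ) * (ind a.1 b1) + (2) * (s:ℤ) + (-4) * (s:ℤ) * (ind a.1 b1) + (14) * (ind a.1 b1)) * ind a.2.1 b2 := by
      intro b2; ring
    rw [Finset.sum_congr rfl fun b2 _ => e b2, sum_aux1]
  simp only [keyb2]
  have keyb1 :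
      ∑ b1 : Fin r, ((s : ℤ) * ((2) + (4) * (n:ℤ) + (-2) * (n:ℤ) * (r:ℤ) + (-1) * (n:ℤ) * (r:ℤ) * (s:ℤ) * (ind a.1 b1) + (-2) * (n:ℤ) * (s:ℤ) + (4) * (n:ℤ) * (ind a.1 b1) + (-2) * (n:ℤ) * (n:ℤ) + (n:ℤ) * (n:ℤ) * (r:ℤ) * (s:ℤ) + (2) * (r:ℤ) * (ind a.1 b1) + (2) * (s:ℤ) * (ind a.1 b1) + (-8) * (ind a.1 b1)) + ((-8) + (4) * (n:ℤ) + (-1) * (n:ℤ) * (r:ℤ) * (s:ℤ) + (2) * (n:ℤ) * (r:ℤ) * (s:ℤ) * (ind a.1 b1) + (2) * (n:ℤ) * (r:ℤ) * (ind a.1 b1) + (2) * (n:ℤ) * (s:ℤ) * (ind a.1 b1) + (-12) * (n:ℤ) * (ind a.1 b1) + (-1) * (n:ℤ) * (n:ℤ) * (r:ℤ) * (s:ℤ) * (ind a.1 b1) + (2) * (n:ℤ) * (n:ℤ) * (ind a.1 b1) + (2) * (r:ℤ) + (-4) * (r:ℤ) * (ind a.1 b1) + (2) * (s:ℤ) +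 (-4) * (s:ℤ) * (ind a.1 b1) + (14) * (ind a.1 b1))) = (r : ℤ) * ((-8) + (4) * (n:ℤ) + (-3) * (n:ℤ) * (r:ℤ) * (s:ℤ) + (4) * (n:ℤ) * (s:ℤ) + (-2) * (n:ℤ) * (s:ℤ) * (s:ℤ) + (n:ℤ) * (n:ℤ) * (r:ℤ) * (s:ℤ) * (s:ℤ) + (-2) * (n:ℤ) * (n:ℤ) * (s:ℤ) + (2) * (r:ℤ) + (4) * (s:ℤ)) + ((14) + (-12) * (n:ℤ) + (2) * (n:ℤ) * (r:ℤ) + (2) * (n:ℤ) * (r:ℤ) * (s:ℤ) + (-1) * (n:ℤ) * (r:ℤ) * (s:ℤ) * (s:ℤ) + (6) * (n:ℤ) * (s:ℤ) + (2) * (n:ℤ) * (n:ℤ) + (-1) * (n:ℤ) * (n:ℤ) * (r:ℤ) * (s:ℤ) + (-4) * (r:ℤ) + (2) * (r:ℤ) * (s:ℤ) + (-12) * (s:ℤ) + (2) * (s:ℤ) * (s:ℤ)) := by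
    have e : ∀ b1 : Fin r, ((s : ℤ) * ((2) + (4) * (n:ℤ) + (-2) * (n:ℤ) * (r:ℤ) + (-1) * (n:ℤ) * (r:ℤ) * (s:ℤ) * (ind a.1 b1) + (-2) * (n:ℤ) * (s:ℤ) + (4) * (n:ℤ) * (ind a.1 b1) + (-2) * (n:ℤ) * (n:ℤ) + (n:ℤ) * (n:ℤ) * (r:ℤ) * (s:ℤ) + (2) * (r:ℤ) * (ind a.1 b1) + (2) * (s:ℤ) * (ind a.1 b1) + (-8) * (ind a.1 b1)) + ((-8) + (4) * (n:ℤ) + (-1) * (n:ℤ) * (r:ℤ) * (s:ℤ) + (2) * (n:ℤ) * (r:ℤ) * (s:ℤ) * (ind a.1 b1) + (2) * (n:ℤ) * (r:ℤ) * (ind a.1 b1) + (2) * (n:ℤ) * (s:ℤ) * (ind a.1 b1) + (-12) * (n:ℤ) * (ind a.1 b1) + (-1) * (n:ℤ) * (n:ℤ) * (r:ℤ) * (s:ℤ) * (ind a.1 b1) + (2) * (n:ℤ) * (n:ℤ) * (ind a.1 b1) + (2) * (r:ℤ) + (-4) * (r:ℤ) * (ind a.1 b1) + (2) * (s:ℤ)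 + (-4) * (s:ℤ) * (ind a.1 b1) + (14) * (ind a.1 b1))) = ((-8) + (4) * (n:ℤ) + (-3) * (n:ℤ) * (r:ℤ) * (s:ℤ) + (4) * (n:ℤ) * (s:ℤ) + (-2) * (n:ℤ) * (s:ℤ) * (s:ℤ) + (n:ℤ) * (n:ℤ) * (r:ℤ) * (s:ℤ) * (s:ℤ) + (-2) * (n:ℤ) * (n:ℤ) * (s:ℤ) + (2) * (r:ℤ) + (4) * (s:ℤ)) + ((14) + (-12) * (n:ℤ) + (2) * (n:ℤ) * (r:ℤ) + (2) * (n:ℤ) * (r:ℤ) * (s:ℤ) + (-1) * (n:ℤ) * (r:ℤ) * (s:ℤ) * (s:ℤ) + (6) * (n:ℤ) * (s:ℤ) + (2) * (n:ℤ) * (n:ℤ) + (-1) * (n:ℤ) * (n:ℤ) * (r:ℤ) * (s:ℤ) + (-4) * (r:ℤ) + (2) * (r:ℤ) * (s:ℤ) + (-12) * (s:ℤ) + (2) * (s:ℤ) * (s:ℤ)) * ind a.1 b1 := by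
      intro b1; ring
    rw [Finset.sum_congr rfl fun b1 _ => e b1, sum_aux1]
  rw [keyb1]
  ring

def Tset (r s n : ℕ) :
    Finset ((Fin r × Fin s × Fin n) × (Fin r × Fin s × Fin n) × (Fin r × Fin s × Fin n)) :=
  univ.filter fun t => Good t.1 t.2.1 ∧ Good t.1 t.2.2 ∧ Good t.2.1 t.2.2

lemma cardT (r s n : ℕ) :
    ((Tset r s n).card : ℤ) = (r : ℤ) * (s : ℤ) * (n : ℤ) * ((14) + (-12) * (n:ℤ) + (6) * (n:ℤ) * (r:ℤ) + (6) * (n:ℤ) * (r:ℤ) * (s:ℤ) + (-3) * (n:ℤ) * (r:ℤ) * (s:ℤ) * (s:ℤ) + (-3) * (n:ℤ) * (r:ℤ) * (r:ℤ) * (s:ℤ) + (6) * (n:ℤ) * (s:ℤ) + (2) * (n:ℤ) * (n:ℤ) + (-3) * (n:ℤ) * (n:ℤ) * (r:ℤ) * (s:ℤ) + (n:ℤ) * (n:ℤ) * (r:ℤ) * (r:ℤ) * (s:ℤ) * (s:ℤ) + (-12) * (r:ℤ) + (6) * (r:ℤ) * (s:ℤ) + (2) * (r:ℤ) * (r:ℤ)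 + (-12) * (s:ℤ) + (2) * (s:ℤ) * (s:ℤ)) := by
  simp only [Tset]
  rw [Finset.natCast_card_filter]
  have e0 : ∀ (A B C : Fin r × Fin s × Fin n),
      (if Good A B ∧ Good A C ∧ Good B C then (1 : ℤ) else 0)
        = g A B * (g A C * g B C) := by
    intro A B C
    by_cases h1 : Good A B <;> by_cases h2 : Good A C <;> by_cases h3 : Good B C <;>
      simp [h1, h2, h3, ← good_ind]
  rw [sum_triple (α := Fin r × Fin s × Fin n) (β := Fin r × Fin s × Fin n)
    (γ := Fin r × Fin s × Fin n)]
  simp only [e0]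
  simp only [← Finset.mul_sum]
  simp only [hsum]
  simp only [inner_b]
  simp only [Finset.sum_const, Finset.card_univ, Fintype.card_prod, Fintype.card_fin,
    nsmul_eq_mul]
  push_cast
  ring

instance {r s n : ℕ} (E : Finset (Fin r × Fin s × Fin n)) : Decidable (IsPLR E) := by
  unfold IsPLR; infer_instance

def Sset (r s n : ℕ) : Finset (Finset (Fin r × Fin s × Fin n)) :=
  univ.filter fun E => IsPLR E ∧ E.card = 3

lemma numPLR_eq (r s n : ℕ) : numPLR r s n 3 = (Sset r s n).card := by
  rw [numPLR, Nat.card_eq_fintype_card, Fintype.card_subtype, Sset]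

lemma T_card6 (r s n : ℕ) : (Tset r s n).card = 6 * (Sset r s n).card := by
  have maps_to : ∀ t ∈ Tset r s n,
      ({t.1, t.2.1, t.2.2} : Finset (Fin r × Fin s × Fin n)) ∈ Sset r s n := by
    rintro ⟨a, b, c⟩ ht
    simp only [Tset, Finset.mem_filter, Finset.mem_univ, true_and] at ht
    obtain ⟨gab, gac, gbc⟩ := ht
    simp only [Sset, Finset.mem_filter, Finset.mem_univ, true_and]
    constructor
    · intro e he e' he' hne
      simp only [Finset.mem_insert, Finset.mem_singleton] at he he'
      rcases he with rfl | rfl | rfl <;> rcases he' with rfl | rfl | rfl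
      · exact absurd rfl hne
      · exact gab
      · exact gac
      · exact good_symm gab
      · exact absurd rfl hne
      · exact gbc
      · exact good_symm gac
      · exact good_symm gbc
      · exact absurd rfl hne
    · exact Finset.card_eq_three.mpr
        ⟨a, b, c, good_ne gab, good_ne gac, good_ne gbc, rfl⟩
  rw [Finset.card_eq_sum_card_fiberwise maps_to]
  have fiber6 : ∀ E ∈ Sset r s n,
      ((Tset r s n).filter fun t => ({t.1, t.2.1, t.2.2} : Finset _) = E).card = 6 := by
    intro E hE
    simp only [Sset, Finset.mem_filter, Finset.mem_univ, true_and] at hE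
    obtain ⟨hPLR, hcard⟩ := hE
    obtain ⟨x, y, z, hxy, hxz, hyz, rfl⟩ := Finset.card_eq_three.mp hcard
    have mx : x ∈ ({x, y, z} : Finset (Fin r × Fin s × Fin n)) := by simp
    have my : y ∈ ({x, y, z} : Finset (Fin r × Fin s × Fin n)) := by simp
    have mz : z ∈ ({x, y, z} : Finset (Fin r × Fin s × Fin n)) := by simp
    have Gxy : Good x y := hPLR x mx y my hxy
    have Gyx : Good y x := good_symm Gxy
    have Gxz : Good x z := hPLR x mx z mz hxz
    have Gzx : Good z x := good_symm Gxz
    have Gyz : Good y z := hPLR y my z mz hyz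
    have Gzy : Good z y := good_symm Gyz
    have hset : (Tset r s n).filter
          (fun t => ({t.1, t.2.1, t.2.2} : Finset _) = {x, y, z})
        = {(x, y, z), (x, z, y), (y, x, z), (y, z, x), (z, x, y), (z, y, x)} := by
      ext t
      obtain ⟨a, b, c⟩ := t
      simp only [Tset, Finset.mem_filter, Finset.mem_univ, true_and, Finset.mem_insert,
        Finset.mem_singleton, Prod.mk.injEq]
      constructor
      · rintro ⟨⟨gab, gac, gbc⟩, hs⟩
        have ha : a = x ∨ a = y ∨ a = z := by
          have : a ∈ ({x, y, z} : Finset (Fin r × Fin s × Fin n)) := hs ▸ (by simp)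
          simpa using this
        have hb : b = x ∨ b = y ∨ b = z := by
          have : b ∈ ({x, y, z} : Finset (Fin r × Fin s × Fin n)) := hs ▸ (by simp)
          simpa using this
        have hc : c = x ∨ c = y ∨ c = z := by
          have : c ∈ ({x, y, z} : Finset (Fin r × Fin s × Fin n)) := hs ▸ (by simp)
          simpa using this
        have nab := good_ne gab
        have nac := good_ne gac
        have nbc := good_ne gbc
        clear hs gab gac gbc hPLR mx my mz Gxy Gyx Gxz Gzx Gyz Gzy
        rcases ha with rfl | rfl | rfl <;> rcases hb with rfl | rfl | rfl <;>
          rcases hc with rfl | rfl | rfl <;> simp_all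
      · have e1 : ({x, z, y} : Finset (Fin r × Fin s × Fin n)) = {x, y, z} := by
          ext w; simp; tauto
        have e2 : ({y, x, z} : Finset (Fin r × Fin s × Fin n)) = {x, y, z} := by
          ext w; simp; tauto
        have e3 : ({y, z, x} : Finset (Fin r × Fin s × Fin n)) = {x, y, z} := by
          ext w; simp; tauto
        have e4 : ({z, x, y} : Finset (Fin r × Fin s × Fin n)) = {x, y, z} := by
          ext w; simp; tauto
        have e5 : ({z, y, x} : Finset (Fin r × Fin s × Fin n)) = {x, y, z} := by
          ext w; simp; tauto
        rintro (⟨rfl, rfl, rfl⟩ | ⟨rfl, rfl, rfl⟩ | ⟨rfl, rfl, rfl⟩ | ⟨rfl, rfl, rfl⟩ |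
          ⟨rfl, rfl, rfl⟩ | ⟨rfl, rfl, rfl⟩)
        · exact ⟨⟨Gxy, Gxz, Gyz⟩, rfl⟩
        · exact ⟨⟨Gxz, Gxy, Gzy⟩, e1⟩
        · exact ⟨⟨Gyx, Gyz, Gxz⟩, e2⟩
        · exact ⟨⟨Gyz, Gyx, Gzx⟩, e3⟩
        · exact ⟨⟨Gzx, Gzy, Gxy⟩, e4⟩
        · exact ⟨⟨Gzy, Gzx, Gyx⟩, e5⟩
    rw [hset]
    have nxy : y ≠ x := Ne.symm hxy
    have nxz : z ≠ x := Ne.symm hxz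
    have nyz : z ≠ y := Ne.symm hyz
    rw [Finset.card_insert_of_notMem (by simp [Prod.ext_iff, hxy, hxz, hyz, nxy, nxz, nyz]),
      Finset.card_insert_of_notMem (by simp [Prod.ext_iff, hxy, hxz, hyz, nxy, nxz, nyz]),
      Finset.card_insert_of_notMem (by simp [Prod.ext_iff, hxy, hxz, hyz, nxy, nxz, nyz]),
      Finset.card_insert_of_notMem (by simp [Prod.ext_iff, hxy, hxz, hyz, nxy, nxz, nyz]),
      Finset.card_insert_of_notMem (by simp [Prod.ext_iff, hxy, hxz, hyz, nxy, nxz, nyz]),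
      Finset.card_singleton]
  rw [Finset.sum_congr rfl fiber6, Finset.sum_const, smul_eq_mul, mul_comm]

end PLR3

theorem stmt5 (r s n : ℕ) (hr : 0 < r) (hs : 0 < s) (hn : 0 < n) :
    (6 : ℤ) * numPLR r s n 3 =
      (r : ℤ) * s * n *
        ((r : ℤ) ^ 2 * s ^ 2 * n ^ 2 - 3 * r ^ 2 * s * n - 3 * r * s ^ 2 * n
          - 3 * r * s * n ^ 2 + 6 * r * s * n + 6 * r * s + 6 * r * n + 6 * s * n
          + 2 * r ^ 2 + 2 * s ^ 2 + 2 * n ^ 2 - 12 * r - 12 * s - 12 * n + 14) := by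
  have h4 : (6 : ℤ) * numPLR r s n 3 = ((PLR3.Tset r s n).card : ℤ) := by
    rw [PLR3.numPLR_eq, PLR3.T_card6]; push_cast; ring
  rw [h4, PLR3.cardT]
  ring
end

section
/- For all positive integers r, s, n, the number of r×s partial Latin rectangles based on n symbols of size 4 satisfies 24·|R_{r,s,n:4}| = rsn·(σ(3,3,3) − 6σ(3,2,2) + 12σ(2,2,2) + 11σ(3,1,1) + 30σ(2,2,1) − 60σ(2,1,1) − 6σ(3,0,0) − 36σ(2,1,0) − 28σ(1,1,1) + 72σ(2,0,0) + 198σ(1,1,0) − 228σ(1,0,0) + 198). -/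
open Finset

/-- `sig r s n a b c` is the sum of the distinct monomials `r^a' * s^b' * n^c'` as
`(a',b',c')` ranges over the distinct permutations of `(a,b,c)`. -/
def sig (r s n : ℤ) (a b c : ℕ) : ℤ :=
  ∑ p ∈ ({(a, b, c), (a, c, b), (b, a, c), (b, c, a), (c, a, b), (c, b, a)} :
      Finset (ℕ × ℕ × ℕ)),
    r ^ p.1 * s ^ p.2.1 * n ^ p.2.2


/-! ### Auxiliary machinery -/

namespace PLR4

open Finset

set_option maxRecDepth 100000
set_option maxHeartbeats 4000000

instance decIsPLR {r s n : ℕ} (E : Finset (Fin r × Fin s × Fin n)) : Decidable (IsPLR E) := by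
  unfold IsPLR; infer_instance

section Rep
variable {β : Type*} [DecidableEq β]

def rep (g : Fin 4 → β) (i : Fin 4) : Fin 4 :=
  (univ.filter fun j => g j = g i).min' ⟨i, by simp⟩

lemma g_rep (g : Fin 4 → β) (i : Fin 4) : g (rep g i) = g i := by
  have h := Finset.min'_mem (univ.filter fun j => g j = g i) ⟨i, by simp⟩
  simpa [rep] using h

lemma rep_le (g : Fin 4 → β) (i : Fin 4) : rep g i ≤ i :=
  Finset.min'_le _ _ (by simp)

lemma rep_le_of (g : Fin 4 → β) {i j : Fin 4} (h : g j = g i) : rep g i ≤ j :=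
  Finset.min'_le _ _ (by simp [h])

lemma rep_eq_iff (g : Fin 4 → β) (i j : Fin 4) : rep g i = rep g j ↔ g i = g j := by
  constructor
  · intro h
    have h1 := g_rep g i
    rw [h] at h1
    exact h1.symm.trans (g_rep g j)
  · intro h
    apply le_antisymm
    · exact rep_le_of g ((g_rep g j).trans h.symm)
    · exact rep_le_of g ((g_rep g i).trans h)

lemma rep_idem (g : Fin 4 → β) (i : Fin 4) : rep g (rep g i) = rep g i := by
  apply le_antisymm
  · exact rep_le_of g rfl
  · exact rep_le_of g ((g_rep g (rep g i)).trans (g_rep g i))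

lemma rep_eq_of {p : Fin 4 → Fin 4} (hid : ∀ i, p (p i) = p i) (hle : ∀ i, p i ≤ i)
    (g : Fin 4 → β) (hg : ∀ i j, g i = g j ↔ p i = p j) : rep g = p := by
  funext i
  apply le_antisymm
  · exact rep_le_of g ((hg (p i) i).2 (hid i))
  · apply Finset.le_min'
    intro y hy
    simp only [mem_filter, mem_univ, true_and] at hy
    calc p i = p y := ((hg y i).1 hy).symm
    _ ≤ y := hle y

end Rep

def fixB (p : Fin 4 → Fin 4) : ℕ :=
  (if p 0 = 0 then 1 else 0) + (if p 1 = 1 then 1 else 0) +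
    (if p 2 = 2 then 1 else 0) + (if p 3 = 3 then 1 else 0)

lemma fixB_eq (p : Fin 4 → Fin 4) :
    (univ.filter fun i => p i = i).card = fixB p := by
  rw [Finset.card_filter, Fin.sum_univ_four, fixB]

lemma card_rep_fiber (m : ℕ) (p : Fin 4 → Fin 4) (hid : ∀ i, p (p i) = p i)
    (hle : ∀ i, p i ≤ i) :
    ((univ : Finset (Fin 4 → Fin m)).filter fun g => rep g = p).card
      = m.descFactorial (fixB p) := by
  have key : ((univ : Finset (Fin 4 → Fin m)).filter fun g => rep g = p).card
      = (univ : Finset ({i : Fin 4 // p i = i} ↪ Fin m)).card := by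
    apply Finset.card_bij'
      (i := fun g hg => ⟨fun x => g x.1, by
        intro x y hxy
        have hg' : rep g = p := (Finset.mem_filter.1 hg).2
        have h2 : rep g x.1 = rep g y.1 := (rep_eq_iff g x.1 y.1).2 hxy
        rw [hg'] at h2
        exact Subtype.ext (by rw [← x.2, ← y.2]; exact h2)⟩)
      (j := fun h _ => fun i => h ⟨p i, hid i⟩)
    case hi => intro a ha; exact Finset.mem_univ _
    case hj =>
      intro h _
      simp only [Finset.mem_filter, Finset.mem_univ, true_and]
      apply rep_eq_of hid hle
      intro i j
      constructor
      · intro hh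
        exact Subtype.ext_iff.1 (h.injective hh)
      · intro hh
        congr 1
        exact Subtype.ext hh
    case left_inv =>
      intro g hg
      funext k
      have hg' : rep g = p := (Finset.mem_filter.1 hg).2
      show g (p k) = g k
      apply (rep_eq_iff g (p k) k).1
      rw [hg', hid]
    case right_inv =>
      intro h _
      ext x
      simp only [Function.Embedding.coeFn_mk]
      have hx : (⟨p x.1, hid x.1⟩ : {i : Fin 4 // p i = i}) = x := Subtype.ext x.2
      exact congrArg Fin.val (congrArg h hx)
  rw [key, Finset.card_univ, Fintype.card_embedding_eq, Fintype.card_fin,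
    Fintype.card_subtype, fixB_eq]

def TValid {α β γ : Type*} (q : (Fin 4 → α) × (Fin 4 → β) × (Fin 4 → γ)) : Prop :=
  ∀ i j : Fin 4, i ≠ j →
    ¬(q.1 i = q.1 j ∧ q.2.1 i = q.2.1 j) ∧
    ¬(q.1 i = q.1 j ∧ q.2.2 i = q.2.2 j) ∧
    ¬(q.2.1 i = q.2.1 j ∧ q.2.2 i = q.2.2 j)

instance decTValid {α β γ : Type*} [DecidableEq α] [DecidableEq β] [DecidableEq γ]
    (q : (Fin 4 → α) × (Fin 4 → β) × (Fin 4 → γ)) : Decidable (TValid q) := by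
  unfold TValid; infer_instance

def tvB (q : (Fin 4 → Fin 4) × (Fin 4 → Fin 4) × (Fin 4 → Fin 4)) : Bool :=
  decide (
    (¬(q.1 0 = q.1 1 ∧ q.2.1 0 = q.2.1 1) ∧ ¬(q.1 0 = q.1 1 ∧ q.2.2 0 = q.2.2 1) ∧ ¬(q.2.1 0 = q.2.1 1 ∧ q.2.2 0 = q.2.2 1)) ∧
    (¬(q.1 0 = q.1 2 ∧ q.2.1 0 = q.2.1 2) ∧ ¬(q.1 0 = q.1 2 ∧ q.2.2 0 = q.2.2 2) ∧ ¬(q.2.1 0 = q.2.1 2 ∧ q.2.2 0 = q.2.2 2)) ∧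
    (¬(q.1 0 = q.1 3 ∧ q.2.1 0 = q.2.1 3) ∧ ¬(q.1 0 = q.1 3 ∧ q.2.2 0 = q.2.2 3) ∧ ¬(q.2.1 0 = q.2.1 3 ∧ q.2.2 0 = q.2.2 3)) ∧
    (¬(q.1 1 = q.1 2 ∧ q.2.1 1 = q.2.1 2) ∧ ¬(q.1 1 = q.1 2 ∧ q.2.2 1 = q.2.2 2) ∧ ¬(q.2.1 1 = q.2.1 2 ∧ q.2.2 1 = q.2.2 2)) ∧
    (¬(q.1 1 = q.1 3 ∧ q.2.1 1 = q.2.1 3) ∧ ¬(q.1 1 = q.1 3 ∧ q.2.2 1 = q.2.2 3) ∧ ¬(q.2.1 1 = q.2.1 3 ∧ q.2.2 1 = q.2.2 3)) ∧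
    (¬(q.1 2 = q.1 3 ∧ q.2.1 2 = q.2.1 3) ∧ ¬(q.1 2 = q.1 3 ∧ q.2.2 2 = q.2.2 3) ∧ ¬(q.2.1 2 = q.2.1 3 ∧ q.2.2 2 = q.2.2 3)))

private lemma symm3 {A B C : Type*} {x1 y1 : A} {x2 y2 : B} {x3 y3 : C}
    (h : ¬(x1 = y1 ∧ x2 = y2) ∧ ¬(x1 = y1 ∧ x3 = y3) ∧ ¬(x2 = y2 ∧ x3 = y3)) :
    ¬(y1 = x1 ∧ y2 = x2) ∧ ¬(y1 = x1 ∧ y3 = x3) ∧ ¬(y2 = x2 ∧ y3 = x3) :=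
  ⟨fun ⟨u, v⟩ => h.1 ⟨u.symm, v.symm⟩, fun ⟨u, v⟩ => h.2.1 ⟨u.symm, v.symm⟩,
    fun ⟨u, v⟩ => h.2.2 ⟨u.symm, v.symm⟩⟩

lemma tvB_iff (q : (Fin 4 → Fin 4) × (Fin 4 → Fin 4) × (Fin 4 → Fin 4)) :
    tvB q = true ↔ TValid q := by
  rw [tvB, decide_eq_true_eq]
  constructor
  · rintro ⟨h01, h02, h03, h12, h13, h23⟩ i j hij
    fin_cases i <;> fin_cases j <;>
      first
        | exact absurd rfl hij
        | assumption
        | exact symm3 h01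
        | exact symm3 h02
        | exact symm3 h03
        | exact symm3 h12
        | exact symm3 h13
        | exact symm3 h23
  · intro h
    exact ⟨h 0 1 (by decide), h 0 2 (by decide), h 0 3 (by decide),
      h 1 2 (by decide), h 1 3 (by decide), h 2 3 (by decide)⟩

def LN : List (Fin 4 → Fin 4) :=
  [![0,0,0,0], ![0,0,0,3], ![0,0,2,0], ![0,0,2,2], ![0,0,2,3], ![0,1,0,0], ![0,1,0,1], ![0,1,0,3], ![0,1,1,0], ![0,1,1,1], ![0,1,1,3], ![0,1,2,0], ![0,1,2,1], ![0,1,2,2], ![0,1,2,3]]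

lemma nodup_LN : LN.Nodup := by decide

lemma mem_LN_of_normal : ∀ a : Fin 4 → Fin 4,
    ((∀ i, a (a i) = a i) ∧ ∀ i, a i ≤ i) → a ∈ LN := by decide

lemma normal_of_mem_LN : ∀ a ∈ LN, (∀ i, a (a i) = a i) ∧ ∀ i, a i ≤ i := by decide

def LK : List ((Fin 4 → Fin 4) × (Fin 4 → Fin 4) × (Fin 4 → Fin 4)) :=
  (LN.product (LN.product LN)).filter tvB

def K : Finset ((Fin 4 → Fin 4) × (Fin 4 → Fin 4) × (Fin 4 → Fin 4)) :=
  ⟨(LK : Multiset _), Multiset.coe_nodup.2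
    (((nodup_LN.product (nodup_LN.product nodup_LN)).filter tvB))⟩

lemma mem_K {q : (Fin 4 → Fin 4) × (Fin 4 → Fin 4) × (Fin 4 → Fin 4)} :
    q ∈ K ↔ ((∀ i, q.1 (q.1 i) = q.1 i) ∧ ∀ i, q.1 i ≤ i) ∧
      ((∀ i, q.2.1 (q.2.1 i) = q.2.1 i) ∧ ∀ i, q.2.1 i ≤ i) ∧
      ((∀ i, q.2.2 (q.2.2 i) = q.2.2 i) ∧ ∀ i, q.2.2 i ≤ i) ∧ TValid q := by
  have hq : q = (q.1, (q.2.1, q.2.2)) := rfl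
  constructor
  · intro h
    have h' : q ∈ LK := by exact h
    rw [LK, List.mem_filter] at h'
    obtain ⟨hmem, htv⟩ := h'
    rw [hq] at hmem
    rw [List.pair_mem_product] at hmem
    obtain ⟨h1, hmem2⟩ := hmem
    rw [List.pair_mem_product] at hmem2
    exact ⟨normal_of_mem_LN _ h1, normal_of_mem_LN _ hmem2.1, normal_of_mem_LN _ hmem2.2,
      (tvB_iff q).1 htv⟩
  · rintro ⟨hn1, hn2, hn3, htv⟩
    show q ∈ LK
    rw [LK, List.mem_filter]
    constructor
    · rw [hq, List.pair_mem_product]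
      exact ⟨mem_LN_of_normal _ hn1, by
        rw [List.pair_mem_product]
        exact ⟨mem_LN_of_normal _ hn2, mem_LN_of_normal _ hn3⟩⟩
    · exact (tvB_iff q).2 htv

def fix3 (p : (Fin 4 → Fin 4) × (Fin 4 → Fin 4) × (Fin 4 → Fin 4)) : ℕ × ℕ × ℕ :=
  (fixB p.1, fixB p.2.1, fixB p.2.2)

def kap {α β γ : Type*} [DecidableEq α] [DecidableEq β] [DecidableEq γ]
    (q : (Fin 4 → α) × (Fin 4 → β) × (Fin 4 → γ)) :
    (Fin 4 → Fin 4) × (Fin 4 → Fin 4) × (Fin 4 → Fin 4) :=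
  (rep q.1, rep q.2.1, rep q.2.2)

lemma tvalid_kap {α β γ : Type*} [DecidableEq α] [DecidableEq β] [DecidableEq γ]
    (q : (Fin 4 → α) × (Fin 4 → β) × (Fin 4 → γ)) : TValid (kap q) ↔ TValid q := by
  unfold TValid kap
  simp only [rep_eq_iff]

lemma kap_mem_K {α β γ : Type*} [DecidableEq α] [DecidableEq β] [DecidableEq γ]
    (q : (Fin 4 → α) × (Fin 4 → β) × (Fin 4 → γ)) (hq : TValid q) : kap q ∈ K := by
  rw [mem_K]
  exact ⟨⟨fun i => rep_idem _ i, fun i => rep_le _ i⟩,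
    ⟨fun i => rep_idem _ i, fun i => rep_le _ i⟩,
    ⟨fun i => rep_idem _ i, fun i => rep_le _ i⟩, (tvalid_kap q).2 hq⟩

lemma main_count (r s n : ℕ) :
    ((univ : Finset ((Fin 4 → Fin r) × (Fin 4 → Fin s) × (Fin 4 → Fin n))).filter TValid).card
      = ∑ p ∈ K, r.descFactorial (fix3 p).1 *
          (s.descFactorial (fix3 p).2.1 * n.descFactorial (fix3 p).2.2) := by
  rw [Finset.card_eq_sum_card_fiberwise (f := kap) (t := K)
    (fun q hq => kap_mem_K q (Finset.mem_filter.1 hq).2)]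
  apply Finset.sum_congr rfl
  intro p hp
  obtain ⟨h1, h2, h3, hpv⟩ := mem_K.1 hp
  have fiber_eq : ((univ : Finset ((Fin 4 → Fin r) × (Fin 4 → Fin s) × (Fin 4 → Fin n))).filter
        TValid).filter (fun q => kap q = p)
      = (univ.filter fun g => rep g = p.1) ×ˢ
          ((univ.filter fun g => rep g = p.2.1) ×ˢ (univ.filter fun g => rep g = p.2.2)) := by
    ext q
    simp only [Finset.mem_filter, Finset.mem_product, Finset.mem_univ, true_and]
    constructor
    · intro ⟨_, hk⟩
      unfold kap at hk
      exact ⟨congrArg Prod.fst hk, congrArg (Prod.fst ∘ Prod.snd) hk,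
        congrArg (Prod.snd ∘ Prod.snd) hk⟩
    · intro ⟨ha, hb, hc⟩
      have hk : kap q = p := by
        unfold kap; rw [ha, hb, hc]
      refine ⟨?_, hk⟩
      rw [← tvalid_kap, hk]
      exact hpv
  rw [fiber_eq, Finset.card_product, Finset.card_product,
    card_rep_fiber r p.1 h1.1 h1.2, card_rep_fiber s p.2.1 h2.1 h2.2,
    card_rep_fiber n p.2.2 h3.1 h3.2]
  rfl

def Lit4 : List (ℕ × ℕ × ℕ) :=
  [(1,4,4), (2,3,3), (2,3,3), (2,3,4), (2,3,3), (2,3,3), (2,3,4), (2,3,3), (2,3,3), (2,3,4), (2,4,3), (2,4,3), (2,4,3), (2,4,4), (2,3,3), (2,3,3), (2,3,4), (2,3,3), (2,3,3), (2,3,4), (2,3,3), (2,3,3), (2,3,4), (2,4,3), (2,4,3), (2,4,3), (2,4,4), (2,2,2), (2,2,3), (2,2,3), (2,2,4), (2,3,2), (2,3,3), (2,3,3), (2,3,3), (2,3,4), (2,2,2), (2,2,3), (2,2,3), (2,2,4), (2,3,2), (2,3,3), (2,3,3), (2,3,3), (2,3,4), (2,3,2), (2,3,3), (2,3,3), (2,3,3),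 (2,3,4), (2,3,3), (2,3,2), (2,3,3), (2,3,3), (2,3,4), (2,4,2), (2,4,3), (2,4,2), (2,4,3), (2,4,3), (2,4,3), (2,4,4), (3,2,3), (3,2,3), (3,2,4), (3,2,2), (3,2,3), (3,2,3), (3,2,3), (3,2,4), (3,3,2), (3,3,2), (3,3,3), (3,3,3), (3,3,3), (3,3,3), (3,3,4), (3,2,2), (3,2,3), (3,2,3), (3,2,3), (3,2,4), (3,2,3), (3,2,3), (3,2,4), (3,3,2), (3,3,2), (3,3,3), (3,3,3), (3,3,3), (3,3,3), (3,3,4), (3,3,2), (3,3,3), (3,3,2), (3,3,3), (3,3,3), (3,3,3), (3,3,4), (3,3,2), (3,3,3), (3,3,2), (3,3,3), (3,3,3), (3,3,3), (3,3,4), (3,3,2), (3,3,3), (3,3,2), (3,3,3), (3,3,3), (3,3,3), (3,3,4), (3,4,2), (3,4,2), (3,4,3), (3,4,2), (3,4,2), (3,4,3), (3,4,3), (3,4,3), (3,4,3), (3,4,4), (2,3,3), (2,3,3), (2,3,4), (2,3,3), (2,3,3), (2,3,4), (2,3,3), (2,3,3), (2,3,4), (2,4,3), (2,4,3), (2,4,3),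 (2,4,4), (2,2,2), (2,2,3), (2,2,3), (2,2,4), (2,3,2), (2,3,3), (2,3,3), (2,3,3), (2,3,4), (2,2,2), (2,2,3), (2,2,3), (2,2,4), (2,3,2), (2,3,3), (2,3,3), (2,3,3), (2,3,4), (2,3,2), (2,3,3), (2,3,3), (2,3,3), (2,3,4), (2,3,3), (2,3,2), (2,3,3), (2,3,3), (2,3,4), (2,4,2), (2,4,3), (2,4,2), (2,4,3), (2,4,3), (2,4,3), (2,4,4), (3,2,3), (3,2,3), (3,2,4), (3,2,2), (3,2,3), (3,2,3), (3,2,3), (3,2,4), (3,3,2), (3,3,2), (3,3,3), (3,3,3), (3,3,3), (3,3,3), (3,3,4), (3,2,2), (3,2,3), (3,2,3), (3,2,3), (3,2,4), (3,2,3), (3,2,3), (3,2,4), (3,3,2), (3,3,2), (3,3,3), (3,3,3), (3,3,3), (3,3,3), (3,3,4), (3,3,2), (3,3,3), (3,3,2), (3,3,3), (3,3,3), (3,3,3), (3,3,4), (3,3,2), (3,3,3), (3,3,2), (3,3,3), (3,3,3), (3,3,3), (3,3,4), (3,3,2), (3,3,3), (3,3,2), (3,3,3), (3,3,3), (3,3,3),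 (3,3,4), (3,4,2), (3,4,2), (3,4,3), (3,4,2), (3,4,2), (3,4,3), (3,4,3), (3,4,3), (3,4,3), (3,4,4), (2,2,2), (2,2,3), (2,2,3), (2,2,4), (2,3,2), (2,3,3), (2,3,3), (2,3,3), (2,3,4), (2,2,2), (2,2,3), (2,2,3), (2,2,4), (2,3,2), (2,3,3), (2,3,3), (2,3,3), (2,3,4), (2,3,2), (2,3,3), (2,3,3), (2,3,3), (2,3,4), (2,3,3), (2,3,2), (2,3,3), (2,3,3), (2,3,4), (2,4,2), (2,4,3), (2,4,2), (2,4,3), (2,4,3), (2,4,3), (2,4,4), (2,3,3), (2,3,3), (2,3,4), (2,3,3), (2,3,3), (2,3,4), (2,3,3), (2,3,3), (2,3,4), (2,4,3), (2,4,3), (2,4,3), (2,4,4), (3,2,3), (3,2,3), (3,2,4), (3,2,2), (3,2,3), (3,2,3), (3,2,3), (3,2,4), (3,3,2), (3,3,2), (3,3,3), (3,3,3), (3,3,3), (3,3,3), (3,3,4), (3,2,3), (3,2,3), (3,2,4), (3,2,2), (3,2,3), (3,2,3), (3,2,3), (3,2,4), (3,3,2), (3,3,2), (3,3,3), (3,3,3),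 (3,3,3), (3,3,3), (3,3,4), (3,3,2), (3,3,3), (3,3,2), (3,3,3), (3,3,3), (3,3,3), (3,3,4), (3,3,2), (3,3,3), (3,3,2), (3,3,3), (3,3,3), (3,3,3), (3,3,4), (3,3,2), (3,3,3), (3,3,2), (3,3,3), (3,3,3), (3,3,3), (3,3,4), (3,4,2), (3,4,2), (3,4,3), (3,4,2), (3,4,2), (3,4,3), (3,4,3), (3,4,3), (3,4,3), (3,4,4), (3,2,3), (3,2,3), (3,2,4), (3,2,2), (3,2,3), (3,2,3), (3,2,3), (3,2,4), (3,3,2), (3,3,3), (3,3,2), (3,3,3), (3,3,3), (3,3,3), (3,3,4), (3,2,2), (3,2,3), (3,2,3), (3,2,3), (3,2,4), (3,3,2), (3,3,3), (3,3,2), (3,3,3), (3,3,3), (3,3,3), (3,3,4), (3,2,3), (3,2,3), (3,2,4), (3,3,2), (3,3,3), (3,3,2), (3,3,3), (3,3,3), (3,3,3), (3,3,4), (3,3,2), (3,3,2), (3,3,3), (3,3,3), (3,3,3), (3,3,3), (3,3,4), (3,3,2), (3,3,3), (3,3,2), (3,3,3), (3,3,3), (3,3,3), (3,3,4), (3,4,2),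 (3,4,2), (3,4,3), (3,4,2), (3,4,3), (3,4,2), (3,4,3), (3,4,3), (3,4,3), (3,4,4), (3,2,3), (3,2,3), (3,2,4), (3,2,3), (3,2,2), (3,2,3), (3,2,3), (3,2,4), (3,3,2), (3,3,3), (3,3,2), (3,3,3), (3,3,3), (3,3,3), (3,3,4), (3,2,3), (3,2,3), (3,2,4), (3,3,2), (3,3,3), (3,3,2), (3,3,3), (3,3,3), (3,3,3), (3,3,4), (3,2,2), (3,2,3), (3,2,3), (3,2,3), (3,2,4), (3,3,2), (3,3,3), (3,3,2), (3,3,3), (3,3,3), (3,3,3), (3,3,4), (3,3,2), (3,3,2), (3,3,3), (3,3,3), (3,3,3), (3,3,3), (3,3,4), (3,3,2), (3,3,3), (3,3,3), (3,3,2), (3,3,3), (3,3,3), (3,3,4), (3,4,2), (3,4,2), (3,4,3), (3,4,2), (3,4,3), (3,4,2), (3,4,3), (3,4,3), (3,4,3), (3,4,4), (3,2,3), (3,2,3), (3,2,4), (3,2,3), (3,2,3), (3,2,4), (3,3,2), (3,3,3), (3,3,2), (3,3,3), (3,3,3), (3,3,3), (3,3,4), (3,2,3), (3,2,2), (3,2,3),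 (3,2,3), (3,2,4), (3,3,2), (3,3,3), (3,3,2), (3,3,3), (3,3,3), (3,3,3), (3,3,4), (3,2,3), (3,2,2), (3,2,3), (3,2,3), (3,2,4), (3,3,2), (3,3,3), (3,3,2), (3,3,3), (3,3,3), (3,3,3), (3,3,4), (3,3,2), (3,3,3), (3,3,2), (3,3,3), (3,3,3), (3,3,3), (3,3,4), (3,3,2), (3,3,3), (3,3,3), (3,3,2), (3,3,3), (3,3,3), (3,3,4), (3,4,2), (3,4,2), (3,4,3), (3,4,2), (3,4,3), (3,4,2), (3,4,3), (3,4,3), (3,4,3), (3,4,4), (4,1,4), (4,2,3), (4,2,3), (4,2,3), (4,2,4), (4,2,3), (4,2,3), (4,2,3), (4,2,4), (4,2,2), (4,2,3), (4,2,2), (4,2,3), (4,2,3), (4,2,3), (4,2,4), (4,3,2), (4,3,2), (4,3,3), (4,3,2), (4,3,2), (4,3,3), (4,3,3), (4,3,3), (4,3,3), (4,3,4), (4,2,3), (4,2,3), (4,2,3), (4,2,4), (4,2,2), (4,2,3), (4,2,2), (4,2,3), (4,2,3), (4,2,3), (4,2,4), (4,3,2), (4,3,2), (4,3,3), (4,3,2),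 (4,3,2), (4,3,3), (4,3,3), (4,3,3), (4,3,3), (4,3,4), (4,2,2), (4,2,3), (4,2,2), (4,2,3), (4,2,3), (4,2,3), (4,2,4), (4,2,3), (4,2,3), (4,2,3), (4,2,4), (4,3,2), (4,3,2), (4,3,3), (4,3,2), (4,3,2), (4,3,3), (4,3,3), (4,3,3), (4,3,3), (4,3,4), (4,3,2), (4,3,2), (4,3,3), (4,3,2), (4,3,3), (4,3,2), (4,3,3), (4,3,3), (4,3,3), (4,3,4), (4,3,2), (4,3,2), (4,3,3), (4,3,2), (4,3,3), (4,3,2), (4,3,3), (4,3,3), (4,3,3), (4,3,4), (4,3,2), (4,3,2), (4,3,3), (4,3,2), (4,3,3), (4,3,2), (4,3,3), (4,3,3), (4,3,3), (4,3,4), (4,4,1), (4,4,2), (4,4,2), (4,4,2), (4,4,3), (4,4,2), (4,4,2), (4,4,3), (4,4,2), (4,4,2), (4,4,3), (4,4,3), (4,4,3), (4,4,3), (4,4,4)]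

def U : Finset (ℕ × ℕ × ℕ) :=
  {(1,4,4), (2,2,2), (2,2,3), (2,2,4), (2,3,2), (2,3,3), (2,3,4), (2,4,2), (2,4,3), (2,4,4), (3,2,2), (3,2,3), (3,2,4), (3,3,2), (3,3,3), (3,3,4), (3,4,2), (3,4,3), (3,4,4), (4,1,4), (4,2,2), (4,2,3), (4,2,4), (4,3,2), (4,3,3), (4,3,4), (4,4,1), (4,4,2), (4,4,3), (4,4,4)}

lemma sum_eval (r s n : ℕ) :
    (∑ p ∈ K, r.descFactorial (fix3 p).1 *
        (s.descFactorial (fix3 p).2.1 * n.descFactorial (fix3 p).2.2))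
      = 1 * (Nat.descFactorial r 1 * (Nat.descFactorial s 4 * Nat.descFactorial n 4)) + 6 * (Nat.descFactorial r 2 * (Nat.descFactorial s 2 * Nat.descFactorial n 2)) + 12 * (Nat.descFactorial r 2 * (Nat.descFactorial s 2 * Nat.descFactorial n 3)) + 6 * (Nat.descFactorial r 2 * (Nat.descFactorial s 2 * Nat.descFactorial n 4)) + 12 * (Nat.descFactorial r 2 * (Nat.descFactorial s 3 * Nat.descFactorial n 2)) + 60 * (Nat.descFactorial r 2 * (Nat.descFactorial s 3 * Nat.descFactorial n 3)) + 24 * (Nat.descFactorial r 2 * (Nat.descFactorial s 3 * Nat.descFactorial n 4)) + 6 * (Nat.descFactorial r 2 * (Nat.descFactorial s 4 * Nat.descFactorial n 2)) + 24 * (Nat.descFactorial r 2 * (Nat.descFactorial s 4 * Nat.descFactorial n 3)) + 7 * (Nat.descFactorial r 2 * (Nat.descFactorial s 4 * Nat.descFactorial n 4)) + 12 * (Nat.descFactorial r 3 * (Nat.descFactorial s 2 * Nat.descFactorial n 2)) + 60 * (Nat.descFactorial r 3 * (Nat.descFactorial s 2 * Nat.descFactorial n 3)) + 24 * (Nat.descFactorial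 r 3 * (Nat.descFactorial s 2 * Nat.descFactorial n 4)) + 60 * (Nat.descFactorial r 3 * (Nat.descFactorial s 3 * Nat.descFactorial n 2)) + 120 * (Nat.descFactorial r 3 * (Nat.descFactorial s 3 * Nat.descFactorial n 3)) + 30 * (Nat.descFactorial r 3 * (Nat.descFactorial s 3 * Nat.descFactorial n 4)) + 24 * (Nat.descFactorial r 3 * (Nat.descFactorial s 4 * Nat.descFactorial n 2)) + 30 * (Nat.descFactorial r 3 * (Nat.descFactorial s 4 * Nat.descFactorial n 3)) + 6 * (Nat.descFactorial r 3 * (Nat.descFactorial s 4 * Nat.descFactorial n 4)) + 1 * (Nat.descFactorial r 4 * (Nat.descFactorial s 1 * Nat.descFactorial n 4)) + 6 * (Nat.descFactorial r 4 * (Nat.descFactorial s 2 * Nat.descFactorial n 2)) + 24 * (Nat.descFactorial r 4 * (Nat.descFactorial s 2 * Nat.descFactorial n 3)) + 7 * (Nat.descFactorial r 4 * (Nat.descFactorial s 2 * Nat.descFactorial n 4)) + 24 * (Nat.descFactorial r 4 * (Nat.descFactorial s 3 * Nat.descFactorial n 2)) + 30 * (Nat.descFactorial r 4 * (Nat.descFactorial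 s 3 * Nat.descFactorial n 3)) + 6 * (Nat.descFactorial r 4 * (Nat.descFactorial s 3 * Nat.descFactorial n 4)) + 1 * (Nat.descFactorial r 4 * (Nat.descFactorial s 4 * Nat.descFactorial n 1)) + 7 * (Nat.descFactorial r 4 * (Nat.descFactorial s 4 * Nat.descFactorial n 2)) + 6 * (Nat.descFactorial r 4 * (Nat.descFactorial s 4 * Nat.descFactorial n 3)) + 1 * (Nat.descFactorial r 4 * (Nat.descFactorial s 4 * Nat.descFactorial n 4)) := by
  have h1 : (∑ p ∈ K, r.descFactorial (fix3 p).1 *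
        (s.descFactorial (fix3 p).2.1 * n.descFactorial (fix3 p).2.2))
      = ((LK.map fix3).map fun k : ℕ × ℕ × ℕ =>
          r.descFactorial k.1 * (s.descFactorial k.2.1 * n.descFactorial k.2.2)).sum := by
    rw [List.map_map]
    rfl
  rw [h1, show LK.map fix3 = Lit4 from by decide]
  have h2 : ((Lit4.map fun k : ℕ × ℕ × ℕ =>
        r.descFactorial k.1 * (s.descFactorial k.2.1 * n.descFactorial k.2.2))).sum
      = ((Lit4 : Multiset (ℕ × ℕ × ℕ)).map fun k : ℕ × ℕ × ℕ =>
          r.descFactorial k.1 * (s.descFactorial k.2.1 * n.descFactorial k.2.2)).sum := rfl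
  rw [h2, Finset.sum_multiset_map_count]
  rw [show ((Lit4 : Multiset (ℕ × ℕ × ℕ))).toFinset = ({(1,4,4), (2,2,2), (2,2,3), (2,2,4), (2,3,2), (2,3,3), (2,3,4), (2,4,2), (2,4,3), (2,4,4), (3,2,2), (3,2,3), (3,2,4), (3,3,2), (3,3,3), (3,3,4), (3,4,2), (3,4,3), (3,4,4), (4,1,4), (4,2,2), (4,2,3), (4,2,4), (4,3,2), (4,3,3), (4,3,4), (4,4,1), (4,4,2), (4,4,3), (4,4,4)} : Finset (ℕ × ℕ × ℕ)) from by decide]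
  have hc144 : ((Lit4 : Multiset (ℕ × ℕ × ℕ))).count (1,4,4) = 1 := by decide
  have hc222 : ((Lit4 : Multiset (ℕ × ℕ × ℕ))).count (2,2,2) = 6 := by decide
  have hc223 : ((Lit4 : Multiset (ℕ × ℕ × ℕ))).count (2,2,3) = 12 := by decide
  have hc224 : ((Lit4 : Multiset (ℕ × ℕ × ℕ))).count (2,2,4) = 6 := by decide
  have hc232 : ((Lit4 : Multiset (ℕ × ℕ × ℕ))).count (2,3,2) = 12 := by decide
  have hc233 : ((Lit4 : Multiset (ℕ × ℕ × ℕ))).count (2,3,3) = 60 := by decide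
  have hc234 : ((Lit4 : Multiset (ℕ × ℕ × ℕ))).count (2,3,4) = 24 := by decide
  have hc242 : ((Lit4 : Multiset (ℕ × ℕ × ℕ))).count (2,4,2) = 6 := by decide
  have hc243 : ((Lit4 : Multiset (ℕ × ℕ × ℕ))).count (2,4,3) = 24 := by decide
  have hc244 : ((Lit4 : Multiset (ℕ × ℕ × ℕ))).count (2,4,4) = 7 := by decide
  have hc322 : ((Lit4 : Multiset (ℕ × ℕ × ℕ))).count (3,2,2) = 12 := by decide
  have hc323 : ((Lit4 : Multiset (ℕ × ℕ × ℕ))).count (3,2,3) = 60 := by decide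
  have hc324 : ((Lit4 : Multiset (ℕ × ℕ × ℕ))).count (3,2,4) = 24 := by decide
  have hc332 : ((Lit4 : Multiset (ℕ × ℕ × ℕ))).count (3,3,2) = 60 := by decide
  have hc333 : ((Lit4 : Multiset (ℕ × ℕ × ℕ))).count (3,3,3) = 120 := by decide
  have hc334 : ((Lit4 : Multiset (ℕ × ℕ × ℕ))).count (3,3,4) = 30 := by decide
  have hc342 : ((Lit4 : Multiset (ℕ × ℕ × ℕ))).count (3,4,2) = 24 := by decide
  have hc343 : ((Lit4 : Multiset (ℕ × ℕ × ℕ))).count (3,4,3) = 30 := by decide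
  have hc344 : ((Lit4 : Multiset (ℕ × ℕ × ℕ))).count (3,4,4) = 6 := by decide
  have hc414 : ((Lit4 : Multiset (ℕ × ℕ × ℕ))).count (4,1,4) = 1 := by decide
  have hc422 : ((Lit4 : Multiset (ℕ × ℕ × ℕ))).count (4,2,2) = 6 := by decide
  have hc423 : ((Lit4 : Multiset (ℕ × ℕ × ℕ))).count (4,2,3) = 24 := by decide
  have hc424 : ((Lit4 : Multiset (ℕ × ℕ × ℕ))).count (4,2,4) = 7 := by decide
  have hc432 : ((Lit4 : Multiset (ℕ × ℕ × ℕ))).count (4,3,2) = 24 := by decide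
  have hc433 : ((Lit4 : Multiset (ℕ × ℕ × ℕ))).count (4,3,3) = 30 := by decide
  have hc434 : ((Lit4 : Multiset (ℕ × ℕ × ℕ))).count (4,3,4) = 6 := by decide
  have hc441 : ((Lit4 : Multiset (ℕ × ℕ × ℕ))).count (4,4,1) = 1 := by decide
  have hc442 : ((Lit4 : Multiset (ℕ × ℕ × ℕ))).count (4,4,2) = 7 := by decide
  have hc443 : ((Lit4 : Multiset (ℕ × ℕ × ℕ))).count (4,4,3) = 6 := by decide
  have hc444 : ((Lit4 : Multiset (ℕ × ℕ × ℕ))).count (4,4,4) = 1 := by decide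
  rw [Finset.sum_insert (by decide)]
  rw [Finset.sum_insert (by decide)]
  rw [Finset.sum_insert (by decide)]
  rw [Finset.sum_insert (by decide)]
  rw [Finset.sum_insert (by decide)]
  rw [Finset.sum_insert (by decide)]
  rw [Finset.sum_insert (by decide)]
  rw [Finset.sum_insert (by decide)]
  rw [Finset.sum_insert (by decide)]
  rw [Finset.sum_insert (by decide)]
  rw [Finset.sum_insert (by decide)]
  rw [Finset.sum_insert (by decide)]
  rw [Finset.sum_insert (by decide)]
  rw [Finset.sum_insert (by decide)]
  rw [Finset.sum_insert (by decide)]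
  rw [Finset.sum_insert (by decide)]
  rw [Finset.sum_insert (by decide)]
  rw [Finset.sum_insert (by decide)]
  rw [Finset.sum_insert (by decide)]
  rw [Finset.sum_insert (by decide)]
  rw [Finset.sum_insert (by decide)]
  rw [Finset.sum_insert (by decide)]
  rw [Finset.sum_insert (by decide)]
  rw [Finset.sum_insert (by decide)]
  rw [Finset.sum_insert (by decide)]
  rw [Finset.sum_insert (by decide)]
  rw [Finset.sum_insert (by decide)]
  rw [Finset.sum_insert (by decide)]
  rw [Finset.sum_insert (by decide)]
  rw [Finset.sum_singleton]
  simp only [hc144, hc222, hc223, hc224, hc232, hc233, hc234, hc242, hc243, hc244, hc322, hc323, hc324, hc332, hc333, hc334, hc342, hc343, hc344, hc414, hc422, hc423, hc424, hc432, hc433, hc434, hc441, hc442, hc443, hc444, smul_eq_mul]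
  ring

/-! ### From partial Latin rectangles to ordered tuples -/

def pairCond {r s n : ℕ} (f : Fin 4 → Fin r × Fin s × Fin n) : Prop :=
  ∀ i j : Fin 4, i ≠ j →
    ¬((f i).1 = (f j).1 ∧ (f i).2.1 = (f j).2.1) ∧
    ¬((f i).1 = (f j).1 ∧ (f i).2.2 = (f j).2.2) ∧
    ¬((f i).2.1 = (f j).2.1 ∧ (f i).2.2 = (f j).2.2)

instance decPairCond {r s n : ℕ} (f : Fin 4 → Fin r × Fin s × Fin n) :
    Decidable (pairCond f) := by
  unfold pairCond; infer_instance

lemma injective_of_pairCond {r s n : ℕ} {f : Fin 4 → Fin r × Fin s × Fin n}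
    (h : pairCond f) : Function.Injective f := by
  intro i j hij
  by_contra hne
  exact (h i j hne).1 ⟨congrArg (fun e => e.1) hij, congrArg (fun e => e.2.1) hij⟩

lemma numPLR_eq (r s n m : ℕ) :
    numPLR r s n m
      = ((univ : Finset (Finset (Fin r × Fin s × Fin n))).filter
          fun E => IsPLR E ∧ E.card = m).card := by
  rw [numPLR, Nat.card_eq_fintype_card, Fintype.card_subtype]

lemma fiber24 {r s n : ℕ} (E : Finset (Fin r × Fin s × Fin n)) (hc : E.card = 4) :
    ((univ : Finset (Fin 4 → Fin r × Fin s × Fin n)).filter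
        fun f => image f univ = E).card = 24 := by
  have key : ((univ : Finset (Fin 4 → Fin r × Fin s × Fin n)).filter
        fun f => image f univ = E).card
      = (univ : Finset (Fin 4 ↪ {x // x ∈ E})).card := by
    apply Finset.card_bij'
      (i := fun f hf => ⟨fun k => ⟨f k, by
          have hf' : image f univ = E := (Finset.mem_filter.1 hf).2
          rw [← hf']
          exact Finset.mem_image_of_mem f (Finset.mem_univ k)⟩, by
        have hf' : image f univ = E := (Finset.mem_filter.1 hf).2
        have hinj : Set.InjOn f ↑(univ : Finset (Fin 4)) :=
          Finset.injOn_of_card_image_eq (by rw [hf', hc, Finset.card_univ, Fintype.card_fin])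
        intro x y hxy
        have : f x = f y := Subtype.ext_iff.1 hxy
        exact hinj (Finset.mem_coe.2 (Finset.mem_univ x)) (Finset.mem_coe.2 (Finset.mem_univ y)) this⟩)
      (j := fun e _ => fun k => ↑(e k))
    case hi => intro f hf; exact Finset.mem_univ _
    case hj =>
      intro e _
      simp only [Finset.mem_filter, Finset.mem_univ, true_and]
      have hinj : Function.Injective fun k => ((e k : {x // x ∈ E}) : Fin r × Fin s × Fin n) :=
        fun x y hxy => e.injective (Subtype.ext hxy)
      apply Finset.eq_of_subset_of_card_le
      · intro x hx
        obtain ⟨k, _, rfl⟩ := Finset.mem_image.1 hx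
        exact (e k).2
      · rw [Finset.card_image_of_injective _ hinj, Finset.card_univ, Fintype.card_fin, hc]
    case left_inv => intro f _; rfl
    case right_inv =>
      intro e _
      ext x <;> rfl
  rw [key, Finset.card_univ, Fintype.card_embedding_eq, Fintype.card_fin,
    Fintype.card_coe, hc]
  rfl

lemma lemA (r s n : ℕ) :
    ((univ : Finset (Fin 4 → Fin r × Fin s × Fin n)).filter pairCond).card
      = 24 * numPLR r s n 4 := by
  rw [numPLR_eq]
  have hmaps : ∀ f ∈ (univ : Finset (Fin 4 → Fin r × Fin s × Fin n)).filter pairCond,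
      image f univ ∈ (univ : Finset (Finset (Fin r × Fin s × Fin n))).filter
        fun E => IsPLR E ∧ E.card = 4 := by
    intro f hf
    have hpc : pairCond f := (Finset.mem_filter.1 hf).2
    have hinj : Function.Injective f := injective_of_pairCond hpc
    rw [Finset.mem_filter]
    refine ⟨Finset.mem_univ _, ?_, ?_⟩
    · intro e he e' he' hne
      obtain ⟨i, _, rfl⟩ := Finset.mem_image.1 he
      obtain ⟨j, _, rfl⟩ := Finset.mem_image.1 he'
      have hij : i ≠ j := fun h => hne (congrArg f h)
      exact hpc i j hij
    · rw [Finset.card_image_of_injective _ hinj, Finset.card_univ, Fintype.card_fin]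
  rw [Finset.card_eq_sum_card_fiberwise hmaps]
  have step : ∀ E ∈ (univ : Finset (Finset (Fin r × Fin s × Fin n))).filter
      (fun E => IsPLR E ∧ E.card = 4),
      (((univ : Finset (Fin 4 → Fin r × Fin s × Fin n)).filter pairCond).filter
        fun f => image f univ = E).card = 24 := by
    intro E hE
    obtain ⟨hPLR, hc⟩ := (Finset.mem_filter.1 hE).2
    have heq : (((univ : Finset (Fin 4 → Fin r × Fin s × Fin n)).filter pairCond).filter
          fun f => image f univ = E)
        = (univ : Finset (Fin 4 → Fin r × Fin s × Fin n)).filter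
            fun f => image f univ = E := by
      rw [Finset.filter_filter]
      apply Finset.filter_congr
      intro f _
      constructor
      · intro h; exact h.2
      · intro hE'
        refine ⟨?_, hE'⟩
        have hinj : Function.Injective f := by
          have hinjOn : Set.InjOn f ↑(univ : Finset (Fin 4)) :=
            Finset.injOn_of_card_image_eq
              (by rw [hE', hc, Finset.card_univ, Fintype.card_fin])
          intro x y hxy
          exact hinjOn (Finset.mem_coe.2 (Finset.mem_univ x))
            (Finset.mem_coe.2 (Finset.mem_univ y)) hxy
        intro i j hij
        have h1 : f i ∈ E := by
          rw [← hE']; exact Finset.mem_image_of_mem f (Finset.mem_univ i)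
        have h2 : f j ∈ E := by
          rw [← hE']; exact Finset.mem_image_of_mem f (Finset.mem_univ j)
        have hne : f i ≠ f j := fun h => hij (hinj h)
        exact hPLR (f i) h1 (f j) h2 hne
    rw [heq, fiber24 E hc]
  rw [Finset.sum_congr rfl step, Finset.sum_const, smul_eq_mul, Nat.mul_comm]

lemma bridge (r s n : ℕ) :
    ((univ : Finset (Fin 4 → Fin r × Fin s × Fin n)).filter pairCond).card
      = ((univ : Finset ((Fin 4 → Fin r) × (Fin 4 → Fin s) × (Fin 4 → Fin n))).filter
          TValid).card := by
  apply Finset.card_bij'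
    (i := fun f _ => ((fun k => (f k).1), (fun k => (f k).2.1), fun k => (f k).2.2))
    (j := fun q _ => fun k => (q.1 k, q.2.1 k, q.2.2 k))
  case hi =>
    intro f hf
    simp only [Finset.mem_filter, Finset.mem_univ, true_and] at *
    exact hf
  case hj =>
    intro q hq
    simp only [Finset.mem_filter, Finset.mem_univ, true_and] at *
    exact hq
  case left_inv => intro f _; rfl
  case right_inv => intro q _; rfl

lemma cd1 (m : ℕ) : ((m.descFactorial 1 : ℕ) : ℤ) = (m : ℤ) := by
  rw [Nat.descFactorial_one]

lemma cd2 (m : ℕ) : ((m.descFactorial 2 : ℕ) : ℤ) = (m : ℤ) * ((m : ℤ) - 1) := by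
  rcases m with _ | m <;> simp [Nat.descFactorial] <;> (push_cast; ring)

lemma cd3 (m : ℕ) : ((m.descFactorial 3 : ℕ) : ℤ)
    = (m : ℤ) * ((m : ℤ) - 1) * ((m : ℤ) - 2) := by
  rcases m with _ | _ | m <;> simp [Nat.descFactorial] <;> (push_cast; ring)

lemma cd4 (m : ℕ) : ((m.descFactorial 4 : ℕ) : ℤ)
    = (m : ℤ) * ((m : ℤ) - 1) * ((m : ℤ) - 2) * ((m : ℤ) - 3) := by
  rcases m with _ | _ | _ | m <;> simp [Nat.descFactorial] <;> (push_cast; ring)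

end PLR4

open PLR4 in
theorem stmt6 (r s n : ℕ) (hr : 0 < r) (hs : 0 < s) (hn : 0 < n) :
    (24 : ℤ) * numPLR r s n 4 =
      (r : ℤ) * s * n *
        (sig r s n 3 3 3 - 6 * sig r s n 3 2 2 + 12 * sig r s n 2 2 2
          + 11 * sig r s n 3 1 1 + 30 * sig r s n 2 2 1 - 60 * sig r s n 2 1 1
          - 6 * sig r s n 3 0 0 - 36 * sig r s n 2 1 0 - 28 * sig r s n 1 1 1
          + 72 * sig r s n 2 0 0 + 198 * sig r s n 1 1 0 - 228 * sig r s n 1 0 0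
          + 198) := by
  have h1 : 24 * numPLR r s n 4 = 1 * (Nat.descFactorial r 1 * (Nat.descFactorial s 4 * Nat.descFactorial n 4)) + 6 * (Nat.descFactorial r 2 * (Nat.descFactorial s 2 * Nat.descFactorial n 2)) + 12 * (Nat.descFactorial r 2 * (Nat.descFactorial s 2 * Nat.descFactorial n 3)) + 6 * (Nat.descFactorial r 2 * (Nat.descFactorial s 2 * Nat.descFactorial n 4)) + 12 * (Nat.descFactorial r 2 * (Nat.descFactorial s 3 * Nat.descFactorial n 2)) + 60 * (Nat.descFactorial r 2 * (Nat.descFactorial s 3 * Nat.descFactorial n 3)) + 24 * (Nat.descFactorial r 2 * (Nat.descFactorial s 3 * Nat.descFactorial n 4)) + 6 * (Nat.descFactorial r 2 * (Nat.descFactorial s 4 * Nat.descFactorial n 2)) + 24 * (Nat.descFactorial r 2 * (Nat.descFactorial s 4 * Nat.descFactorial n 3)) + 7 * (Nat.descFactorial r 2 * (Nat.descFactorial s 4 * Nat.descFactorial n 4)) + 12 * (Nat.descFactorial r 3 * (Nat.descFactorial s 2 * Nat.descFactorial n 2)) + 60 * (Nat.descFactorial r 3 * (Nat.descFactorial s 2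 * Nat.descFactorial n 3)) + 24 * (Nat.descFactorial r 3 * (Nat.descFactorial s 2 * Nat.descFactorial n 4)) + 60 * (Nat.descFactorial r 3 * (Nat.descFactorial s 3 * Nat.descFactorial n 2)) + 120 * (Nat.descFactorial r 3 * (Nat.descFactorial s 3 * Nat.descFactorial n 3)) + 30 * (Nat.descFactorial r 3 * (Nat.descFactorial s 3 * Nat.descFactorial n 4)) + 24 * (Nat.descFactorial r 3 * (Nat.descFactorial s 4 * Nat.descFactorial n 2)) + 30 * (Nat.descFactorial r 3 * (Nat.descFactorial s 4 * Nat.descFactorial n 3)) + 6 * (Nat.descFactorial r 3 * (Nat.descFactorial s 4 * Nat.descFactorial n 4)) + 1 * (Nat.descFactorial r 4 * (Nat.descFactorial s 1 * Nat.descFactorial n 4)) + 6 * (Nat.descFactorial r 4 * (Nat.descFactorial s 2 * Nat.descFactorial n 2)) + 24 * (Nat.descFactorial r 4 * (Nat.descFactorial s 2 * Nat.descFactorial n 3)) + 7 * (Nat.descFactorial r 4 * (Nat.descFactorial s 2 * Nat.descFactorial n 4)) + 24 * (Nat.descFactorial r 4 * (Nat.descFactorial s 3 * Nat.descFactorial n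 2)) + 30 * (Nat.descFactorial r 4 * (Nat.descFactorial s 3 * Nat.descFactorial n 3)) + 6 * (Nat.descFactorial r 4 * (Nat.descFactorial s 3 * Nat.descFactorial n 4)) + 1 * (Nat.descFactorial r 4 * (Nat.descFactorial s 4 * Nat.descFactorial n 1)) + 7 * (Nat.descFactorial r 4 * (Nat.descFactorial s 4 * Nat.descFactorial n 2)) + 6 * (Nat.descFactorial r 4 * (Nat.descFactorial s 4 * Nat.descFactorial n 3)) + 1 * (Nat.descFactorial r 4 * (Nat.descFactorial s 4 * Nat.descFactorial n 4)) := by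
    rw [← PLR4.lemA, PLR4.bridge, PLR4.main_count, PLR4.sum_eval]
  have h2 : (24 : ℤ) * (numPLR r s n 4 : ℤ) = ((24 * numPLR r s n 4 : ℕ) : ℤ) := by
    push_cast
    ring
  rw [h2, h1]
  have hsig333 : sig (r : ℤ) (s : ℤ) (n : ℤ) 3 3 3 = (r : ℤ) ^ 3 * (s : ℤ) ^ 3 * (n : ℤ) ^ 3 := by
      rw [sig]
      rw [show ({(3,3,3), (3,3,3), (3,3,3), (3,3,3), (3,3,3), (3,3,3)} : Finset (ℕ × ℕ × ℕ)) = {(3,3,3)} from by decide]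
      try rw [Finset.sum_singleton]
      try norm_num
      try ring
  have hsig322 : sig (r : ℤ) (s : ℤ) (n : ℤ) 3 2 2 = (r : ℤ) ^ 3 * (s : ℤ) ^ 2 * (n : ℤ) ^ 2 + (r : ℤ) ^ 2 * (s : ℤ) ^ 3 * (n : ℤ) ^ 2 + (r : ℤ) ^ 2 * (s : ℤ) ^ 2 * (n : ℤ) ^ 3 := by
      rw [sig]
      rw [show ({(3,2,2), (3,2,2), (2,3,2), (2,2,3), (2,3,2), (2,2,3)} : Finset (ℕ × ℕ × ℕ)) = {(3,2,2), (2,3,2), (2,2,3)} from by decide]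
      rw [Finset.sum_insert (by decide)]
      rw [Finset.sum_insert (by decide)]
      try rw [Finset.sum_singleton]
      try norm_num
      try ring
  have hsig222 : sig (r : ℤ) (s : ℤ) (n : ℤ) 2 2 2 = (r : ℤ) ^ 2 * (s : ℤ) ^ 2 * (n : ℤ) ^ 2 := by
      rw [sig]
      rw [show ({(2,2,2), (2,2,2), (2,2,2), (2,2,2), (2,2,2), (2,2,2)} : Finset (ℕ × ℕ × ℕ)) = {(2,2,2)} from by decide]
      try rw [Finset.sum_singleton]
      try norm_num
      try ring
  have hsig311 : sig (r : ℤ) (s : ℤ) (n : ℤ) 3 1 1 = (r : ℤ) ^ 3 * (s : ℤ) ^ 1 * (n : ℤ) ^ 1 + (r : ℤ) ^ 1 * (s : ℤ) ^ 3 * (n : ℤ) ^ 1 + (r : ℤ) ^ 1 * (s : ℤ) ^ 1 * (n : ℤ) ^ 3 := by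
      rw [sig]
      rw [show ({(3,1,1), (3,1,1), (1,3,1), (1,1,3), (1,3,1), (1,1,3)} : Finset (ℕ × ℕ × ℕ)) = {(3,1,1), (1,3,1), (1,1,3)} from by decide]
      rw [Finset.sum_insert (by decide)]
      rw [Finset.sum_insert (by decide)]
      try rw [Finset.sum_singleton]
      try norm_num
      try ring
  have hsig221 : sig (r : ℤ) (s : ℤ) (n : ℤ) 2 2 1 = (r : ℤ) ^ 2 * (s : ℤ) ^ 2 * (n : ℤ) ^ 1 + (r : ℤ) ^ 2 * (s : ℤ) ^ 1 * (n : ℤ) ^ 2 + (r : ℤ) ^ 1 * (s : ℤ) ^ 2 * (n : ℤ) ^ 2 := by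
      rw [sig]
      rw [show ({(2,2,1), (2,1,2), (2,2,1), (2,1,2), (1,2,2), (1,2,2)} : Finset (ℕ × ℕ × ℕ)) = {(2,2,1), (2,1,2), (1,2,2)} from by decide]
      rw [Finset.sum_insert (by decide)]
      rw [Finset.sum_insert (by decide)]
      try rw [Finset.sum_singleton]
      try norm_num
      try ring
  have hsig211 : sig (r : ℤ) (s : ℤ) (n : ℤ) 2 1 1 = (r : ℤ) ^ 2 * (s : ℤ) ^ 1 * (n : ℤ) ^ 1 + (r : ℤ) ^ 1 * (s : ℤ) ^ 2 * (n : ℤ) ^ 1 + (r : ℤ) ^ 1 * (s : ℤ) ^ 1 * (n : ℤ) ^ 2 := by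
      rw [sig]
      rw [show ({(2,1,1), (2,1,1), (1,2,1), (1,1,2), (1,2,1), (1,1,2)} : Finset (ℕ × ℕ × ℕ)) = {(2,1,1), (1,2,1), (1,1,2)} from by decide]
      rw [Finset.sum_insert (by decide)]
      rw [Finset.sum_insert (by decide)]
      try rw [Finset.sum_singleton]
      try norm_num
      try ring
  have hsig300 : sig (r : ℤ) (s : ℤ) (n : ℤ) 3 0 0 = (r : ℤ) ^ 3 * (s : ℤ) ^ 0 * (n : ℤ) ^ 0 + (r : ℤ) ^ 0 * (s : ℤ) ^ 3 * (n : ℤ) ^ 0 + (r : ℤ) ^ 0 * (s : ℤ) ^ 0 * (n : ℤ) ^ 3 := by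
      rw [sig]
      rw [show ({(3,0,0), (3,0,0), (0,3,0), (0,0,3), (0,3,0), (0,0,3)} : Finset (ℕ × ℕ × ℕ)) = {(3,0,0), (0,3,0), (0,0,3)} from by decide]
      rw [Finset.sum_insert (by decide)]
      rw [Finset.sum_insert (by decide)]
      try rw [Finset.sum_singleton]
      try norm_num
      try ring
  have hsig210 : sig (r : ℤ) (s : ℤ) (n : ℤ) 2 1 0 = (r : ℤ) ^ 2 * (s : ℤ) ^ 1 * (n : ℤ) ^ 0 + (r : ℤ) ^ 2 * (s : ℤ) ^ 0 * (n : ℤ) ^ 1 + (r : ℤ) ^ 1 * (s : ℤ) ^ 2 * (n : ℤ) ^ 0 + (r : ℤ) ^ 1 * (s : ℤ) ^ 0 * (n : ℤ) ^ 2 + (r : ℤ) ^ 0 * (s : ℤ) ^ 2 * (n : ℤ) ^ 1 + (r : ℤ) ^ 0 * (s : ℤ) ^ 1 * (n : ℤ) ^ 2 := by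
      rw [sig]
      rw [show ({(2,1,0), (2,0,1), (1,2,0), (1,0,2), (0,2,1), (0,1,2)} : Finset (ℕ × ℕ × ℕ)) = {(2,1,0), (2,0,1), (1,2,0), (1,0,2), (0,2,1), (0,1,2)} from by decide]
      rw [Finset.sum_insert (by decide)]
      rw [Finset.sum_insert (by decide)]
      rw [Finset.sum_insert (by decide)]
      rw [Finset.sum_insert (by decide)]
      rw [Finset.sum_insert (by decide)]
      try rw [Finset.sum_singleton]
      try norm_num
      try ring
  have hsig111 : sig (r : ℤ) (s : ℤ) (n : ℤ) 1 1 1 = (r : ℤ) ^ 1 * (s : ℤ) ^ 1 * (n : ℤ) ^ 1 := by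
      rw [sig]
      rw [show ({(1,1,1), (1,1,1), (1,1,1), (1,1,1), (1,1,1), (1,1,1)} : Finset (ℕ × ℕ × ℕ)) = {(1,1,1)} from by decide]
      try rw [Finset.sum_singleton]
      try norm_num
      try ring
  have hsig200 : sig (r : ℤ) (s : ℤ) (n : ℤ) 2 0 0 = (r : ℤ) ^ 2 * (s : ℤ) ^ 0 * (n : ℤ) ^ 0 + (r : ℤ) ^ 0 * (s : ℤ) ^ 2 * (n : ℤ) ^ 0 + (r : ℤ) ^ 0 * (s : ℤ) ^ 0 * (n : ℤ) ^ 2 := by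
      rw [sig]
      rw [show ({(2,0,0), (2,0,0), (0,2,0), (0,0,2), (0,2,0), (0,0,2)} : Finset (ℕ × ℕ × ℕ)) = {(2,0,0), (0,2,0), (0,0,2)} from by decide]
      rw [Finset.sum_insert (by decide)]
      rw [Finset.sum_insert (by decide)]
      try rw [Finset.sum_singleton]
      try norm_num
      try ring
  have hsig110 : sig (r : ℤ) (s : ℤ) (n : ℤ) 1 1 0 = (r : ℤ) ^ 1 * (s : ℤ) ^ 1 * (n : ℤ) ^ 0 + (r : ℤ) ^ 1 * (s : ℤ) ^ 0 * (n : ℤ) ^ 1 + (r : ℤ) ^ 0 * (s : ℤ) ^ 1 * (n : ℤ) ^ 1 := by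
      rw [sig]
      rw [show ({(1,1,0), (1,0,1), (1,1,0), (1,0,1), (0,1,1), (0,1,1)} : Finset (ℕ × ℕ × ℕ)) = {(1,1,0), (1,0,1), (0,1,1)} from by decide]
      rw [Finset.sum_insert (by decide)]
      rw [Finset.sum_insert (by decide)]
      try rw [Finset.sum_singleton]
      try norm_num
      try ring
  have hsig100 : sig (r : ℤ) (s : ℤ) (n : ℤ) 1 0 0 = (r : ℤ) ^ 1 * (s : ℤ) ^ 0 * (n : ℤ) ^ 0 + (r : ℤ) ^ 0 * (s : ℤ) ^ 1 * (n : ℤ) ^ 0 + (r : ℤ) ^ 0 * (s : ℤ) ^ 0 * (n : ℤ) ^ 1 := by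
      rw [sig]
      rw [show ({(1,0,0), (1,0,0), (0,1,0), (0,0,1), (0,1,0), (0,0,1)} : Finset (ℕ × ℕ × ℕ)) = {(1,0,0), (0,1,0), (0,0,1)} from by decide]
      rw [Finset.sum_insert (by decide)]
      rw [Finset.sum_insert (by decide)]
      try rw [Finset.sum_singleton]
      try norm_num
      try ring
  rw [hsig333, hsig322, hsig222, hsig311, hsig221, hsig211, hsig300, hsig210, hsig111, hsig200, hsig110, hsig100]
  push_cast
  simp only [PLR4.cd1, PLR4.cd2, PLR4.cd3, PLR4.cd4]
  ring
end

section
/- For every positive integer n, the number of n×n partial Latin rectangles based on n symbols of size 3 satisfies 6·|R_{n,n,n:3}| = n³·(n−1)²·(n⁴ + 2n³ − 6n² − 8n + 14). -/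
open Finset

namespace PLRAux

abbrev T (n : ℕ) := Fin n × Fin n × Fin n

def conflict {n : ℕ} (e f : T n) : Prop :=
  (e.1 = f.1 ∧ e.2.1 = f.2.1) ∨ (e.1 = f.1 ∧ e.2.2 = f.2.2) ∨ (e.2.1 = f.2.1 ∧ e.2.2 = f.2.2)

instance {n : ℕ} (e f : T n) : Decidable (conflict e f) := by
  unfold conflict; infer_instance

def good {n : ℕ} (e f : T n) : Prop := ¬ conflict e f

instance {n : ℕ} (e f : T n) : Decidable (good e f) := by
  unfold good; infer_instance

lemma conflict_comm {n : ℕ} (e f : T n) : conflict e f ↔ conflict f e := by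
  unfold conflict; constructor <;> rintro (⟨h1,h2⟩|⟨h1,h2⟩|⟨h1,h2⟩) <;> simp [h1,h2]

lemma good_comm {n : ℕ} {e f : T n} (h : good e f) : good f e :=
  fun hc => h ((conflict_comm e f).mpr hc)

lemma good_ne {n : ℕ} {e f : T n} (h : good e f) : e ≠ f := by
  rintro rfl; exact h (Or.inl ⟨rfl, rfl⟩)

def shares {n : ℕ} (e f : T n) : Prop := e.1 = f.1 ∨ e.2.1 = f.2.1 ∨ e.2.2 = f.2.2

instance {n : ℕ} (e f : T n) : Decidable (shares e f) := by
  unfold shares; infer_instance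

/-- inclusion–exclusion: number of entries in conflict with a fixed entry. -/
lemma card_conflict {n : ℕ} (e : T n) :
    (univ.filter (fun f : T n => conflict e f)).card + 2 = 3 * n := by
  classical
  set A := univ.filter (fun f : T n => e.1 = f.1 ∧ e.2.1 = f.2.1) with hA
  set B := univ.filter (fun f : T n => e.1 = f.1 ∧ e.2.2 = f.2.2) with hB
  set C := univ.filter (fun f : T n => e.2.1 = f.2.1 ∧ e.2.2 = f.2.2) with hC
  have hcA : A.card = n := by
    rw [hA]; simp only [Finset.card_filter, Fintype.sum_prod_type, ite_and]
    simp [Finset.sum_ite_eq, Finset.sum_ite_eq', eq_comm]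
  have hcB : B.card = n := by
    rw [hB]; simp only [Finset.card_filter, Fintype.sum_prod_type, ite_and]
    simp [Finset.sum_ite_eq, Finset.sum_ite_eq', eq_comm]
  have hcC : C.card = n := by
    rw [hC]; simp only [Finset.card_filter, Fintype.sum_prod_type, ite_and]
    simp [Finset.sum_ite_eq, Finset.sum_ite_eq', eq_comm]
  have hAB : A ∩ B = {e} := by
    rw [hA, hB, ← Finset.filter_and]; ext ⟨x,y,z⟩; obtain ⟨a,b,c⟩ := e
    simp [Prod.ext_iff]; tauto
  have hAC : A ∩ C = {e} := by
    rw [hA, hC, ← Finset.filter_and]; ext ⟨x,y,z⟩; obtain ⟨a,b,c⟩ := e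
    simp [Prod.ext_iff]; tauto
  have hBC : B ∩ C = {e} := by
    rw [hB, hC, ← Finset.filter_and]; ext ⟨x,y,z⟩; obtain ⟨a,b,c⟩ := e
    simp [Prod.ext_iff]; tauto
  have hn : 0 < n := e.1.pos
  have hfilter : univ.filter (fun f : T n => conflict e f) = A ∪ (B ∪ C) := by
    rw [hA, hB, hC, ← Finset.filter_or, ← Finset.filter_or]; rfl
  rw [hfilter]
  have h1 := Finset.card_union_add_card_inter B C
  have h2 := Finset.card_union_add_card_inter A (B ∪ C)
  rw [Finset.inter_union_distrib_left, hAB, hAC, Finset.union_self] at h2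
  rw [hBC] at h1
  simp only [Finset.card_singleton] at h1 h2
  omega

lemma card_univT {n : ℕ} : (univ : Finset (T n)).card = n ^ 3 := by
  simp [Finset.card_univ]; ring

lemma card_good {n : ℕ} (e : T n) :
    (univ.filter (fun f : T n => good e f)).card + 3 * n = n ^ 3 + 2 := by
  classical
  have h1 : univ.filter (fun f : T n => good e f)
      = univ \ univ.filter (fun f : T n => conflict e f) := by
    rw [← Finset.filter_not]; rfl
  have h2 := Finset.card_sdiff_add_card_eq_card
    (Finset.filter_subset (fun f : T n => conflict e f) univ)
  rw [card_univT] at h2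
  have h3 := card_conflict e
  rw [h1]
  omega

/-- entries in conflict with both of two row-sharing entries -/
lemma inter_row {n : ℕ} (r b1 c1 b2 c2 : Fin n) (hb : b1 ≠ b2) (hc : c1 ≠ c2) :
    ((univ.filter (conflict (r,b1,c1))) ∩ (univ.filter (conflict (r,b2,c2)))).card = 2 := by
  have hset : (univ.filter (conflict (r,b1,c1))) ∩ (univ.filter (conflict (r,b2,c2)))
      = {(r,b1,c2), (r,b2,c1)} := by
    ext ⟨x,y,z⟩
    simp only [Finset.mem_inter, Finset.mem_filter, Finset.mem_univ, true_and,
      Finset.mem_insert, Finset.mem_singleton, Prod.mk.injEq, conflict]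
    constructor
    · rintro ⟨h1|h1|h1, h2|h2|h2⟩ <;> simp_all
    · rintro (⟨rfl,rfl,rfl⟩|⟨rfl,rfl,rfl⟩) <;> simp_all
  rw [hset, Finset.card_insert_of_notMem, Finset.card_singleton]
  simp [Prod.ext_iff]; tauto

lemma inter_col {n : ℕ} (a1 b c1 a2 c2 : Fin n) (ha : a1 ≠ a2) (hc : c1 ≠ c2) :
    ((univ.filter (conflict (a1,b,c1))) ∩ (univ.filter (conflict (a2,b,c2)))).card = 2 := by
  have hset : (univ.filter (conflict (a1,b,c1))) ∩ (univ.filter (conflict (a2,b,c2)))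
      = {(a1,b,c2), (a2,b,c1)} := by
    ext ⟨x,y,z⟩
    simp only [Finset.mem_inter, Finset.mem_filter, Finset.mem_univ, true_and,
      Finset.mem_insert, Finset.mem_singleton, Prod.mk.injEq, conflict]
    constructor
    · rintro ⟨h1|h1|h1, h2|h2|h2⟩ <;> simp_all
    · rintro (⟨rfl,rfl,rfl⟩|⟨rfl,rfl,rfl⟩) <;> simp_all
  rw [hset, Finset.card_insert_of_notMem, Finset.card_singleton]
  simp [Prod.ext_iff]; tauto

lemma inter_sym {n : ℕ} (a1 b1 c a2 b2 : Fin n) (ha : a1 ≠ a2) (hb : b1 ≠ b2) :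
    ((univ.filter (conflict (a1,b1,c))) ∩ (univ.filter (conflict (a2,b2,c)))).card = 2 := by
  have hset : (univ.filter (conflict (a1,b1,c))) ∩ (univ.filter (conflict (a2,b2,c)))
      = {(a1,b2,c), (a2,b1,c)} := by
    ext ⟨x,y,z⟩
    simp only [Finset.mem_inter, Finset.mem_filter, Finset.mem_univ, true_and,
      Finset.mem_insert, Finset.mem_singleton, Prod.mk.injEq, conflict]
    constructor
    · rintro ⟨h1|h1|h1, h2|h2|h2⟩ <;> simp_all
    · rintro (⟨rfl,rfl,rfl⟩|⟨rfl,rfl,rfl⟩) <;> simp_all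
  rw [hset, Finset.card_insert_of_notMem, Finset.card_singleton]
  simp [Prod.ext_iff]; tauto

lemma inter_none {n : ℕ} (a1 b1 c1 a2 b2 c2 : Fin n) (ha : a1 ≠ a2) (hb : b1 ≠ b2)
    (hc : c1 ≠ c2) :
    ((univ.filter (conflict (a1,b1,c1))) ∩ (univ.filter (conflict (a2,b2,c2)))).card = 0 := by
  rw [Finset.card_eq_zero]
  ext ⟨x,y,z⟩
  simp only [Finset.mem_inter, Finset.mem_filter, Finset.mem_univ, true_and,
    Finset.notMem_empty, iff_false, not_and, conflict]
  rintro (h1|h1|h1) (h2|h2|h2) <;> simp_all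

/-- key: number of entries compatible with both entries of a good pair -/
lemma card_N3 {n : ℕ} (e1 e2 : T n) (h : good e1 e2) :
    (univ.filter (fun f : T n => good e1 f ∧ good e2 f)).card + 6 * n
      = n ^ 3 + 4 + (if shares e1 e2 then 2 else 0) := by
  classical
  set C1 := univ.filter (fun f : T n => conflict e1 f) with hC1
  set C2 := univ.filter (fun f : T n => conflict e2 f) with hC2
  have hgu : univ.filter (fun f : T n => good e1 f ∧ good e2 f) = univ \ (C1 ∪ C2) := by
    ext f
    rw [Finset.mem_filter]
    simp [hC1, hC2, good, not_or]
  have hU := Finset.card_union_add_card_inter C1 C2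
  have hc1 := card_conflict e1
  have hc2 := card_conflict e2
  rw [← hC1] at hc1
  rw [← hC2] at hc2
  have hsd := Finset.card_sdiff_add_card_eq_card (Finset.subset_univ (C1 ∪ C2))
  rw [card_univT] at hsd
  have hI : (C1 ∩ C2).card = (if shares e1 e2 then 2 else 0) := by
    obtain ⟨a1, b1, c1⟩ := e1
    obtain ⟨a2, b2, c2⟩ := e2
    by_cases hs : shares (a1,b1,c1) (a2,b2,c2)
    · simp only [hs, if_true]
      rcases hs with hsh | hsh | hsh
      · simp only at hsh
        subst hsh
        have hb : b1 ≠ b2 := fun hh => h (Or.inl ⟨rfl, hh⟩)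
        have hc : c1 ≠ c2 := fun hh => h (Or.inr (Or.inl ⟨rfl, hh⟩))
        exact inter_row a1 b1 c1 b2 c2 hb hc
      · simp only at hsh
        subst hsh
        have ha : a1 ≠ a2 := fun hh => h (Or.inl ⟨hh, rfl⟩)
        have hc : c1 ≠ c2 := fun hh => h (Or.inr (Or.inr ⟨rfl, hh⟩))
        exact inter_col a1 b1 c1 a2 c2 ha hc
      · simp only at hsh
        subst hsh
        have ha : a1 ≠ a2 := fun hh => h (Or.inr (Or.inl ⟨hh, rfl⟩))
        have hb : b1 ≠ b2 := fun hh => h (Or.inr (Or.inr ⟨hh, rfl⟩))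
        exact inter_sym a1 b1 c1 a2 b2 ha hb
    · simp only [hs, if_false]
      unfold shares at hs
      push_neg at hs
      obtain ⟨ha, hb, hc⟩ := hs
      exact inter_none a1 b1 c1 a2 b2 c2 ha hb hc
  rw [hgu]
  omega

/-- number of good pairs sharing a line with a fixed entry -/
lemma card_shares_good {n : ℕ} (e : T n) :
    (univ.filter (fun f : T n => good e f ∧ shares e f)).card = 3 * (n - 1) ^ 2 := by
  classical
  have hiff : ∀ f : T n, (good e f ∧ shares e f) ↔
      ((e.1 = f.1 ∧ ¬e.2.1 = f.2.1 ∧ ¬e.2.2 = f.2.2) ∨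
       ((¬e.1 = f.1 ∧ e.2.1 = f.2.1 ∧ ¬e.2.2 = f.2.2) ∨
        (¬e.1 = f.1 ∧ ¬e.2.1 = f.2.1 ∧ e.2.2 = f.2.2))) := by
    intro f
    unfold good conflict shares
    tauto
  have hd23 : Disjoint
      (univ.filter (fun f : T n => ¬e.1 = f.1 ∧ e.2.1 = f.2.1 ∧ ¬e.2.2 = f.2.2))
      (univ.filter (fun f : T n => ¬e.1 = f.1 ∧ ¬e.2.1 = f.2.1 ∧ e.2.2 = f.2.2)) := by
    simp only [Finset.disjoint_left, Finset.mem_filter]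
    rintro f ⟨_, _, hB, _⟩ ⟨_, _, hnB, _⟩
    exact hnB hB
  have hd1 : Disjoint
      (univ.filter (fun f : T n => e.1 = f.1 ∧ ¬e.2.1 = f.2.1 ∧ ¬e.2.2 = f.2.2))
      ((univ.filter (fun f : T n => ¬e.1 = f.1 ∧ e.2.1 = f.2.1 ∧ ¬e.2.2 = f.2.2)) ∪
       (univ.filter (fun f : T n => ¬e.1 = f.1 ∧ ¬e.2.1 = f.2.1 ∧ e.2.2 = f.2.2))) := by
    simp only [Finset.disjoint_left, Finset.mem_filter, Finset.mem_union]
    rintro f ⟨_, hA, _⟩ (⟨_, hnA, _⟩ | ⟨_, hnA, _⟩) <;> exact hnA hA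
  rw [Finset.filter_congr (fun f _ => hiff f), Finset.filter_or, Finset.filter_or,
    Finset.card_union_of_disjoint hd1, Finset.card_union_of_disjoint hd23]
  have h1 : (univ.filter (fun f : T n =>
      e.1 = f.1 ∧ ¬e.2.1 = f.2.1 ∧ ¬e.2.2 = f.2.2)).card = (n-1)^2 := by
    simp only [Finset.card_filter, Fintype.sum_prod_type, ite_and]
    simp [Finset.sum_ite_eq, Finset.sum_ite_eq', eq_comm, Finset.sum_ite,
      Finset.filter_ne', Finset.card_erase_of_mem, sq]
  have h2 : (univ.filter (fun f : T n =>
      ¬e.1 = f.1 ∧ e.2.1 = f.2.1 ∧ ¬e.2.2 = f.2.2)).card = (n-1)^2 := by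
    simp only [Finset.card_filter, Fintype.sum_prod_type, ite_and]
    simp [Finset.sum_ite_eq, Finset.sum_ite_eq', eq_comm, Finset.sum_ite,
      Finset.filter_ne', Finset.card_erase_of_mem, sq]
  have h3 : (univ.filter (fun f : T n =>
      ¬e.1 = f.1 ∧ ¬e.2.1 = f.2.1 ∧ e.2.2 = f.2.2)).card = (n-1)^2 := by
    simp only [Finset.card_filter, Fintype.sum_prod_type, ite_and]
    simp [Finset.sum_ite_eq, Finset.sum_ite_eq', eq_comm, Finset.sum_ite,
      Finset.filter_ne', Finset.card_erase_of_mem, sq]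
  rw [h1, h2, h3]; ring

lemma card_filter_pair {n : ℕ} (Q : T n → T n → Prop) [inst : ∀ a b, Decidable (Q a b)] :
    (univ.filter (fun q : T n × T n => Q q.1 q.2)).card
      = ∑ a : T n, (univ.filter (fun f : T n => Q a f)).card := by
  rw [Finset.card_filter, Fintype.sum_prod_type]
  exact Finset.sum_congr rfl fun a _ => (Finset.card_filter _ _).symm

set_option maxHeartbeats 1000000 in
lemma fiber_card {n : ℕ} {a b c : T n} (gab : good a b) (gac : good a c) (gbc : good b c) :
    (univ.filter (fun t : T n × T n × T n =>
       (good t.1 t.2.1 ∧ good t.1 t.2.2 ∧ good t.2.1 t.2.2) ∧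
       ({t.1, t.2.1, t.2.2} : Finset (T n)) = {a,b,c})).card = 6 := by
  classical
  have nab := good_ne gab
  have nac := good_ne gac
  have nbc := good_ne gbc
  have hset : (univ.filter (fun t : T n × T n × T n =>
       (good t.1 t.2.1 ∧ good t.1 t.2.2 ∧ good t.2.1 t.2.2) ∧
       ({t.1, t.2.1, t.2.2} : Finset (T n)) = {a,b,c}))
      = {(a,b,c), (a,c,b), (b,a,c), (b,c,a), (c,a,b), (c,b,a)} := by
    ext ⟨x, y, z⟩
    simp only [Finset.mem_filter, Finset.mem_univ, true_and, Finset.mem_insert,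
      Finset.mem_singleton, Prod.mk.injEq]
    constructor
    · rintro ⟨⟨gxy, gxz, gyz⟩, hsets⟩
      have hx : (x : T n) ∈ ({a,b,c} : Finset (T n)) := by rw [← hsets]; simp
      have hy : (y : T n) ∈ ({a,b,c} : Finset (T n)) := by rw [← hsets]; simp
      have hz : (z : T n) ∈ ({a,b,c} : Finset (T n)) := by rw [← hsets]; simp
      simp only [Finset.mem_insert, Finset.mem_singleton] at hx hy hz
      have nxy := good_ne gxy
      have nxz := good_ne gxz
      have nyz := good_ne gyz
      clear gxy gxz gyz hsets
      rcases hx with rfl | rfl | rfl <;> rcases hy with rfl | rfl | rfl <;>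
        rcases hz with rfl | rfl | rfl <;> tauto
    · have hperm1 : ({a,c,b} : Finset (T n)) = {a,b,c} := by ext w; simp; tauto
      have hperm2 : ({b,a,c} : Finset (T n)) = {a,b,c} := by ext w; simp; tauto
      have hperm3 : ({b,c,a} : Finset (T n)) = {a,b,c} := by ext w; simp; tauto
      have hperm4 : ({c,a,b} : Finset (T n)) = {a,b,c} := by ext w; simp; tauto
      have hperm5 : ({c,b,a} : Finset (T n)) = {a,b,c} := by ext w; simp; tauto
      have gba := good_comm gab
      have gca := good_comm gac
      have gcb := good_comm gbc
      rintro (⟨rfl,rfl,rfl⟩|⟨rfl,rfl,rfl⟩|⟨rfl,rfl,rfl⟩|⟨rfl,rfl,rfl⟩|⟨rfl,rfl,rfl⟩|⟨rfl,rfl,rfl⟩)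
      · exact ⟨⟨gab, gac, gbc⟩, rfl⟩
      · exact ⟨⟨gac, gab, gcb⟩, hperm1⟩
      · exact ⟨⟨gba, gbc, gac⟩, hperm2⟩
      · exact ⟨⟨gbc, gba, gca⟩, hperm3⟩
      · exact ⟨⟨gca, gcb, gab⟩, hperm4⟩
      · exact ⟨⟨gcb, gca, gba⟩, hperm5⟩
  rw [hset]
  rw [Finset.card_insert_of_notMem (by simp [Prod.ext_iff]; tauto),
    Finset.card_insert_of_notMem (by simp [Prod.ext_iff]; tauto),
    Finset.card_insert_of_notMem (by simp [Prod.ext_iff]; tauto),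
    Finset.card_insert_of_notMem (by simp [Prod.ext_iff]; tauto),
    Finset.card_insert_of_notMem (by simp [Prod.ext_iff]; tauto),
    Finset.card_singleton]

end PLRAux

open PLRAux in
set_option maxHeartbeats 1000000 in
theorem stmt10 (n : ℕ) (hn : 0 < n) :
    (6 : ℤ) * numPLR n n n 3 = (n : ℤ) ^ 3 * ((n : ℤ) - 1) ^ 2 * ((n : ℤ) ^ 4 + 2 * (n : ℤ) ^ 3 - 6 * (n : ℤ) ^ 2 - 8 * (n : ℤ) + 14) := by
  classical
  set S := univ.filter (fun t : T n × T n × T n =>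
    good t.1 t.2.1 ∧ good t.1 t.2.2 ∧ good t.2.1 t.2.2) with hSdef
  set P := univ.filter (fun E : Finset (T n) => IsPLR E ∧ E.card = 3) with hPdef
  -- step 1 : numPLR = P.card
  have hnum : numPLR n n n 3 = P.card := by
    rw [numPLR, Nat.card_eq_fintype_card, Fintype.card_subtype]
  -- step 2 : S.card = 6 * P.card
  have hmap : ∀ t ∈ S, ({t.1, t.2.1, t.2.2} : Finset (T n)) ∈ P := by
    intro t ht
    simp only [hSdef, Finset.mem_filter, Finset.mem_univ, true_and] at ht
    obtain ⟨gab, gac, gbc⟩ := ht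
    simp only [hPdef, Finset.mem_filter, Finset.mem_univ, true_and]
    constructor
    · intro e he e' he' hne
      simp only [Finset.mem_insert, Finset.mem_singleton] at he he'
      have key : ¬ conflict e e' := by
        rcases he with rfl | rfl | rfl <;> rcases he' with rfl | rfl | rfl <;>
          first
            | exact absurd rfl hne
            | assumption
            | exact good_comm gab
            | exact good_comm gac
            | exact good_comm gbc
      unfold conflict at key
      tauto
    · rw [Finset.card_insert_of_notMem, Finset.card_insert_of_notMem,
        Finset.card_singleton]
      · simpa using good_ne gbc
      · simp only [Finset.mem_insert, Finset.mem_singleton]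
        push_neg
        exact ⟨good_ne gab, good_ne gac⟩
  have hfiber : ∀ E ∈ P,
      (S.filter (fun t : T n × T n × T n => ({t.1, t.2.1, t.2.2} : Finset (T n)) = E)).card
        = 6 := by
    intro E hE
    simp only [hPdef, Finset.mem_filter, Finset.mem_univ, true_and] at hE
    obtain ⟨hplr, hcard⟩ := hE
    obtain ⟨a, b, c, hab, hac, hbc, rfl⟩ := Finset.card_eq_three.mp hcard
    have hgood : ∀ x ∈ ({a,b,c} : Finset (T n)), ∀ y ∈ ({a,b,c} : Finset (T n)),
        x ≠ y → good x y := by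
      intro x hx y hy hxy
      have := hplr x hx y hy hxy
      unfold good conflict
      tauto
    have ha' : a ∈ ({a,b,c} : Finset (T n)) := by simp
    have hb' : b ∈ ({a,b,c} : Finset (T n)) := by simp
    have hc' : c ∈ ({a,b,c} : Finset (T n)) := by simp
    have gab := hgood a ha' b hb' hab
    have gac := hgood a ha' c hc' hac
    have gbc := hgood b hb' c hc' hbc
    rw [hSdef, Finset.filter_filter]
    exact fiber_card gab gac gbc
  have hScard : S.card = 6 * P.card := by
    rw [Finset.card_eq_sum_card_fiberwise hmap]
    rw [Finset.sum_congr rfl hfiber, Finset.sum_const, smul_eq_mul, mul_comm]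
  -- step 3 : count S by first two coordinates
  set pairsGood := univ.filter (fun q : T n × T n => good q.1 q.2) with hpG
  have hfib2 : ∀ q ∈ pairsGood,
      (S.filter (fun t : T n × T n × T n => (t.1, t.2.1) = q)).card
        = (univ.filter (fun f : T n => good q.1 f ∧ good q.2 f)).card := by
    rintro ⟨e1, e2⟩ hq
    simp only [hpG, Finset.mem_filter, Finset.mem_univ, true_and] at hq
    apply Finset.card_bij' (fun (t : T n × T n × T n) _ => t.2.2)
      (fun (f : T n) _ => (e1, e2, f))
    · rintro ⟨x, y, z⟩ ht
      simp only [Finset.mem_filter, hSdef, Finset.mem_univ, true_and,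
        Prod.mk.injEq] at ht
      obtain ⟨⟨g1, g2, g3⟩, rfl, rfl⟩ := ht
      simp only [Finset.mem_filter, Finset.mem_univ, true_and]
      exact ⟨g2, g3⟩
    · intro f hf
      simp only [Finset.mem_filter, Finset.mem_univ, true_and] at hf
      simp only [Finset.mem_filter, hSdef, Finset.mem_univ, true_and, Prod.mk.injEq]
      refine ⟨⟨hq, hf.1, hf.2⟩, ?_⟩
      simp
    · rintro ⟨x, y, z⟩ ht
      simp only [Finset.mem_filter, Prod.mk.injEq] at ht
      obtain ⟨-, rfl, rfl⟩ := ht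
      rfl
    · intro f hf; rfl
  have hS2 : ∀ t ∈ S, (t.1, t.2.1) ∈ pairsGood := by
    rintro ⟨x, y, z⟩ ht
    simp only [hSdef, Finset.mem_filter, Finset.mem_univ, true_and] at ht
    simp only [hpG, Finset.mem_filter, Finset.mem_univ, true_and]
    exact ht.1
  have hScount : S.card = ∑ q ∈ pairsGood,
      (univ.filter (fun f : T n => good q.1 f ∧ good q.2 f)).card := by
    rw [Finset.card_eq_sum_card_fiberwise hS2]
    exact Finset.sum_congr rfl hfib2
  -- step 4 : evaluate the sum over good pairs in ℤ
  have hval : ∀ q ∈ pairsGood,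
      ((univ.filter (fun f : T n => good q.1 f ∧ good q.2 f)).card : ℤ)
        = (n : ℤ) ^ 3 - 6 * n + 4 + (if shares q.1 q.2 then 2 else 0) := by
    rintro ⟨e1, e2⟩ hq
    simp only [hpG, Finset.mem_filter, Finset.mem_univ, true_and] at hq
    have hN := card_N3 e1 e2 hq
    have hcast := congrArg (fun m : ℕ => (m : ℤ)) hN
    by_cases hs : shares e1 e2 <;> simp only [hs, if_true, if_false] at hcast ⊢ <;>
      push_cast at hcast ⊢ <;> linarith
  have hsum : (S.card : ℤ) = ∑ q ∈ pairsGood,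
      ((n : ℤ) ^ 3 - 6 * n + 4 + (if shares q.1 q.2 then 2 else 0)) := by
    rw [hScount]
    push_cast
    exact Finset.sum_congr rfl hval
  rw [Finset.sum_add_distrib, Finset.sum_const, ← Finset.sum_filter,
    Finset.sum_const] at hsum
  -- card of pairsGood
  have hpGcard : pairsGood.card + n ^ 3 * (3 * n) = n ^ 3 * (n ^ 3 + 2) := by
    have h1 : pairsGood.card = ∑ a : T n, (univ.filter (fun f : T n => good a f)).card := by
      rw [hpG]
      exact card_filter_pair _
    have h2 : ∑ a : T n, ((univ.filter (fun f : T n => good a f)).card + 3 * n)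
        = ∑ a : T n, (n ^ 3 + 2) := Finset.sum_congr rfl (fun a _ => card_good a)
    rw [Finset.sum_add_distrib, Finset.sum_const, Finset.sum_const, card_univT] at h2
    simp only [smul_eq_mul] at h2
    omega
  -- card of share-filtered pairsGood
  have hshcard : (pairsGood.filter (fun q : T n × T n => shares q.1 q.2)).card
      = n ^ 3 * (3 * (n - 1) ^ 2) := by
    have h1 : pairsGood.filter (fun q : T n × T n => shares q.1 q.2)
        = univ.filter (fun q : T n × T n => good q.1 q.2 ∧ shares q.1 q.2) := by
      rw [hpG, Finset.filter_filter]
    rw [h1]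
    have h2 : (univ.filter (fun q : T n × T n => good q.1 q.2 ∧ shares q.1 q.2)).card
        = ∑ a : T n, (univ.filter (fun f : T n => good a f ∧ shares a f)).card :=
      card_filter_pair (fun a f => good a f ∧ shares a f)
    rw [h2, Finset.sum_congr rfl (fun a _ => card_shares_good a), Finset.sum_const,
      card_univT, smul_eq_mul]
  -- put everything together
  have hpGZ : (pairsGood.card : ℤ) = (n:ℤ)^3 * ((n:ℤ)^3 + 2) - (n:ℤ)^3 * (3*n) := by
    have := congrArg (fun m : ℕ => (m : ℤ)) hpGcard
    push_cast at this
    linarith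
  have hshZ : ((pairsGood.filter (fun q : T n × T n => shares q.1 q.2)).card : ℤ)
      = (n:ℤ)^3 * (3 * ((n:ℤ) - 1)^2) := by
    have := congrArg (fun m : ℕ => (m : ℤ)) hshcard
    push_cast [Nat.cast_sub hn] at this
    linarith
  have hfinal : (S.card : ℤ)
      = (pairsGood.card : ℤ) * ((n : ℤ) ^ 3 - 6 * n + 4)
        + 2 * ((pairsGood.filter (fun q : T n × T n => shares q.1 q.2)).card : ℤ) := by
    rw [hsum]
    push_cast
    ring
  rw [hnum]
  have hSZ : (S.card : ℤ) = 6 * (P.card : ℤ) := by exact_mod_cast hScard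
  rw [← hSZ, hfinal, hpGZ, hshZ]
  ring
end

section
/- For every positive integer n, the number of n×n partial Latin rectangles based on n symbols of size 4 satisfies 24·|R_{n,n,n:4}| = n³·(n−1)²·(n⁷ + 2n⁶ − 15n⁵ − 20n⁴ + 98n³ + 36n² − 288n + 198). -/
open Finset

section Canon
variable {α : Type*} [DecidableEq α]

def canon4 (r : Fin 4 → α) : Fin 4 → Fin 4 := fun i =>
  if r i = r 0 then 0 else if r i = r 1 then 1 else if r i = r 2 then 2 else i

lemma apply_canon4 (r : Fin 4 → α) (i : Fin 4) : r (canon4 r i) = r i := by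
  unfold canon4; split_ifs with h1 h2 h3 <;> simp [*]

lemma canon4_eq_iff (r : Fin 4 → α) (i j : Fin 4) :
    canon4 r i = canon4 r j ↔ r i = r j := by
  constructor
  · intro h
    have h1 := apply_canon4 r i
    rw [h] at h1
    exact h1.symm.trans (apply_canon4 r j)
  · intro h
    unfold canon4
    rw [h]
    split_ifs with h0 h1' h2'
    · rfl
    · rfl
    · rfl
    · have hi3 : i = 3 := by
        by_contra hne
        fin_cases i
        · exact h0 h.symm
        · exact h1' h.symm
        · exact h2' h.symm
        · exact hne rfl
      have hj3 : j = 3 := by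
        fin_cases j
        · exact absurd rfl h0
        · exact absurd rfl h1'
        · exact absurd rfl h2'
        · rfl
      rw [hi3, hj3]

lemma canon4_congr {β : Type*} [DecidableEq β] {u : Fin 4 → α} {w : Fin 4 → β}
    (h : ∀ i j, u i = u j ↔ w i = w j) : canon4 u = canon4 w := by
  funext i; unfold canon4; simp only [h]

lemma canon4_canon4 (r : Fin 4 → α) : canon4 (canon4 r) = canon4 r :=
  canon4_congr (fun i j => canon4_eq_iff r i j)

end Canon

lemma card_canonFiber (n : ℕ) {p : Fin 4 → Fin 4} (hp : canon4 p = p) :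
    (univ.filter (fun r : Fin 4 → Fin n => canon4 r = p)).card
      = n.descFactorial (univ.image p).card := by
  have key : ∀ (r : Fin 4 → Fin n), canon4 r = p → ∀ i, r (p i) = r i := by
    intro r hr i; rw [← hr]; exact apply_canon4 r i
  have keyp : ∀ i, p (p i) = p i := by
    intro i
    have h := apply_canon4 p i
    rw [hp] at h
    exact h
  have e : {r : Fin 4 → Fin n // canon4 r = p} ≃ ((univ.image p : Finset (Fin 4)) ↪ Fin n) :=
    { toFun := fun r => ⟨fun v => r.1 v.1, by
        rintro ⟨v, hv⟩ ⟨w, hw⟩ h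
        obtain ⟨i, -, hi⟩ := Finset.mem_image.mp hv
        obtain ⟨j, -, hj⟩ := Finset.mem_image.mp hw
        subst hi; subst hj
        simp only at h
        rw [key r.1 r.2 i, key r.1 r.2 j] at h
        have := (canon4_eq_iff r.1 i j).mpr h
        rw [r.2] at this
        exact Subtype.ext this⟩
      invFun := fun g => ⟨fun i => g ⟨p i, Finset.mem_image_of_mem p (mem_univ i)⟩, by
        have : canon4 (fun i => (g ⟨p i, Finset.mem_image_of_mem p (mem_univ i)⟩ : Fin n))
            = canon4 p := by
          apply canon4_congr
          intro i j
          constructor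
          · intro h
            have := g.injective h
            exact congrArg Subtype.val this
          · intro h
            congr 1
            exact Subtype.ext h
        rw [this, hp]⟩
      left_inv := by
        rintro ⟨r, hr⟩
        apply Subtype.ext
        funext i
        exact key r hr i
      right_inv := by
        intro g
        apply DFunLike.ext
        rintro ⟨v, hv⟩
        obtain ⟨i, -, hi⟩ := Finset.mem_image.mp hv
        subst hi
        show g ⟨p (p i), _⟩ = g ⟨p i, hv⟩
        exact congrArg g (Subtype.ext (keyp i)) }
  calc (univ.filter (fun r : Fin 4 → Fin n => canon4 r = p)).card
      = Fintype.card {r : Fin 4 → Fin n // canon4 r = p} := (Fintype.card_subtype _).symm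
    _ = Fintype.card ((univ.image p : Finset (Fin 4)) ↪ Fin n) := Fintype.card_congr e
    _ = n.descFactorial (univ.image p).card := by
        rw [Fintype.card_embedding_eq, Fintype.card_coe, Fintype.card_fin]

def cond3 {n : ℕ} (f : Fin 4 → Fin n × Fin n × Fin n) : Prop :=
  ∀ i j : Fin 4, i ≠ j →
    ¬((f i).1 = (f j).1 ∧ (f i).2.1 = (f j).2.1) ∧
    ¬((f i).1 = (f j).1 ∧ (f i).2.2 = (f j).2.2) ∧
    ¬((f i).2.1 = (f j).2.1 ∧ (f i).2.2 = (f j).2.2)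

instance {n : ℕ} : DecidablePred (cond3 (n := n)) := fun _ => by
  unfold cond3; infer_instance

lemma cond3_injective {n : ℕ} {f : Fin 4 → Fin n × Fin n × Fin n} (hf : cond3 f) :
    Function.Injective f := by
  intro i j h
  by_contra hne
  exact ((hf i j hne).1) ⟨congrArg Prod.fst h, congrArg (fun x => x.2.1) h⟩

lemma stepA_s11 (n : ℕ) :
    (univ.filter (fun f : Fin 4 → Fin n × Fin n × Fin n => cond3 f)).card
      = 24 * numPLR n n n 4 := by
  classical
  set T := Fin n × Fin n × Fin n
  have hnum : numPLR n n n 4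
      = (univ.filter (fun E : Finset T => IsPLR E ∧ E.card = 4)).card := by
    rw [numPLR, Nat.card_eq_fintype_card, Fintype.card_subtype]
  have hmaps : ∀ f ∈ univ.filter (fun f : Fin 4 → T => cond3 f),
      univ.image f ∈ univ.filter (fun E : Finset T => IsPLR E ∧ E.card = 4) := by
    intro f hf
    rw [mem_filter] at hf ⊢
    obtain ⟨-, hf⟩ := hf
    refine ⟨mem_univ _, ?_, ?_⟩
    · intro e he e' he' hne
      obtain ⟨i, -, rfl⟩ := Finset.mem_image.mp he
      obtain ⟨j, -, rfl⟩ := Finset.mem_image.mp he'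
      exact hf i j (fun h => hne (congrArg f h))
    · rw [Finset.card_image_of_injective _ (cond3_injective hf), card_univ, Fintype.card_fin]
  have hfib : ∀ E ∈ univ.filter (fun E : Finset T => IsPLR E ∧ E.card = 4),
      ((univ.filter (fun f : Fin 4 → T => cond3 f)).filter (fun f => univ.image f = E)).card
        = 24 := by
    intro E hE
    rw [mem_filter] at hE
    obtain ⟨-, hplr, hcard⟩ := hE
    have hsimp : (univ.filter (fun f : Fin 4 → T => cond3 f)).filter (fun f => univ.image f = E)
        = univ.filter (fun f : Fin 4 → T => univ.image f = E) := by
      rw [Finset.filter_filter]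
      apply Finset.filter_congr
      intro f _
      simp only [and_iff_right_iff_imp]
      intro hE'
      have hinj : Function.Injective f := by
        have := Finset.injOn_of_card_image_eq (s := (univ : Finset (Fin 4))) (f := f) ?_
        · intro i j h; exact this (mem_coe.mpr (mem_univ i)) (mem_coe.mpr (mem_univ j)) h
        · rw [hE', hcard, card_univ, Fintype.card_fin]
      intro i j hij
      exact hplr (f i) (hE' ▸ Finset.mem_image_of_mem f (mem_univ i))
        (f j) (hE' ▸ Finset.mem_image_of_mem f (mem_univ j)) (fun h => hij (hinj h))
    rw [hsimp]
    have e : {f : Fin 4 → T // univ.image f = E} ≃ (Fin 4 ↪ (E : Finset T)) :=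
      { toFun := fun f => ⟨fun i => ⟨f.1 i, by have h := Finset.mem_image_of_mem f.1 (mem_univ i); rwa [f.2] at h⟩, by
          have hinj : Function.Injective f.1 := by
            have := Finset.injOn_of_card_image_eq (s := (univ : Finset (Fin 4))) (f := f.1) ?_
            · intro i j h; exact this (mem_coe.mpr (mem_univ i)) (mem_coe.mpr (mem_univ j)) h
            · rw [f.2, hcard, card_univ, Fintype.card_fin]
          intro i j h
          exact hinj (congrArg Subtype.val h)⟩
        invFun := fun g => ⟨fun i => (g i).1, by
          have hinj : Function.Injective (fun i => ((g i).1 : T)) := by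
            intro i j h
            exact g.injective (Subtype.ext h)
          apply Finset.eq_of_subset_of_card_le
          · intro x hx
            obtain ⟨i, -, rfl⟩ := Finset.mem_image.mp hx
            exact (g i).2
          · rw [Finset.card_image_of_injective _ hinj, card_univ, Fintype.card_fin, hcard]⟩
        left_inv := fun f => Subtype.ext rfl
        right_inv := fun g => DFunLike.ext _ _ (fun i => Subtype.ext rfl) }
    calc (univ.filter (fun f : Fin 4 → T => univ.image f = E)).card
        = Fintype.card {f : Fin 4 → T // univ.image f = E} := (Fintype.card_subtype _).symm
      _ = Fintype.card (Fin 4 ↪ (E : Finset T)) := Fintype.card_congr e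
      _ = 24 := by
          rw [Fintype.card_embedding_eq, Fintype.card_coe, Fintype.card_fin, hcard]
          decide
  rw [Finset.card_eq_sum_card_fiberwise hmaps, Finset.sum_congr rfl hfib,
    Finset.sum_const, smul_eq_mul, hnum, mul_comm]

def compat3 (p : (Fin 4 → Fin 4) × (Fin 4 → Fin 4) × (Fin 4 → Fin 4)) : Prop :=
  ∀ i j : Fin 4, i ≠ j →
    ¬(p.1 i = p.1 j ∧ p.2.1 i = p.2.1 j) ∧
    ¬(p.1 i = p.1 j ∧ p.2.2 i = p.2.2 j) ∧
    ¬(p.2.1 i = p.2.1 j ∧ p.2.2 i = p.2.2 j)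

instance : DecidablePred compat3 := fun _ => by unfold compat3; infer_instance

def canonT {n : ℕ} (f : Fin 4 → Fin n × Fin n × Fin n) :
    (Fin 4 → Fin 4) × (Fin 4 → Fin 4) × (Fin 4 → Fin 4) :=
  (canon4 (fun i => (f i).1), canon4 (fun i => (f i).2.1), canon4 (fun i => (f i).2.2))

def patt : Finset (Fin 4 → Fin 4) := univ.filter (fun p => canon4 p = p)

def patt3 : Finset ((Fin 4 → Fin 4) × (Fin 4 → Fin 4) × (Fin 4 → Fin 4)) :=
  patt ×ˢ patt ×ˢ patt

def sz (p : (Fin 4 → Fin 4) × (Fin 4 → Fin 4) × (Fin 4 → Fin 4)) : ℕ × ℕ × ℕ :=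
  ((univ.image p.1).card, (univ.image p.2.1).card, (univ.image p.2.2).card)

def DD (n : ℕ) (y : ℕ × ℕ × ℕ) : ℕ :=
  n.descFactorial y.1 * n.descFactorial y.2.1 * n.descFactorial y.2.2

lemma cond3_iff {n : ℕ} (f : Fin 4 → Fin n × Fin n × Fin n) :
    cond3 f ↔ compat3 (canonT f) := by
  unfold cond3 compat3 canonT
  simp only [canon4_eq_iff]

lemma card_canonT_fiber (n : ℕ) (p : (Fin 4 → Fin 4) × (Fin 4 → Fin 4) × (Fin 4 → Fin 4))
    (hp : p ∈ patt3) :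
    (univ.filter (fun f : Fin 4 → Fin n × Fin n × Fin n => canonT f = p)).card
      = DD n (sz p) := by
  obtain ⟨hp1, hp23⟩ := Finset.mem_product.mp hp
  obtain ⟨hp2, hp3⟩ := Finset.mem_product.mp hp23
  rw [patt, mem_filter] at hp1 hp2 hp3
  have e : {f : Fin 4 → Fin n × Fin n × Fin n // canonT f = p}
      ≃ {r : Fin 4 → Fin n // canon4 r = p.1} ×
        {c : Fin 4 → Fin n // canon4 c = p.2.1} ×
        {s : Fin 4 → Fin n // canon4 s = p.2.2} :=
    { toFun := fun f =>
        (⟨fun i => (f.1 i).1, congrArg Prod.fst f.2⟩,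
         ⟨fun i => (f.1 i).2.1, congrArg (fun x => x.2.1) f.2⟩,
         ⟨fun i => (f.1 i).2.2, congrArg (fun x => x.2.2) f.2⟩)
      invFun := fun x =>
        ⟨fun i => (x.1.1 i, x.2.1.1 i, x.2.2.1 i), by
          unfold canonT
          refine Prod.ext ?_ (Prod.ext ?_ ?_)
          · exact x.1.2
          · exact x.2.1.2
          · exact x.2.2.2⟩
      left_inv := fun f => Subtype.ext rfl
      right_inv := fun x => rfl }
  calc (univ.filter (fun f : Fin 4 → Fin n × Fin n × Fin n => canonT f = p)).card
      = Fintype.card {f : Fin 4 → Fin n × Fin n × Fin n // canonT f = p} :=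
        (Fintype.card_subtype _).symm
    _ = _ := Fintype.card_congr e
    _ = DD n (sz p) := by
        rw [Fintype.card_prod, Fintype.card_prod, Fintype.card_subtype,
          Fintype.card_subtype, Fintype.card_subtype,
          card_canonFiber n hp1.2, card_canonFiber n hp2.2, card_canonFiber n hp3.2,
          DD, sz, mul_assoc]

lemma stepB (n : ℕ) :
    (univ.filter (fun f : Fin 4 → Fin n × Fin n × Fin n => cond3 f)).card
      = ∑ p ∈ patt3.filter compat3, DD n (sz p) := by
  have hmaps : ∀ f ∈ univ.filter (fun f : Fin 4 → Fin n × Fin n × Fin n => cond3 f),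
      canonT f ∈ patt3 := by
    intro f _
    refine Finset.mem_product.mpr ⟨?_, Finset.mem_product.mpr ⟨?_, ?_⟩⟩ <;>
      · rw [patt, mem_filter]
        exact ⟨mem_univ _, canon4_canon4 _⟩
  rw [Finset.card_eq_sum_card_fiberwise hmaps, Finset.sum_filter]
  apply Finset.sum_congr rfl
  intro p hp
  rw [Finset.filter_filter]
  by_cases hc : compat3 p
  · rw [if_pos hc]
    have heq : filter (fun f : Fin 4 → Fin n × Fin n × Fin n => cond3 f ∧ canonT f = p) univ
        = filter (fun f => canonT f = p) univ := by
      apply Finset.filter_congr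
      intro f _
      constructor
      · exact fun h => h.2
      · intro h
        refine ⟨(cond3_iff f).mpr ?_, h⟩
        rw [h]; exact hc
    rw [heq]
    exact card_canonT_fiber n p hp
  · rw [if_neg hc, Finset.card_eq_zero, Finset.filter_eq_empty_iff]
    intro f _
    rintro ⟨h1, h2⟩
    exact hc (h2 ▸ (cond3_iff f).mp h1)


lemma cast_df1 (n : ℕ) : ((n.descFactorial 1 : ℕ) : ℤ) = n := by simp

lemma cast_df2 (n : ℕ) : ((n.descFactorial 2 : ℕ) : ℤ) = n * (n - 1) := by
  rcases n with _ | m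
  · simp
  · have h : (m + 1).descFactorial 2 = m * (m + 1) := by
      simp [Nat.descFactorial_succ, Nat.descFactorial_one]
    rw [h]; push_cast; ring

lemma cast_df3 (n : ℕ) : ((n.descFactorial 3 : ℕ) : ℤ) = n * (n - 1) * (n - 2) := by
  rcases n with _ | _ | m
  · simp
  · simp [Nat.descFactorial]
  · have h : (m + 2).descFactorial 3 = m * ((m + 1) * (m + 2)) := by
      simp [Nat.descFactorial_succ, Nat.descFactorial_one, Nat.succ_sub_succ]
    rw [h]; push_cast; ring

lemma cast_df4 (n : ℕ) : ((n.descFactorial 4 : ℕ) : ℤ) = n * (n - 1) * (n - 2) * (n - 3) := by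
  rcases n with _ | _ | _ | m
  · simp
  · simp [Nat.descFactorial]
  · simp [Nat.descFactorial]
  · have h : (m + 3).descFactorial 4 = m * ((m + 1) * ((m + 2) * (m + 3))) := by
      simp [Nat.descFactorial_succ, Nat.descFactorial_one, Nat.succ_sub_succ]
    rw [h]; push_cast; ring

set_option maxRecDepth 100000 in
set_option maxHeartbeats 4000000 in
lemma stepC (n : ℕ) :
    ((∑ p ∈ patt3.filter compat3, DD n (sz p) : ℕ) : ℤ)
      = (n : ℤ) ^ 3 * ((n : ℤ) - 1) ^ 2 * ((n : ℤ) ^ 7 + 2 * (n : ℤ) ^ 6 - 15 * (n : ℤ) ^ 5 - 20 * (n : ℤ) ^ 4 + 98 * (n : ℤ) ^ 3 + 36 * (n : ℤ) ^ 2 - 288 * (n : ℤ) + 198) := by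
  have hM : (patt3.filter compat3).val.map sz = Multiset.replicate 1 (1,4,4) + Multiset.replicate 6 (2,2,2) + Multiset.replicate 12 (2,2,3) + Multiset.replicate 6 (2,2,4) + Multiset.replicate 12 (2,3,2) + Multiset.replicate 60 (2,3,3) + Multiset.replicate 24 (2,3,4) + Multiset.replicate 6 (2,4,2) + Multiset.replicate 24 (2,4,3) + Multiset.replicate 7 (2,4,4) + Multiset.replicate 12 (3,2,2) + Multiset.replicate 60 (3,2,3) + Multiset.replicate 24 (3,2,4) + Multiset.replicate 60 (3,3,2) + Multiset.replicate 120 (3,3,3) + Multiset.replicate 30 (3,3,4) + Multiset.replicate 24 (3,4,2) + Multiset.replicate 30 (3,4,3) + Multiset.replicate 6 (3,4,4) + Multiset.replicate 1 (4,1,4) + Multiset.replicate 6 (4,2,2) + Multiset.replicate 24 (4,2,3) + Multiset.replicate 7 (4,2,4) + Multiset.replicate 24 (4,3,2) + Multiset.replicate 30 (4,3,3) + Multiset.replicate 6 (4,3,4) + Multiset.replicate 1 (4,4,1) + Multiset.replicate 7 (4,4,2) + Multiset.replicate 6 (4,4,3) + Multiset.replicate 1 (4,4,4) := by decide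
  have h1 : ∑ p ∈ patt3.filter compat3, DD n (sz p)
      = (((patt3.filter compat3).val.map sz).map (DD n)).sum := by
    rw [Multiset.map_map]; rfl
  rw [h1, hM]
  simp only [Multiset.map_add, Multiset.sum_add, Multiset.map_replicate,
    Multiset.sum_replicate, smul_eq_mul, DD]
  push_cast [cast_df1, cast_df2, cast_df3, cast_df4]
  ring


theorem stmt11 (n : ℕ) (hn : 0 < n) :
    (24 : ℤ) * numPLR n n n 4 = (n : ℤ) ^ 3 * ((n : ℤ) - 1) ^ 2 * ((n : ℤ) ^ 7 + 2 * (n : ℤ) ^ 6 - 15 * (n : ℤ) ^ 5 - 20 * (n : ℤ) ^ 4 + 98 * (n : ℤ) ^ 3 + 36 * (n : ℤ) ^ 2 - 288 * (n : ℤ) + 198) := by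
  calc (24 : ℤ) * numPLR n n n 4
      = ((24 * numPLR n n n 4 : ℕ) : ℤ) := by push_cast; ring
    _ = (((univ.filter (fun f : Fin 4 → Fin n × Fin n × Fin n => cond3 f)).card : ℕ) : ℤ) := by
        rw [← stepA_s11 n]
    _ = ((∑ p ∈ patt3.filter compat3, DD n (sz p) : ℕ) : ℤ) := by rw [stepB n]
    _ = _ := stepC n
end

section
/- Let P be a regular partial Latin square of order n of size m. Then the sum of the following three quantities is at most m: the number of rows of P containing exactly one non-empty cell, the number of columns of P containing exactly one non-empty cell, and the number of symbols occurring exactly once in P. Equivalently, if this sum exceeds m, then P is not regular. -/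
open Finset

/-- A partial Latin square (given by its entry set `E`) is regular if (i) no non-empty cell
is simultaneously the only non-empty cell of its row and the only non-empty cell of its
column, and (ii) whenever a row or a column contains exactly one non-empty cell, the symbol
occupying that cell occurs at least twice. -/
def IsRegularPLS {n : ℕ} (E : Finset (Fin n × Fin n × Fin n)) : Prop :=
  (∀ e ∈ E, ¬(rowType E e.1 = 1 ∧ colType E e.2.1 = 1)) ∧
  (∀ e ∈ E, (rowType E e.1 = 1 ∨ colType E e.2.1 = 1) → 2 ≤ symType E e.2.2)

lemma card_lonely {α β : Type*} [DecidableEq α] [Fintype β] [DecidableEq β]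
    (E : Finset α) (f : α → β) :
    (Finset.univ.filter (fun b => (E.filter (fun e => f e = b)).card = 1)).card =
    (E.filter (fun e => (E.filter (fun e' => f e' = f e)).card = 1)).card := by
  symm
  apply Finset.card_bij (fun e _ => f e)
  · intro e he
    simp only [mem_filter] at he ⊢
    exact ⟨mem_univ _, he.2⟩
  · intro e he e' he' hff
    simp only [mem_filter] at he he'
    obtain ⟨a, ha⟩ := Finset.card_eq_one.mp he.2
    have h1 : e ∈ E.filter (fun e'' => f e'' = f e) := by
      simp [he.1]
    have h2 : e' ∈ E.filter (fun e'' => f e'' = f e) := by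
      simp [he'.1, hff]
    rw [ha, mem_singleton] at h1 h2
    exact h1.trans h2.symm
  · intro b hb
    simp only [mem_filter] at hb
    obtain ⟨a, ha⟩ := Finset.card_eq_one.mp hb.2
    have hamem : a ∈ E.filter (fun e => f e = b) := ha ▸ mem_singleton_self a
    simp only [mem_filter] at hamem
    refine ⟨a, ?_, hamem.2⟩
    simp only [mem_filter]
    refine ⟨hamem.1, ?_⟩
    rw [hamem.2, hb.2]

theorem stmt15 (n m : ℕ) (E : Finset (Fin n × Fin n × Fin n)) (hE : IsPLR E)
    (hreg : IsRegularPLS E) (hm : E.card = m) :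
    (Finset.univ.filter (fun i => rowType E i = 1)).card +
      (Finset.univ.filter (fun j => colType E j = 1)).card +
      (Finset.univ.filter (fun k => symType E k = 1)).card ≤ m := by
  classical
  set A := E.filter (fun e => rowType E e.1 = 1) with hA
  set B := E.filter (fun e => colType E e.2.1 = 1) with hB
  set C := E.filter (fun e => symType E e.2.2 = 1) with hC
  have hRA : (Finset.univ.filter (fun i => rowType E i = 1)).card = A.card :=
    card_lonely E (fun e => e.1)
  have hCB : (Finset.univ.filter (fun j => colType E j = 1)).card = B.card :=
    card_lonely E (fun e => e.2.1)
  have hSC : (Finset.univ.filter (fun k => symType E k = 1)).card = C.card :=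
    card_lonely E (fun e => e.2.2)
  rw [hRA, hCB, hSC]
  have hAB : Disjoint A B := by
    rw [Finset.disjoint_left]
    intro e heA heB
    simp only [hA, hB, mem_filter] at heA heB
    exact hreg.1 e heA.1 ⟨heA.2, heB.2⟩
  have hABC : Disjoint (A ∪ B) C := by
    rw [Finset.disjoint_left]
    intro e heAB heC
    simp only [hA, hB, hC, mem_filter, mem_union] at heAB heC
    have : rowType E e.1 = 1 ∨ colType E e.2.1 = 1 := by
      rcases heAB with h | h
      · exact Or.inl h.2
      · exact Or.inr h.2
    have := hreg.2 e heC.1 this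
    omega
  calc A.card + B.card + C.card = (A ∪ B).card + C.card := by
        rw [Finset.card_union_of_disjoint hAB]
    _ = (A ∪ B ∪ C).card := by rw [Finset.card_union_of_disjoint hABC]
    _ ≤ E.card := Finset.card_le_card (by
        intro e he
        simp only [hA, hB, hC, mem_union, mem_filter] at he
        rcases he with (h | h) | h <;> exact h.1)
    _ = m := hm
end
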